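/- arXiv:2106.09688 — 4 statements merged into one kernel-verified Lean document; each statement's English description precedes it below -/
import Mathlib

section
/- For any constant 0 < α < 1 the following holds for all sufficiently large n ∈ ℕ divisible by 3, where d := 2⌈(4/α)^4⌉. There exists an n-vertex graph G with minimum degree δ(G) ≥ n/2 − 2d², α*(G) ≤ αn, and such that G contains no perfect K_3-tiling (no K_3-factor). -/
open Finset

namespace NoTF


/-- Binomial two-term lower bound. -/
lemma add_pow_ge (a b : ℕ) : ∀ k : ℕ, a ^ (k+1) + (k+1) * b * a ^ k ≤ (a + b) ^ (k+1) := by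
  intro k
  induction k with
  | zero => simp [pow_succ]
  | succ k ih =>
      have h1 : (a + b) ^ (k+2) = (a+b) * (a+b)^(k+1) := by ring
      have h2 : (a+b) * (a ^ (k+1) + (k+1) * b * a ^ k) ≤ (a+b) * (a+b)^(k+1) :=
        Nat.mul_le_mul_left _ ih
      have h3 : a ^ (k+2) + (k+2) * b * a ^ (k+1) ≤ (a+b) * (a ^ (k+1) + (k+1) * b * a ^ k) := by
        ring_nf
        nlinarith [Nat.zero_le (b * a^k), Nat.zero_le (k * b * a^k)]
      calc a ^ (k+2) + (k+2) * b * a ^ (k+1) ≤ _ := h3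
        _ ≤ (a+b) * (a+b)^(k+1) := h2
        _ = (a+b)^(k+2) := h1.symm

/-- If `k*m ≥ h` and `1 ≤ m ≤ h` then `2*(h-m)^k ≤ h^k`. -/
lemma two_mul_pow_le {h m k : ℕ} (hm : 1 ≤ m) (hmh : m ≤ h) (hk : h ≤ k * m) (hk1 : 1 ≤ k) :
    2 * (h - m) ^ k ≤ h ^ k := by
  obtain ⟨k', rfl⟩ : ∃ k', k = k' + 1 := ⟨k - 1, by omega⟩
  have hsum : (h - m) + m = h := by omega
  have h1 := add_pow_ge (h - m) m k'
  rw [hsum] at h1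
  have h2 : h * (h - m) ^ k' ≤ (k' + 1) * m * (h - m) ^ k' := by
    exact Nat.mul_le_mul_right _ (by nlinarith)
  have h3 : (h - m) * (h - m) ^ k' ≤ h * (h - m) ^ k' :=
    Nat.mul_le_mul_right _ (by omega)
  calc 2 * (h - m) ^ (k'+1) = (h-m)^(k'+1) + (h-m) * (h-m)^k' := by ring
    _ ≤ (h-m)^(k'+1) + (k'+1) * m * (h-m)^k' := by
        have := h3.trans h2; omega
    _ ≤ h ^ (k'+1) := h1

lemma desc_ratio (m : ℕ) : ∀ a b : ℕ, a ≤ b →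
    a.descFactorial m * b ^ m ≤ b.descFactorial m * a ^ m := by
  induction m with
  | zero => simp
  | succ m ih =>
      intro a b hab
      have key : (a - m) * b ≤ (b - m) * a := by
        rcases le_or_gt m a with h | h
        · have h1 : (a - m) * b = a * b - m * b := by rw [Nat.sub_mul]
          have h2 : (b - m) * a = a * b - m * a := by
            rw [Nat.sub_mul]; ring_nf
          rw [h1, h2]
          exact Nat.sub_le_sub_left (Nat.mul_le_mul_left m hab) _
        · have : a - m = 0 := by omega
          simp [this]
      have ihab := ih a b hab
      calc a.descFactorial (m+1) * b ^ (m+1)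
          = ((a - m) * b) * (a.descFactorial m * b ^ m) := by
            rw [Nat.descFactorial_succ]; ring
        _ ≤ ((b - m) * a) * (b.descFactorial m * a ^ m) :=
            Nat.mul_le_mul key ihab
        _ = b.descFactorial (m+1) * a ^ (m+1) := by
            rw [Nat.descFactorial_succ]; ring

lemma choose_le_two_pow' (h m : ℕ) : h.choose m ≤ 2 ^ h := by
  rcases le_or_gt m h with hm | hm
  · calc h.choose m ≤ ∑ i ∈ Finset.range (h+1), h.choose i :=
        Finset.single_le_sum (fun i _ => Nat.zero_le _) (by simp [Nat.lt_succ_iff, hm])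
      _ = 2 ^ h := Nat.sum_range_choose h
  · simp [Nat.choose_eq_zero_of_lt hm]

/-- The main numeric inequality. -/
lemma choose_pow_lt {h m D : ℕ} (hm : 1 ≤ m) (hmh : m < h)
    (hD : (2*h+1) * (h / m + 1) ≤ m * D) :
    h.choose m ^ 2 * (h - m) ^ (m * D) < h ^ (m * D) := by
  have hk1 : 1 ≤ h / m + 1 := Nat.succ_le_succ (Nat.zero_le _)
  have hhk : h ≤ (h / m + 1) * m := by
    have e1 : m * (h/m) + h % m = h := Nat.div_add_mod h m
    have e2 : h % m < m := Nat.mod_lt _ (by omega)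
    calc h = m * (h/m) + h % m := e1.symm
      _ ≤ m * (h/m) + m := by omega
      _ = (h/m + 1) * m := by ring
  have h2k : 2 * (h - m) ^ (h / m + 1) ≤ h ^ (h / m + 1) :=
    two_mul_pow_le hm (le_of_lt hmh) hhk hk1
  -- generalize q and k
  have main : ∀ q k : ℕ, 2 * (h - m) ^ k ≤ h ^ k → 2*h + 1 ≤ q → q * k ≤ m * D →
      h.choose m ^ 2 * (h - m) ^ (m * D) < h ^ (m * D) := by
    intro q k h2k hq hqk
    have hmD : q * k + (m * D - q * k) = m * D := Nat.add_sub_cancel' hqk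
    set r := m * D - q * k with hrdef
    have h0 : 0 < h - m := by omega
    have hpos : 0 < (h - m) ^ (m * D) := Nat.pow_pos h0
    have hC : h.choose m ^ 2 < 2 ^ q := by
      have c1 : h.choose m ^ 2 ≤ 2 ^ h * 2 ^ h := by
        rw [pow_two]; exact Nat.mul_le_mul (choose_le_two_pow' h m) (choose_le_two_pow' h m)
      have c2 : (2:ℕ) ^ h * 2 ^ h = 2 ^ (2*h) := by rw [← pow_add]; ring_nf
      have c3 : (2:ℕ) ^ (2*h) < 2 ^ q :=
        Nat.pow_lt_pow_right (by omega) (by omega)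
      omega
    calc h.choose m ^ 2 * (h - m) ^ (m * D)
        < 2 ^ q * (h - m) ^ (m * D) := by
          exact Nat.mul_lt_mul_of_lt_of_le hC (le_refl _) hpos
      _ = (2 * (h - m) ^ k) ^ q * (h - m) ^ r := by
          rw [mul_pow, ← pow_mul, ← hmD, pow_add]; ring
      _ ≤ (h ^ k) ^ q * (h - m) ^ r := by
          exact Nat.mul_le_mul_right _ (Nat.pow_le_pow_left h2k q)
      _ ≤ (h ^ k) ^ q * h ^ r := by
          exact Nat.mul_le_mul_left _ (Nat.pow_le_pow_left (by omega) r)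
      _ = h ^ (m * D) := by rw [← pow_mul, ← pow_add, ← hmD]; ring_nf
  exact main (2*h+1) (h/m + 1) h2k (le_refl _) hD



variable {h : ℕ}

/-- Number of permutations mapping (the image of) `X` onto `S`. -/
def fib (X S : Finset (Fin h)) : ℕ :=
  (univ.filter (fun σ : Equiv.Perm (Fin h) => X.image (⇑σ) = S)).card

lemma exists_perm_map (S S' : Finset (Fin h)) (hc : S.card = S'.card) :
    ∃ τ : Equiv.Perm (Fin h), ∀ x ∈ S, τ x ∈ S' := by
  classical
  have e : {x // x ∈ S} ≃ {x // x ∈ S'} := Finset.equivOfCardEq hc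
  have f : {x // ¬ x ∈ S} ≃ {x // ¬ x ∈ S'} := by
    apply Fintype.equivOfCardEq
    have h1 : Fintype.card {x // ¬ x ∈ S} = Fintype.card (Fin h) - Fintype.card {x // x ∈ S} :=
      Fintype.card_subtype_compl _
    have h2 : Fintype.card {x // ¬ x ∈ S'} = Fintype.card (Fin h) - Fintype.card {x // x ∈ S'} :=
      Fintype.card_subtype_compl _
    rw [h1, h2, Fintype.card_congr e]
  refine ⟨Equiv.subtypeCongr e f, ?_⟩
  intro x hx
  have : Equiv.subtypeCongr e f x = (e ⟨x, hx⟩ : Fin h) := by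
    simp [Equiv.subtypeCongr, Equiv.sumCompl_symm_apply_of_pos hx]
  rw [this]
  exact (e ⟨x, hx⟩).2

lemma image_perm_eq (S S' : Finset (Fin h)) (hc : S.card = S'.card)
    (τ : Equiv.Perm (Fin h)) (hτ : ∀ x ∈ S, τ x ∈ S') : S.image (⇑τ) = S' := by
  apply Finset.eq_of_subset_of_card_le
  · intro y hy
    obtain ⟨x, hx, rfl⟩ := Finset.mem_image.1 hy
    exact hτ x hx
  · rw [Finset.card_image_of_injective _ τ.injective, hc]

lemma fib_const (X S S' : Finset (Fin h)) (hS : S.card = S'.card) :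
    fib X S = fib X S' := by
  classical
  obtain ⟨τ, hτ⟩ := exists_perm_map S S' hS
  have hτS : S.image (⇑τ) = S' := image_perm_eq S S' hS τ hτ
  obtain ⟨τ', hτ'⟩ := exists_perm_map S' S hS.symm
  have hτS' : S'.image (⇑τ') = S := image_perm_eq S' S hS.symm τ' hτ'
  unfold fib
  apply Finset.card_bij (fun σ _ => σ.trans τ)
  · intro σ hσ
    simp only [Finset.mem_filter, Finset.mem_univ, true_and] at hσ ⊢
    rw [show ⇑(σ.trans τ) = (⇑τ) ∘ (⇑σ) from rfl, ← Finset.image_image, hσ, hτS]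
  · intro σ1 h1 σ2 h2 heq
    have hmul : τ * σ1 = τ * σ2 := heq
    exact mul_left_cancel hmul
  · intro σ hσ
    simp only [Finset.mem_filter, Finset.mem_univ, true_and] at hσ
    refine ⟨σ.trans τ.symm, ?_, ?_⟩
    · simp only [Finset.mem_filter, Finset.mem_univ, true_and]
      rw [show ⇑(σ.trans τ.symm) = (⇑τ.symm) ∘ (⇑σ) from rfl, ← Finset.image_image, hσ]
      -- S'.image τ.symm = S
      have : (S.image (⇑τ)).image (⇑τ.symm) = S := by
        rw [Finset.image_image]
        simp
      rw [← hτS, this]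
    · ext x; simp

lemma sum_fib (m : ℕ) (X : Finset (Fin h)) (hX : X.card = m) :
    ∑ S ∈ powersetCard m (univ : Finset (Fin h)), fib X S = Nat.factorial h := by
  classical
  have key := Finset.card_eq_sum_card_fiberwise
    (f := fun σ : Equiv.Perm (Fin h) => X.image (⇑σ))
    (s := univ) (t := powersetCard m univ) ?_
  · unfold fib
    rw [← key, Finset.card_univ, Fintype.card_perm, Fintype.card_fin]
  · intro σ _
    simp only [Finset.mem_coe, Finset.mem_powersetCard]
    exact ⟨Finset.subset_univ _, by rw [Finset.card_image_of_injective _ σ.injective, hX]⟩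

lemma bad_count (m : ℕ) (X Y : Finset (Fin h)) (hX : X.card = m) (hY : Y.card = m) :
    (univ.filter (fun σ : Equiv.Perm (Fin h) => ∀ u ∈ X, σ u ∉ Y)).card * (h.choose m)
      = (h - m).choose m * Nat.factorial h := by
  classical
  -- the bad set is the union of fibers over subsets of Yᶜ
  have hset : (univ.filter (fun σ : Equiv.Perm (Fin h) => ∀ u ∈ X, σ u ∉ Y))
      = (powersetCard m Yᶜ).biUnion
          (fun S => univ.filter (fun σ : Equiv.Perm (Fin h) => X.image (⇑σ) = S)) := by
    ext σ
    simp only [Finset.mem_filter, Finset.mem_univ, true_and, Finset.mem_biUnion]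
    constructor
    · intro hσ
      refine ⟨X.image (⇑σ), ?_, rfl⟩
      rw [Finset.mem_powersetCard]
      constructor
      · intro y hy
        obtain ⟨x, hx, rfl⟩ := Finset.mem_image.1 hy
        simpa using hσ x hx
      · rw [Finset.card_image_of_injective _ σ.injective, hX]
    · rintro ⟨S, hS, hσ⟩
      intro u hu hc
      rw [Finset.mem_powersetCard] at hS
      have : σ u ∈ S := hσ ▸ Finset.mem_image_of_mem _ hu
      have := hS.1 this
      simp at this
      exact this hc
  have hdisj : ∀ S₁ ∈ powersetCard m Yᶜ, ∀ S₂ ∈ powersetCard m Yᶜ, S₁ ≠ S₂ →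
      Disjoint (univ.filter (fun σ : Equiv.Perm (Fin h) => X.image (⇑σ) = S₁))
        (univ.filter (fun σ : Equiv.Perm (Fin h) => X.image (⇑σ) = S₂)) := by
    intro S₁ _ S₂ _ hne
    apply Finset.disjoint_left.2
    intro σ h1 h2
    simp only [Finset.mem_filter] at h1 h2
    exact hne (h1.2 ▸ h2.2)
  have hcard : (univ.filter (fun σ : Equiv.Perm (Fin h) => ∀ u ∈ X, σ u ∉ Y)).card
      = ∑ S ∈ powersetCard m Yᶜ, fib X S := by
    rw [hset, Finset.card_biUnion hdisj]; rfl
  -- each fib equals fib X X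
  have huniform : ∀ S ∈ powersetCard m Yᶜ, fib X S = fib X X := by
    intro S hS
    rw [Finset.mem_powersetCard] at hS
    exact fib_const X S X (by rw [hS.2, hX])
  have huniform' : ∀ S ∈ powersetCard m (univ : Finset (Fin h)), fib X S = fib X X := by
    intro S hS
    rw [Finset.mem_powersetCard] at hS
    exact fib_const X S X (by rw [hS.2, hX])
  have h1 : (univ.filter (fun σ : Equiv.Perm (Fin h) => ∀ u ∈ X, σ u ∉ Y)).card
      = (h - m).choose m * fib X X := by
    rw [hcard, Finset.sum_congr rfl huniform, Finset.sum_const, smul_eq_mul,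
      Finset.card_powersetCard]
    congr 2
    rw [Finset.card_compl, hY]
    simp
  have h2 : Nat.factorial h = h.choose m * fib X X := by
    rw [← sum_fib m X hX, Finset.sum_congr rfl huniform', Finset.sum_const, smul_eq_mul,
      Finset.card_powersetCard]
    congr 2
    simp
  rw [h1, h2]
  ring

lemma exists_good {h : ℕ} (m D : ℕ) (hm : 1 ≤ m) (hmh : m < h)
    (hD : (2*h+1) * (h / m + 1) ≤ m * D) :
    ∃ σs : Fin D → Equiv.Perm (Fin h), ∀ X Y : Finset (Fin h), X.card = m → Y.card = m →
      ∃ k, ∃ u ∈ X, σs k u ∈ Y := by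
  classical
  by_contra hcon
  push_neg at hcon
  -- every tuple is bad for some pair
  set pairs := (powersetCard m (univ : Finset (Fin h))) ×ˢ (powersetCard m (univ : Finset (Fin h)))
    with hpairs
  set badT : Finset (Fin h) × Finset (Fin h) → Finset (Fin D → Equiv.Perm (Fin h)) :=
    (fun XY => univ.filter (fun σs => ∀ k, ∀ u ∈ XY.1, σs k u ∉ XY.2)) with hbadT
  have hsub : (univ : Finset (Fin D → Equiv.Perm (Fin h))) ⊆ pairs.biUnion badT := by
    intro σs _
    obtain ⟨X, Y, hX, hY, hbad⟩ := hcon σs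
    rw [Finset.mem_biUnion]
    refine ⟨(X, Y), ?_, ?_⟩
    · rw [hpairs, Finset.mem_product]
      exact ⟨Finset.mem_powersetCard.2 ⟨Finset.subset_univ _, hX⟩,
        Finset.mem_powersetCard.2 ⟨Finset.subset_univ _, hY⟩⟩
    · rw [hbadT]
      simp only [Finset.mem_filter, Finset.mem_univ, true_and]
      intro k u hu
      exact hbad k u hu
  -- per-pair count
  have hcount : ∀ XY ∈ pairs, (badT XY).card
      = ((univ.filter (fun σ : Equiv.Perm (Fin h) => ∀ u ∈ XY.1, σ u ∉ XY.2)).card) ^ D := by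
    intro XY _
    rw [hbadT]
    have e : {σs : Fin D → Equiv.Perm (Fin h) // ∀ k, ∀ u ∈ XY.1, σs k u ∉ XY.2}
        ≃ (Fin D → {σ : Equiv.Perm (Fin h) // ∀ u ∈ XY.1, σ u ∉ XY.2}) :=
      Equiv.subtypePiEquivPi (β := fun _ : Fin D => Equiv.Perm (Fin h))
        (p := fun _ σ => ∀ u ∈ XY.1, σ u ∉ XY.2)
    have h1 : (univ.filter (fun σs : Fin D → Equiv.Perm (Fin h) =>
          ∀ k, ∀ u ∈ XY.1, σs k u ∉ XY.2)).card
        = Fintype.card {σs : Fin D → Equiv.Perm (Fin h) // ∀ k, ∀ u ∈ XY.1, σs k u ∉ XY.2} :=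
      (Fintype.card_subtype _).symm
    rw [h1, Fintype.card_congr e, Fintype.card_pi]
    simp [Fintype.card_subtype]
  -- the common bad-per-pair count B
  by_cases hne : Nonempty (Fin h)
  · -- main case
    have hhpos : 0 < h := by
      rcases hne with ⟨x⟩; exact Nat.pos_of_ne_zero (by rintro rfl; exact x.elim0)
    -- choose one pair to define B
    have hX0 : ∃ X0 : Finset (Fin h), X0.card = m := by
      obtain ⟨X0, -, hX0⟩ := Finset.exists_subset_card_eq (s := (univ : Finset (Fin h))) (n := m)
        (by simpa using hmh.le)
      exact ⟨X0, hX0⟩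
    obtain ⟨X0, hX0⟩ := hX0
    set B := (univ.filter (fun σ : Equiv.Perm (Fin h) => ∀ u ∈ X0, σ u ∉ X0)).card with hB
    have hBeq : ∀ XY ∈ pairs,
        (univ.filter (fun σ : Equiv.Perm (Fin h) => ∀ u ∈ XY.1, σ u ∉ XY.2)).card = B := by
      intro XY hXY
      rw [hpairs, Finset.mem_product] at hXY
      have h1 := (Finset.mem_powersetCard.1 hXY.1).2
      have h2 := (Finset.mem_powersetCard.1 hXY.2).2
      have e1 := bad_count m XY.1 XY.2 h1 h2
      have e2 := bad_count m X0 X0 hX0 hX0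
      have hcpos : 0 < h.choose m := Nat.choose_pos (le_of_lt hmh)
      rw [hB]
      exact Nat.eq_of_mul_eq_mul_right hcpos (by rw [e1, e2])
    -- union bound
    have hcard : Fintype.card (Fin D → Equiv.Perm (Fin h)) ≤ pairs.card * B ^ D := by
      calc Fintype.card (Fin D → Equiv.Perm (Fin h))
          = (univ : Finset (Fin D → Equiv.Perm (Fin h))).card := Finset.card_univ.symm
        _ ≤ (pairs.biUnion badT).card := Finset.card_le_card hsub
        _ ≤ ∑ XY ∈ pairs, (badT XY).card := Finset.card_biUnion_le
        _ = ∑ XY ∈ pairs, B ^ D := by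
            apply Finset.sum_congr rfl
            intro XY hXY
            rw [hcount XY hXY, hBeq XY hXY]
        _ = pairs.card * B ^ D := by rw [Finset.sum_const, smul_eq_mul]
    -- compute total
    have htot : Fintype.card (Fin D → Equiv.Perm (Fin h)) = (Nat.factorial h) ^ D := by
      rw [Fintype.card_fun, Fintype.card_perm, Fintype.card_fin, Fintype.card_fin]
    -- pairs.card = choose² 
    have hpc : pairs.card = h.choose m * h.choose m := by
      rw [hpairs, Finset.card_product, Finset.card_powersetCard, Finset.card_univ,
        Fintype.card_fin]
    -- now derive numeric contradiction
    have e2 := bad_count m X0 X0 hX0 hX0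
    -- B * C = C' * h! with C := h.choose m, C' := (h-m).choose m
    set C := h.choose m with hC
    set C' := (h - m).choose m with hC'
    have hcpos : 0 < C := Nat.choose_pos (le_of_lt hmh)
    have hfpos : 0 < Nat.factorial h := Nat.factorial_pos h
    have hkey : C * C * C' ^ D < C ^ D := by
      -- via descFactorial
      have hdf : Nat.descFactorial h m = Nat.factorial m * C := Nat.descFactorial_eq_factorial_mul_choose h m
      have hdf' : Nat.descFactorial (h - m) m = Nat.factorial m * C' :=
        Nat.descFactorial_eq_factorial_mul_choose (h - m) m
      have harith := choose_pow_lt hm hmh hD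
      have hratio := desc_ratio m (h - m) h (Nat.sub_le _ _)
      -- raise hratio to the D-th power
      have hratioD : (Nat.descFactorial (h-m) m) ^ D * h ^ (m * D)
          ≤ (Nat.descFactorial h m) ^ D * (h - m) ^ (m * D) := by
        calc (Nat.descFactorial (h-m) m) ^ D * h ^ (m * D)
            = ((Nat.descFactorial (h-m) m) * h ^ m) ^ D := by
              rw [mul_pow, ← pow_mul]
          _ ≤ ((Nat.descFactorial h m) * (h - m) ^ m) ^ D :=
              Nat.pow_le_pow_left hratio D
          _ = (Nat.descFactorial h m) ^ D * (h - m) ^ (m * D) := by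
              rw [mul_pow, ← pow_mul]
      -- combine: C*C * dF(h-m)^D * h^{mD} ≤ C*C* dF(h)^D *(h-m)^{mD}
      --        = dF(h)^D * (C² (h-m)^{mD}) < dF(h)^D * h^{mD}
      have hdfpos : 0 < Nat.descFactorial h m := by
        rcases Nat.eq_zero_or_pos (Nat.descFactorial h m) with h0 | h0
        · exact absurd (Nat.descFactorial_eq_zero_iff_lt.1 h0) (by omega)
        · exact h0
      have hhpow : 0 < h ^ (m * D) := Nat.pow_pos hhpos
      have step1 : C * C * ((Nat.descFactorial (h-m) m) ^ D * h ^ (m*D))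
          ≤ C * C * ((Nat.descFactorial h m) ^ D * (h - m) ^ (m*D)) :=
        Nat.mul_le_mul_left _ hratioD
      have step2 : (Nat.descFactorial h m) ^ D * (C * C * (h - m) ^ (m*D))
          < (Nat.descFactorial h m) ^ D * h ^ (m*D) := by
        apply mul_lt_mul_of_pos_left _ (Nat.pow_pos hdfpos)
        calc C * C * (h - m) ^ (m*D) = C ^ 2 * (h - m) ^ (m*D) := by ring
          _ < h ^ (m * D) := harith
      -- put together and cancel
      have chain : C * C * ((Nat.descFactorial (h-m) m) ^ D) * h ^ (m*D)
          < (Nat.descFactorial h m) ^ D * h ^ (m*D) := by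
        calc C * C * ((Nat.descFactorial (h-m) m) ^ D) * h ^ (m*D)
            = C * C * ((Nat.descFactorial (h-m) m) ^ D * h ^ (m*D)) := by ring
          _ ≤ C * C * ((Nat.descFactorial h m) ^ D * (h - m) ^ (m*D)) := step1
          _ = (Nat.descFactorial h m) ^ D * (C * C * (h - m) ^ (m*D)) := by ring
          _ < (Nat.descFactorial h m) ^ D * h ^ (m*D) := step2
      have hcancel : C * C * ((Nat.descFactorial (h-m) m) ^ D)
          < (Nat.descFactorial h m) ^ D :=
        Nat.lt_of_mul_lt_mul_right (by simpa [mul_comm] using chain)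
      -- convert dF to m! * choose
      rw [hdf, hdf'] at hcancel
      have hstep : (Nat.factorial m) ^ D * (C * C * C' ^ D)
          < (Nat.factorial m) ^ D * C ^ D := by
        calc (Nat.factorial m) ^ D * (C * C * C' ^ D)
            = C * C * ((Nat.factorial m) ^ D * C' ^ D) := by ring
          _ = C * C * ((Nat.factorial m * C') ^ D) := by rw [mul_pow]
          _ < (Nat.factorial m * C) ^ D := hcancel
          _ = (Nat.factorial m) ^ D * C ^ D := by rw [mul_pow]
      exact Nat.lt_of_mul_lt_mul_left hstep
    -- final contradiction
    have hlt : pairs.card * B ^ D < (Nat.factorial h) ^ D := by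
      -- B * C = C' * h!
      have hBC : B * C = C' * Nat.factorial h := e2
      have hCpow : 0 < C ^ D := Nat.pow_pos hcpos
      -- (pairs.card * B^D) * C^D = C*C* (C'^D) * h!^D < C^D * h!^D
      have expand : pairs.card * B ^ D * C ^ D = C * C * C' ^ D * (Nat.factorial h) ^ D := by
        rw [hpc]
        calc h.choose m * h.choose m * B ^ D * C ^ D
            = C * C * (B * C) ^ D := by rw [hC]; ring
          _ = C * C * (C' * Nat.factorial h) ^ D := by rw [hBC]
          _ = C * C * C' ^ D * (Nat.factorial h) ^ D := by rw [mul_pow]; ring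
      have : pairs.card * B ^ D * C ^ D < (Nat.factorial h) ^ D * C ^ D := by
        rw [expand]
        calc C * C * C' ^ D * (Nat.factorial h) ^ D
            < C ^ D * (Nat.factorial h) ^ D :=
              mul_lt_mul_of_pos_right hkey (Nat.pow_pos hfpos)
          _ = (Nat.factorial h) ^ D * C ^ D := by ring
      exact Nat.lt_of_mul_lt_mul_right this
    rw [htot] at hcard
    exact Nat.lt_irrefl _ (lt_of_le_of_lt hcard hlt)
  · -- h = 0 contradicts m < h
    have h0 : h = 0 := by
      by_contra hne0
      exact hne ⟨⟨0, Nat.pos_of_ne_zero hne0⟩⟩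
    omega



variable {n hh D : ℕ}

def mkA (hpos : 0 < hh) (a : Fin n) : Fin hh := ⟨a.val % hh, Nat.mod_lt _ hpos⟩

def mkB (h1 : ℕ) (hpos : 0 < hh) (b : Fin n) : Fin hh := ⟨(b.val - h1) % hh, Nat.mod_lt _ hpos⟩

def C1 (σs : Fin D → Equiv.Perm (Fin hh)) (hpos : 0 < hh) (a b : Fin n) : Prop :=
  ∃ k k' : Fin D, σs k (mkA hpos a) = σs k' (mkA hpos b)

def C2 (σs : Fin D → Equiv.Perm (Fin hh)) (hpos : 0 < hh) (h1 : ℕ) (a b : Fin n) : Prop :=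
  ∃ w : Fin n, w.val < h1 ∧ ∃ k k' : Fin D,
    σs k (mkA hpos w) = mkB h1 hpos a ∧ σs k' (mkA hpos w) = mkB h1 hpos b

def Cr (σs : Fin D → Equiv.Perm (Fin hh)) (hpos : 0 < hh) (h1 : ℕ) (a b : Fin n) : Prop :=
  ∃ k : Fin D, σs k (mkA hpos a) = mkB h1 hpos b

instance (σs : Fin D → Equiv.Perm (Fin hh)) (hpos : 0 < hh) (a b : Fin n) :
    Decidable (C1 σs hpos a b) := by unfold C1; exact inferInstance

instance (σs : Fin D → Equiv.Perm (Fin hh)) (hpos : 0 < hh) (h1 : ℕ) (a b : Fin n) :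
    Decidable (C2 σs hpos h1 a b) := by unfold C2; exact inferInstance

instance (σs : Fin D → Equiv.Perm (Fin hh)) (hpos : 0 < hh) (h1 : ℕ) (a b : Fin n) :
    Decidable (Cr σs hpos h1 a b) := by unfold Cr; exact inferInstance

def G (σs : Fin D → Equiv.Perm (Fin hh)) (hpos : 0 < hh) (h1 : ℕ) : SimpleGraph (Fin n) where
  Adj a b := a ≠ b ∧
    ((a.val < h1 ∧ b.val < h1 ∧ ¬ C1 σs hpos a b) ∨
     (h1 ≤ a.val ∧ h1 ≤ b.val ∧ ¬ C2 σs hpos h1 a b) ∨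
     (a.val < h1 ∧ h1 ≤ b.val ∧ Cr σs hpos h1 a b) ∨
     (b.val < h1 ∧ h1 ≤ a.val ∧ Cr σs hpos h1 b a))
  symm := by
    constructor
    rintro a b ⟨hne, hor⟩
    refine ⟨hne.symm, ?_⟩
    rcases hor with ⟨ha, hb, hc⟩ | ⟨ha, hb, hc⟩ | h3 | h4
    · exact Or.inl ⟨hb, ha, fun ⟨k, k', hk⟩ => hc ⟨k', k, hk.symm⟩⟩
    · exact Or.inr (Or.inl ⟨hb, ha, fun ⟨w, hw, k, k', hk1, hk2⟩ => hc ⟨w, hw, k', k, hk2, hk1⟩⟩)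
    · exact Or.inr (Or.inr (Or.inr h3))
    · exact Or.inr (Or.inr (Or.inl h4))
  loopless := ⟨fun a h => h.1 rfl⟩

section Props

variable (σs : Fin D → Equiv.Perm (Fin hh)) (hpos : 0 < hh) (h1 : ℕ)

lemma mkA_val (h1h : h1 ≤ hh) {a : Fin n} (ha : a.val < h1) : (mkA hpos a).val = a.val :=
  Nat.mod_eq_of_lt (lt_of_lt_of_le ha h1h)

lemma mkB_val (hsum : h1 + hh = n) {b : Fin n} (hb : h1 ≤ b.val) :
    (mkB h1 hpos b).val = b.val - h1 := by
  have : b.val - h1 < hh := by have := b.isLt; omega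
  exact Nat.mod_eq_of_lt this

lemma mkA_inj (h1h : h1 ≤ hh) {a b : Fin n} (ha : a.val < h1) (hb : b.val < h1)
    (h : mkA (n := n) hpos a = mkA hpos b) : a = b := by
  have hv := congrArg Fin.val h
  rw [mkA_val hpos h1 h1h ha, mkA_val hpos h1 h1h hb] at hv
  exact Fin.ext hv

lemma mkB_inj (hsum : h1 + hh = n) {a b : Fin n} (ha : h1 ≤ a.val) (hb : h1 ≤ b.val)
    (h : mkB (n := n) h1 hpos a = mkB h1 hpos b) : a = b := by
  have hv := congrArg Fin.val h
  rw [mkB_val hpos h1 hsum ha, mkB_val hpos h1 hsum hb] at hv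
  have h2 := a.isLt
  have h3 := b.isLt
  exact Fin.ext (by omega)

/-- The H1 part as a finset. -/
def H1f (h1 : ℕ) : Finset (Fin n) := univ.filter (fun v => v.val < h1)

def H2f (h1 : ℕ) : Finset (Fin n) := univ.filter (fun v => h1 ≤ v.val)

lemma card_H1f (hn : h1 ≤ n) : (H1f (n := n) h1).card = h1 := by
  classical
  have : H1f (n := n) h1 = Finset.map ⟨Fin.castLE hn, Fin.castLE_injective hn⟩ univ := by
    ext v
    simp only [H1f, Finset.mem_filter, Finset.mem_univ, true_and, Finset.mem_map,
      Function.Embedding.coeFn_mk]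
    constructor
    · intro hv
      refine ⟨⟨v.val, hv⟩, ?_⟩
      first
      | exact ⟨Finset.mem_univ _, Fin.ext rfl⟩
      | exact Fin.ext rfl
    · rintro ⟨i, rfl⟩
      exact i.isLt
  rw [this, Finset.card_map, Finset.card_univ, Fintype.card_fin]

lemma card_H2f : (H2f (n := n) h1).card = n - h1 := by
  classical
  have hsplit := Finset.card_filter_add_card_filter_not
    (s := (univ : Finset (Fin n))) (p := fun v => v.val < h1)
  have h2 : (H2f (n := n) h1) = univ.filter (fun v => ¬ v.val < h1) := by
    ext v; simp [H2f, Nat.not_lt]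
  rcases le_or_gt h1 n with hn | hn
  · rw [h2]
    have h1c := card_H1f (n := n) h1 hn
    rw [H1f] at h1c
    rw [Finset.card_univ, Fintype.card_fin] at hsplit
    omega
  · -- h1 > n : H2f is empty and n - h1 = 0
    rw [h2]
    have : univ.filter (fun v : Fin n => ¬ v.val < h1) = ∅ := by
      apply Finset.filter_eq_empty_iff.2
      intro v _
      have := v.isLt; omega
    rw [this]
    simp
    omega

-- adjacency extraction lemmas
lemma adj_h1h1 {σs : Fin D → Equiv.Perm (Fin hh)} {hpos : 0 < hh} {a b : Fin n}
    (hadj : (G σs hpos h1).Adj a b) (ha : a.val < h1) (hb : b.val < h1) :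
    ¬ C1 σs hpos a b := by
  rcases (hadj : _ ∧ _) with ⟨hne, hor⟩
  rcases hor with ⟨-, -, hc⟩ | ⟨h2a, -, -⟩ | ⟨-, h2b, -⟩ | ⟨-, h2a, -⟩
  · exact hc
  · omega
  · omega
  · omega

lemma adj_h2h2 {σs : Fin D → Equiv.Perm (Fin hh)} {hpos : 0 < hh} {a b : Fin n}
    (hadj : (G σs hpos h1).Adj a b) (ha : h1 ≤ a.val) (hb : h1 ≤ b.val) :
    ¬ C2 σs hpos h1 a b := by
  rcases (hadj : _ ∧ _) with ⟨hne, hor⟩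
  rcases hor with ⟨h1a, -, -⟩ | ⟨-, -, hc⟩ | ⟨h1a, -, -⟩ | ⟨h1b, -, -⟩
  · omega
  · exact hc
  · omega
  · omega

lemma adj_cross {σs : Fin D → Equiv.Perm (Fin hh)} {hpos : 0 < hh} {a b : Fin n}
    (hadj : (G σs hpos h1).Adj a b) (ha : a.val < h1) (hb : h1 ≤ b.val) :
    Cr σs hpos h1 a b := by
  rcases (hadj : _ ∧ _) with ⟨hne, hor⟩
  rcases hor with ⟨-, h1b, -⟩ | ⟨h2a, -, -⟩ | ⟨-, -, hc⟩ | ⟨h1b, -, -⟩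
  · omega
  · omega
  · exact hc
  · omega

/-- counting conflicts on the H1 side -/
lemma conflict1_card_le (σs : Fin D → Equiv.Perm (Fin hh)) (hpos : 0 < hh)
    (h1h : h1 ≤ hh) (v : Fin n) :
    ((H1f (n := n) h1).filter (fun w => C1 σs hpos v w)).card ≤ D * D := by
  classical
  have hsub : ((H1f (n := n) h1).filter (fun w => C1 σs hpos v w)) ⊆
      (univ : Finset (Fin D × Fin D)).biUnion
        (fun kk => (H1f (n := n) h1).filter
          (fun w => σs kk.1 (mkA hpos v) = σs kk.2 (mkA hpos w))) := by
    intro w hw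
    rw [Finset.mem_filter] at hw
    obtain ⟨k, k', hk⟩ := hw.2
    rw [Finset.mem_biUnion]
    exact ⟨(k, k'), Finset.mem_univ _, Finset.mem_filter.2 ⟨hw.1, hk⟩⟩
  calc ((H1f (n := n) h1).filter (fun w => C1 σs hpos v w)).card
      ≤ _ := Finset.card_le_card hsub
    _ ≤ ∑ kk ∈ (univ : Finset (Fin D × Fin D)), ((H1f (n := n) h1).filter
          (fun w => σs kk.1 (mkA hpos v) = σs kk.2 (mkA hpos w))).card :=
        Finset.card_biUnion_le
    _ ≤ ∑ _kk ∈ (univ : Finset (Fin D × Fin D)), 1 := by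
        apply Finset.sum_le_sum
        intro kk _
        apply Finset.card_le_one.2
        intro w hw w' hw'
        rw [Finset.mem_filter] at hw hw'
        have hwH : w.val < h1 := by
          have := hw.1; rw [H1f, Finset.mem_filter] at this; exact this.2
        have hwH' : w'.val < h1 := by
          have := hw'.1; rw [H1f, Finset.mem_filter] at this; exact this.2
        have : σs kk.2 (mkA hpos w) = σs kk.2 (mkA hpos w') := by
          rw [← hw.2, ← hw'.2]
        have := (σs kk.2).injective this
        exact mkA_inj hpos h1 h1h hwH hwH' this
    _ = D * D := by
        rw [Finset.sum_const, smul_eq_mul, Finset.card_univ]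
        simp [Fintype.card_prod]

/-- counting conflicts on the H2 side -/
lemma conflict2_card_le (σs : Fin D → Equiv.Perm (Fin hh)) (hpos : 0 < hh)
    (h1h : h1 ≤ hh) (hsum : h1 + hh = n) (v : Fin n) :
    ((H2f (n := n) h1).filter (fun w => C2 σs hpos h1 v w)).card ≤ D * D := by
  classical
  have hsub : ((H2f (n := n) h1).filter (fun w => C2 σs hpos h1 v w)) ⊆
      (univ : Finset (Fin D × Fin D)).biUnion
        (fun kk => (H2f (n := n) h1).filter
          (fun w => ∃ u : Fin n, u.val < h1 ∧ σs kk.1 (mkA hpos u) = mkB h1 hpos v ∧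
            σs kk.2 (mkA hpos u) = mkB h1 hpos w)) := by
    intro w hw
    rw [Finset.mem_filter] at hw
    obtain ⟨u, hu, k, k', hk1, hk2⟩ := hw.2
    rw [Finset.mem_biUnion]
    exact ⟨(k, k'), Finset.mem_univ _, Finset.mem_filter.2 ⟨hw.1, ⟨u, hu, hk1, hk2⟩⟩⟩
  calc ((H2f (n := n) h1).filter (fun w => C2 σs hpos h1 v w)).card
      ≤ _ := Finset.card_le_card hsub
    _ ≤ ∑ kk ∈ (univ : Finset (Fin D × Fin D)), ((H2f (n := n) h1).filter
          (fun w => ∃ u : Fin n, u.val < h1 ∧ σs kk.1 (mkA hpos u) = mkB h1 hpos v ∧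
            σs kk.2 (mkA hpos u) = mkB h1 hpos w)).card :=
        Finset.card_biUnion_le
    _ ≤ ∑ _kk ∈ (univ : Finset (Fin D × Fin D)), 1 := by
        apply Finset.sum_le_sum
        intro kk _
        apply Finset.card_le_one.2
        intro w hw w' hw'
        rw [Finset.mem_filter] at hw hw'
        obtain ⟨u, hu, hk1, hk2⟩ := hw.2
        obtain ⟨u', hu', hk1', hk2'⟩ := hw'.2
        have hwH : h1 ≤ w.val := by
          have := hw.1; rw [H2f, Finset.mem_filter] at this; exact this.2
        have hwH' : h1 ≤ w'.val := by
          have := hw'.1; rw [H2f, Finset.mem_filter] at this; exact this.2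
        have huu : u = u' := by
          have : σs kk.1 (mkA hpos u) = σs kk.1 (mkA hpos u') := by rw [hk1, hk1']
          exact mkA_inj hpos h1 h1h hu hu' ((σs kk.1).injective this)
        have : mkB h1 hpos w = mkB h1 hpos w' := by
          rw [← hk2, ← hk2', huu]
        exact mkB_inj hpos h1 hsum hwH hwH' this
    _ = D * D := by
        rw [Finset.sum_const, smul_eq_mul, Finset.card_univ]
        simp [Fintype.card_prod]

/-- Degree bound, H1 side. -/
lemma deg1 (σs : Fin D → Equiv.Perm (Fin hh)) (hpos : 0 < hh)
    (h1h : h1 ≤ hh) (hn : h1 ≤ n) (v : Fin n) (hv : v.val < h1) :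
    h1 - 1 - D * D ≤ ((G σs hpos h1).neighborSet v).ncard := by
  classical
  set F := ((H1f (n := n) h1).erase v).filter (fun w => ¬ C1 σs hpos v w) with hF
  have hvH : v ∈ H1f (n := n) h1 := by
    rw [H1f, Finset.mem_filter]; exact ⟨Finset.mem_univ _, hv⟩
  have hsplit := Finset.card_filter_add_card_filter_not
    (s := (H1f (n := n) h1).erase v) (p := fun w => C1 σs hpos v w)
  have herase : ((H1f (n := n) h1).erase v).card = h1 - 1 := by
    rw [Finset.card_erase_of_mem hvH, card_H1f h1 hn]
  have hconf : (((H1f (n := n) h1).erase v).filter (fun w => C1 σs hpos v w)).card ≤ D * D := by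
    calc (((H1f (n := n) h1).erase v).filter (fun w => C1 σs hpos v w)).card
        ≤ ((H1f (n := n) h1).filter (fun w => C1 σs hpos v w)).card :=
          Finset.card_le_card (Finset.filter_subset_filter _ (Finset.erase_subset _ _))
      _ ≤ D * D := conflict1_card_le h1 σs hpos h1h v
  have hFcard : h1 - 1 - D * D ≤ F.card := by
    rw [hF]; omega
  have hFsub : (F : Set (Fin n)) ⊆ (G σs hpos h1).neighborSet v := by
    intro w hw
    rw [Finset.mem_coe, hF, Finset.mem_filter] at hw
    obtain ⟨hwer, hwc⟩ := hw
    have hwne : w ≠ v := Finset.ne_of_mem_erase hwer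
    have hwH : w.val < h1 := by
      have := Finset.mem_of_mem_erase hwer
      rw [H1f, Finset.mem_filter] at this; exact this.2
    show (G σs hpos h1).Adj v w
    exact ⟨hwne.symm, Or.inl ⟨hv, hwH, hwc⟩⟩
  calc h1 - 1 - D * D ≤ F.card := hFcard
    _ = (F : Set (Fin n)).ncard := (Set.ncard_coe_finset F).symm
    _ ≤ ((G σs hpos h1).neighborSet v).ncard := Set.ncard_le_ncard hFsub (Set.toFinite _)

/-- Degree bound, H2 side. -/
lemma deg2 (σs : Fin D → Equiv.Perm (Fin hh)) (hpos : 0 < hh)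
    (h1h : h1 ≤ hh) (hsum : h1 + hh = n) (v : Fin n) (hv : h1 ≤ v.val) :
    hh - 1 - D * D ≤ ((G σs hpos h1).neighborSet v).ncard := by
  classical
  set F := ((H2f (n := n) h1).erase v).filter (fun w => ¬ C2 σs hpos h1 v w) with hF
  have hvH : v ∈ H2f (n := n) h1 := by
    rw [H2f, Finset.mem_filter]; exact ⟨Finset.mem_univ _, hv⟩
  have hsplit := Finset.card_filter_add_card_filter_not
    (s := (H2f (n := n) h1).erase v) (p := fun w => C2 σs hpos h1 v w)
  have herase : ((H2f (n := n) h1).erase v).card = hh - 1 := by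
    rw [Finset.card_erase_of_mem hvH, card_H2f h1]
    omega
  have hconf : (((H2f (n := n) h1).erase v).filter (fun w => C2 σs hpos h1 v w)).card
      ≤ D * D := by
    calc (((H2f (n := n) h1).erase v).filter (fun w => C2 σs hpos h1 v w)).card
        ≤ ((H2f (n := n) h1).filter (fun w => C2 σs hpos h1 v w)).card :=
          Finset.card_le_card (Finset.filter_subset_filter _ (Finset.erase_subset _ _))
      _ ≤ D * D := conflict2_card_le h1 σs hpos h1h hsum v
  have hFcard : hh - 1 - D * D ≤ F.card := by
    rw [hF]; omega
  have hFsub : (F : Set (Fin n)) ⊆ (G σs hpos h1).neighborSet v := by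
    intro w hw
    rw [Finset.mem_coe, hF, Finset.mem_filter] at hw
    obtain ⟨hwer, hwc⟩ := hw
    have hwne : w ≠ v := Finset.ne_of_mem_erase hwer
    have hwH : h1 ≤ w.val := by
      have := Finset.mem_of_mem_erase hwer
      rw [H2f, Finset.mem_filter] at this; exact this.2
    show (G σs hpos h1).Adj v w
    exact ⟨hwne.symm, Or.inr (Or.inl ⟨hv, hwH, hwc⟩)⟩
  calc hh - 1 - D * D ≤ F.card := hFcard
    _ = (F : Set (Fin n)).ncard := (Set.ncard_coe_finset F).symm
    _ ≤ ((G σs hpos h1).neighborSet v).ncard := Set.ncard_le_ncard hFsub (Set.toFinite _)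

/-- Every triangle is inside one of the sides. -/
lemma triangle_side (σs : Fin D → Equiv.Perm (Fin hh)) (hpos : 0 < hh)
    {x y z : Fin n} (hxy : (G σs hpos h1).Adj x y) (hyz : (G σs hpos h1).Adj y z)
    (hxz : (G σs hpos h1).Adj x z) :
    (x.val < h1 ∧ y.val < h1 ∧ z.val < h1) ∨ (h1 ≤ x.val ∧ h1 ≤ y.val ∧ h1 ≤ z.val) := by
  rcases lt_or_ge x.val h1 with hx | hx <;> rcases lt_or_ge y.val h1 with hy | hy <;>
    rcases lt_or_ge z.val h1 with hz | hz
  · exact Or.inl ⟨hx, hy, hz⟩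
  · -- x<, y<, z≥
    exfalso
    obtain ⟨k, hk⟩ := adj_cross h1 hxz hx hz
    obtain ⟨k', hk'⟩ := adj_cross h1 hyz hy hz
    exact adj_h1h1 h1 hxy hx hy ⟨k, k', by rw [hk, hk']⟩
  · -- x<, y≥, z<
    exfalso
    obtain ⟨k, hk⟩ := adj_cross h1 hxy hx hy
    obtain ⟨k', hk'⟩ := adj_cross h1 (hyz.symm) hz hy
    exact adj_h1h1 h1 hxz hx hz ⟨k, k', by rw [hk, hk']⟩
  · -- x<, y≥, z≥ : pair (y,z) in H2
    exfalso
    obtain ⟨k, hk⟩ := adj_cross h1 hxy hx hy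
    obtain ⟨k', hk'⟩ := adj_cross h1 hxz hx hz
    exact adj_h2h2 h1 hyz hy hz ⟨x, hx, k, k', hk, hk'⟩
  · -- x≥, y<, z<
    exfalso
    obtain ⟨k, hk⟩ := adj_cross h1 (hxy.symm) hy hx
    obtain ⟨k', hk'⟩ := adj_cross h1 (hxz.symm) hz hx
    exact adj_h1h1 h1 hyz hy hz ⟨k, k', by rw [hk, hk']⟩
  · -- x≥, y<, z≥ : pair (x,z) in H2
    exfalso
    obtain ⟨k, hk⟩ := adj_cross h1 (hxy.symm) hy hx
    obtain ⟨k', hk'⟩ := adj_cross h1 hyz hy hz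
    exact adj_h2h2 h1 hxz hx hz ⟨y, hy, k, k', hk, hk'⟩
  · -- x≥, y≥, z< : pair (x,y) in H2
    exfalso
    obtain ⟨k, hk⟩ := adj_cross h1 (hxz.symm) hz hx
    obtain ⟨k', hk'⟩ := adj_cross h1 (hyz.symm) hz hy
    exact adj_h2h2 h1 hxy hx hy ⟨z, hz, k, k', hk, hk'⟩
  · exact Or.inr ⟨hx, hy, hz⟩

/-- Hole bound. -/
lemma hole_bound (σs : Fin D → Equiv.Perm (Fin hh)) (hpos : 0 < hh)
    (h1h : h1 ≤ hh) (hsum : h1 + hh = n) {m s : ℕ}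
    (hGood : ∀ X Y : Finset (Fin hh), X.card = m → Y.card = m →
      ∃ k, ∃ u ∈ X, σs k u ∈ Y)
    (hmD : D * D + 2 ≤ m)
    (U1 U2 : Finset (Fin n)) (hdisj : Disjoint U1 U2)
    (hU1 : U1.card = s) (hU2 : U2.card = s)
    (hnadj : ∀ u ∈ U1, ∀ v ∈ U2, ¬ (G σs hpos h1).Adj u v) :
    s ≤ 2 * m - 2 := by
  classical
  by_contra hcon
  push_neg at hcon
  set A1 := U1.filter (fun v => v.val < h1) with hA1
  set A2 := U1.filter (fun v => ¬ v.val < h1) with hA2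
  set B1 := U2.filter (fun v => v.val < h1) with hB1
  set B2 := U2.filter (fun v => ¬ v.val < h1) with hB2
  have hAsplit := Finset.card_filter_add_card_filter_not
    (s := U1) (p := fun v : Fin n => v.val < h1)
  have hBsplit := Finset.card_filter_add_card_filter_not
    (s := U2) (p := fun v : Fin n => v.val < h1)
  have hmA : m ≤ A1.card ∨ m ≤ A2.card := by
    rw [hA1, hA2]; omega
  have hmB : m ≤ B1.card ∨ m ≤ B2.card := by
    rw [hB1, hB2]; omega
  -- helper facts about membership
  have hA1mem : ∀ a ∈ A1, a ∈ U1 ∧ a.val < h1 := by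
    intro a ha; rw [hA1, Finset.mem_filter] at ha; exact ha
  have hA2mem : ∀ a ∈ A2, a ∈ U1 ∧ h1 ≤ a.val := by
    intro a ha; rw [hA2, Finset.mem_filter] at ha; exact ⟨ha.1, by omega⟩
  have hB1mem : ∀ a ∈ B1, a ∈ U2 ∧ a.val < h1 := by
    intro a ha; rw [hB1, Finset.mem_filter] at ha; exact ha
  have hB2mem : ∀ a ∈ B2, a ∈ U2 ∧ h1 ≤ a.val := by
    intro a ha; rw [hB2, Finset.mem_filter] at ha; exact ⟨ha.1, by omega⟩
  -- cross case helper
  have cross_case : ∀ (P Q : Finset (Fin n)),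
      (∀ a ∈ P, a.val < h1) → (∀ b ∈ Q, h1 ≤ b.val) →
      m ≤ P.card → m ≤ Q.card →
      (∀ a ∈ P, ∀ b ∈ Q, ¬ (G σs hpos h1).Adj a b) → False := by
    intro P Q hP hQ hPm hQm hPQ
    obtain ⟨P', hP'sub, hP'c⟩ := Finset.exists_subset_card_eq hPm
    obtain ⟨Q', hQ'sub, hQ'c⟩ := Finset.exists_subset_card_eq hQm
    have hX : (P'.image (mkA hpos)).card = m := by
      rw [Finset.card_image_of_injOn, hP'c]
      intro a ha b hb hab
      exact mkA_inj hpos h1 h1h (hP a (hP'sub ha)) (hP b (hP'sub hb)) hab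
    have hY : (Q'.image (mkB h1 hpos)).card = m := by
      rw [Finset.card_image_of_injOn, hQ'c]
      intro a ha b hb hab
      exact mkB_inj hpos h1 hsum (hQ a (hQ'sub ha)) (hQ b (hQ'sub hb)) hab
    obtain ⟨k, u, huX, hσ⟩ := hGood _ _ hX hY
    obtain ⟨a, haP, rfl⟩ := Finset.mem_image.1 huX
    obtain ⟨b, hbQ, hbeq⟩ := Finset.mem_image.1 hσ
    have ha2 := hP a (hP'sub haP)
    have hb2 := hQ b (hQ'sub hbQ)
    have hne : a ≠ b := by
      intro heq
      rw [heq] at ha2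
      omega
    have hadj : (G σs hpos h1).Adj a b :=
      ⟨hne, Or.inr (Or.inr (Or.inl ⟨ha2, hb2, ⟨k, hbeq.symm⟩⟩))⟩
    exact hPQ a (hP'sub haP) b (hQ'sub hbQ) hadj
  -- case analysis
  rcases hmA with hA | hA <;> rcases hmB with hB | hB
  · -- both in H1: use conflict bound
    obtain ⟨x, hxA⟩ := Finset.card_pos.1 (by omega : 0 < A1.card)
    have hx := hA1mem x hxA
    have hsubB : B1 ⊆ (H1f (n := n) h1).filter (fun w => C1 σs hpos x w) := by
      intro y hyB
      have hy := hB1mem y hyB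
      have hne : x ≠ y := by
        intro heq
        exact Finset.disjoint_left.1 hdisj hx.1 (heq ▸ hy.1)
      rw [Finset.mem_filter]
      refine ⟨by rw [H1f, Finset.mem_filter]; exact ⟨Finset.mem_univ _, hy.2⟩, ?_⟩
      by_contra hC1
      exact hnadj x hx.1 y hy.1 ⟨hne, Or.inl ⟨hx.2, hy.2, hC1⟩⟩
    have := Finset.card_le_card hsubB
    have := conflict1_card_le h1 σs hpos h1h x
    omega
  · exact cross_case A1 B2 (fun a ha => (hA1mem a ha).2) (fun b hb => (hB2mem b hb).2)
      hA hB (fun a ha b hb => hnadj a (hA1mem a ha).1 b (hB2mem b hb).1)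
  · refine cross_case B1 A2 (fun a ha => (hB1mem a ha).2) (fun b hb => (hA2mem b hb).2)
      hB hA ?_
    intro a ha b hb hadj
    exact hnadj b (hA2mem b hb).1 a (hB1mem a ha).1 hadj.symm
  · -- both in H2
    obtain ⟨x, hxA⟩ := Finset.card_pos.1 (by omega : 0 < A2.card)
    have hx := hA2mem x hxA
    have hsubB : B2 ⊆ (H2f (n := n) h1).filter (fun w => C2 σs hpos h1 x w) := by
      intro y hyB
      have hy := hB2mem y hyB
      have hne : x ≠ y := by
        intro heq
        exact Finset.disjoint_left.1 hdisj hx.1 (heq ▸ hy.1)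
      rw [Finset.mem_filter]
      refine ⟨by rw [H2f, Finset.mem_filter]; exact ⟨Finset.mem_univ _, hy.2⟩, ?_⟩
      by_contra hC2
      exact hnadj x hx.1 y hy.1 ⟨hne, Or.inr (Or.inl ⟨hx.2, hy.2, hC2⟩)⟩
    have := Finset.card_le_card hsubB
    have := conflict2_card_le h1 σs hpos h1h hsum x
    omega

end Props

end NoTF

namespace RTT

variable {k n : ℕ}

/-- `S` spans a copy of the `k`-vertex graph `F` in `G`:
there is an injective graph homomorphism from `F` to `G` with image exactly `S`. -/
def SpansCopy (F : SimpleGraph (Fin k)) (G : SimpleGraph (Fin n))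
    (S : Finset (Fin n)) : Prop :=
  ∃ f : Fin k → Fin n, Function.Injective f ∧
    (∀ a b, F.Adj a b → G.Adj (f a) (f b)) ∧ Finset.image f Finset.univ = S

/-- `T` is an `F`-tiling in `G`: a collection of pairwise vertex-disjoint vertex sets,
each spanning a copy of `F`. -/
def IsTiling (F : SimpleGraph (Fin k)) (G : SimpleGraph (Fin n))
    (T : Finset (Finset (Fin n))) : Prop :=
  (∀ S ∈ T, SpansCopy F G S) ∧ ∀ S ∈ T, ∀ S' ∈ T, S ≠ S' → Disjoint S S'

/-- The induced subgraph of `G` on the vertex set `A` has a perfect `F`-tiling. -/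
def PerfTilingOn (F : SimpleGraph (Fin k)) (G : SimpleGraph (Fin n))
    (A : Finset (Fin n)) : Prop :=
  ∃ T : Finset (Finset (Fin n)), IsTiling F G T ∧ T.biUnion id = A

/-- The minimum degree of `G` is at least `x`. -/
def MinDegGE (G : SimpleGraph (Fin n)) (x : ℝ) : Prop :=
  ∀ v : Fin n, x ≤ ((G.neighborSet v).ncard : ℝ)

/-- The `r`-independence number of `G` is at most `x`: every vertex set whose induced
subgraph contains no copy of `K_r` has size at most `x`. -/
def IndepBound (G : SimpleGraph (Fin n)) (r : ℕ) (x : ℝ) : Prop :=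
  ∀ S : Finset (Fin n), (∀ T ⊆ S, ¬ G.IsNClique r T) → (S.card : ℝ) ≤ x

/-- `α*(G) ≤ x`: every bipartite hole of `G` has size at most `x`. -/
def HoleBound (G : SimpleGraph (Fin n)) (x : ℝ) : Prop :=
  ∀ (s : ℕ) (U₁ U₂ : Finset (Fin n)), Disjoint U₁ U₂ → U₁.card = s → U₂.card = s →
    (∀ u ∈ U₁, ∀ v ∈ U₂, ¬ G.Adj u v) → (s : ℝ) ≤ x

/-- `A` is a `ξ`-absorbing set with respect to `V'` (for the `k`-vertex graph `F`
in the `n`-vertex graph `G`). -/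
def IsAbsorbingSet (F : SimpleGraph (Fin k)) (G : SimpleGraph (Fin n)) (ξ : ℝ)
    (V' A : Finset (Fin n)) : Prop :=
  ∀ U : Finset (Fin n), U ⊆ V' \ A → (U.card : ℝ) ≤ ξ * n →
    k ∣ (A ∪ U).card → PerfTilingOn F G (A ∪ U)

/-- `A` is an `(F,t)`-absorber for the `k`-set `S`. -/
def IsAbsorber (F : SimpleGraph (Fin k)) (G : SimpleGraph (Fin n)) (t : ℕ)
    (S A : Finset (Fin n)) : Prop :=
  Disjoint A S ∧ A.card ≤ k ^ 2 * t ∧ PerfTilingOn F G A ∧ PerfTilingOn F G (A ∪ S)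

/-- `S` has a family of at least `x` pairwise vertex-disjoint `(F,t)`-absorbers in `G`. -/
def HasManyAbsorbers (F : SimpleGraph (Fin k)) (G : SimpleGraph (Fin n)) (t : ℕ)
    (S : Finset (Fin n)) (x : ℝ) : Prop :=
  ∃ 𝒜 : Finset (Finset (Fin n)), x ≤ (𝒜.card : ℝ) ∧
    (∀ A ∈ 𝒜, IsAbsorber F G t S A) ∧
    ∀ A ∈ 𝒜, ∀ A' ∈ 𝒜, A ≠ A' → Disjoint A A'

/-- `𝒮` is an `F`-fan at `v` in `U`: a collection of pairwise disjoint `(k-1)`-sets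
`S ⊆ U \ {v}` such that `{v} ∪ S` spans a copy of `F`; its size is `𝒮.card`. -/
def IsFan (F : SimpleGraph (Fin k)) (G : SimpleGraph (Fin n)) (v : Fin n)
    (U : Finset (Fin n)) (𝒮 : Finset (Finset (Fin n))) : Prop :=
  (∀ S ∈ 𝒮, S ⊆ U.erase v ∧ S.card = k - 1 ∧ SpansCopy F G (insert v S)) ∧
    ∀ S ∈ 𝒮, ∀ S' ∈ 𝒮, S ≠ S' → Disjoint S S'

/-- `u` and `v` are `(F, m, t)`-reachable in `G`. -/
def FReachable (F : SimpleGraph (Fin k)) (G : SimpleGraph (Fin n)) (m : ℝ) (t : ℕ)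
    (u v : Fin n) : Prop :=
  ∀ W : Finset (Fin n), (W.card : ℝ) ≤ m →
    ∃ S : Finset (Fin n), Disjoint S W ∧ u ∉ S ∧ v ∉ S ∧ S.card ≤ k * t - 1 ∧
      PerfTilingOn F G (insert u S) ∧ PerfTilingOn F G (insert v S)

/-- `U` is `(F, m, t)`-closed in `G`. -/
def FClosed (F : SimpleGraph (Fin k)) (G : SimpleGraph (Fin n)) (m : ℝ) (t : ℕ)
    (U : Finset (Fin n)) : Prop :=
  ∀ u ∈ U, ∀ v ∈ U, u ≠ v → FReachable F G m t u v

/-- `P` is a partition of the vertex set of an `n`-vertex graph into `C` parts. -/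
def IsPartition {C : ℕ} (P : Fin C → Finset (Fin n)) : Prop :=
  (∀ i j, i ≠ j → Disjoint (P i) (P j)) ∧ Finset.univ.biUnion P = Finset.univ

/-- The `k`-vector `v` is `(F, β)`-robust with respect to the partition `P`:
it has coordinate sum `k`, and avoiding any set `W` of at most `βn` vertices there is
a copy of `F` whose vertex set has index vector `v`. -/
def RobustVec (F : SimpleGraph (Fin k)) (G : SimpleGraph (Fin n)) {C : ℕ}
    (P : Fin C → Finset (Fin n)) (β : ℝ) (v : Fin C → ℕ) : Prop :=
  (∑ i, v i) = k ∧
    ∀ W : Finset (Fin n), (W.card : ℝ) ≤ β * n →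
      ∃ S : Finset (Fin n), Disjoint S W ∧ SpansCopy F G S ∧ ∀ i, (S ∩ P i).card = v i

end RTT

set_option maxHeartbeats 4000000 in
open RTT in
/-- For any `0 < α < 1`, for all sufficiently large `n` divisible by `3`,
with `d = 2⌈(4/α)^4⌉`, there is an `n`-vertex graph `G` with `δ(G) ≥ n/2 - 2d²`,
`α*(G) ≤ αn` and no perfect `K_3`-tiling. -/
theorem no_triangle_factor_bipartite_holes :
    ∀ α : ℝ, 0 < α → α < 1 →
    ∃ N : ℕ, ∀ n : ℕ, N ≤ n → 3 ∣ n →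
      ∃ G : SimpleGraph (Fin n),
        MinDegGE G ((n : ℝ) / 2 - 2 * ((2 * ⌈(4 / α) ^ 4⌉₊ : ℕ) : ℝ) ^ 2) ∧
        HoleBound G (α * n) ∧
        ¬ PerfTilingOn (⊤ : SimpleGraph (Fin 3)) G Finset.univ := by
  intro α hα0 hα1
  classical
  set d : ℕ := 2 * ⌈(4 / α) ^ 4⌉₊ with hd
  refine ⟨⌈(4*(d:ℝ)^2 + 100)/α⌉₊ + ⌈(4:ℝ)/(1-α)⌉₊ + 100, ?_⟩
  intro n hn h3n
  have hα1' : (0:ℝ) < 1 - α := by linarith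
  -- d is large
  have hd512 : 512 ≤ d := by
    have h4α : (4:ℝ) ≤ 4 / α := by
      rw [le_div_iff₀ hα0]; nlinarith
    have h256 : (256:ℝ) ≤ (4/α)^4 := by
      have := pow_le_pow_left₀ (by norm_num : (0:ℝ) ≤ 4) h4α 4
      norm_num at this
      linarith
    have : 256 ≤ ⌈(4 / α) ^ 4⌉₊ := by
      by_contra hcon
      push_neg at hcon
      have : (⌈(4 / α) ^ 4⌉₊ : ℝ) ≤ 255 := by exact_mod_cast Nat.le_of_lt_succ hcon
      have := Nat.le_ceil ((4/α)^4)
      linarith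
    omega
  have hdR : (512:ℝ)/α^4 ≤ (d:ℝ) := by
    have hc1 := Nat.le_ceil ((4/α)^4)
    have hc2 : (4/α)^4 = 256/α^4 := by
      rw [div_pow]
      norm_num
    have hc4 : 256/α^4 ≤ (⌈(4/α)^4⌉₊:ℝ) := hc2 ▸ hc1
    have hc5 : ((d:ℕ):ℝ) = 2 * (⌈(4 / α) ^ 4⌉₊ : ℝ) := by rw [hd]; push_cast; ring
    have hc6 : (512:ℝ)/α^4 = 2*(256/α^4) := by ring
    linarith
  -- n is large
  have hn100 : 100 ≤ n := by omega
  have hnpos : (0:ℝ) < n := by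
    have : 0 < n := by omega
    exact_mod_cast this
  have hnA : (4*(d:ℝ)^2 + 100)/α ≤ (n:ℝ) := by
    have h1 := Nat.le_ceil ((4*(d:ℝ)^2 + 100)/α)
    have h2 : (⌈(4*(d:ℝ)^2 + 100)/α⌉₊ : ℝ) ≤ n := by
      exact_mod_cast le_trans (by omega : ⌈(4*(d:ℝ)^2 + 100)/α⌉₊ ≤ ⌈(4*(d:ℝ)^2 + 100)/α⌉₊ + ⌈(4:ℝ)/(1-α)⌉₊ + 100) hn
    linarith
  have hαn : 4*(d:ℝ)^2 + 100 ≤ α * n := by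
    rw [div_le_iff₀ hα0] at hnA
    nlinarith
  have hnB : (4:ℝ) ≤ (1 - α) * n := by
    have h1 := Nat.le_ceil ((4:ℝ)/(1-α))
    have h2 : (⌈(4:ℝ)/(1-α)⌉₊ : ℝ) ≤ n := by
      exact_mod_cast le_trans (by omega : ⌈(4:ℝ)/(1-α)⌉₊ ≤ ⌈(4*(d:ℝ)^2 + 100)/α⌉₊ + ⌈(4:ℝ)/(1-α)⌉₊ + 100) hn
    have h3 : (4:ℝ)/(1-α) ≤ n := le_trans h1 h2
    rw [div_le_iff₀ hα1'] at h3
    nlinarith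
  -- ℕ-size of n versus d
  have hnd : 4*d*d + 100 ≤ n := by
    have h1 : (4*(d:ℝ)^2 + 100) ≤ (n:ℝ) := by nlinarith [hαn]
    have : ((4*d*d + 100 : ℕ) : ℝ) ≤ (n:ℝ) := by push_cast; nlinarith
    exact_mod_cast this
  obtain ⟨dd, hdd⟩ : ∃ q, d * d = q := ⟨_, rfl⟩
  have hnd2 : 4 * dd + 100 ≤ n := by rw [← hdd, ← Nat.mul_assoc]; exact hnd
  -- the partition point
  set h1 : ℕ := if (n / 2) % 3 = 0 then n / 2 - 1 else n / 2 with hh1def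
  have h13 : h1 % 3 ≠ 0 := by rw [hh1def]; split <;> omega
  have h1le : h1 ≤ n / 2 := by rw [hh1def]; split <;> omega
  have h1ge : n / 2 - 1 ≤ h1 := by rw [hh1def]; split <;> omega
  set hh : ℕ := n - h1 with hhhdef
  have hsum : h1 + hh = n := by omega
  have h1h : h1 ≤ hh := by omega
  have hpos : 0 < hh := by omega
  have hhn : hh ≤ n := by omega
  have h1n : h1 ≤ n := by omega
  have hhR : (n:ℝ)/2 ≤ (hh:ℝ) := by
    have : n ≤ 2 * hh := by omega
    have := (Nat.cast_le (α := ℝ)).2 this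
    push_cast at this
    linarith
  have h1R : (n:ℝ)/2 - 2 ≤ (h1:ℝ) := by
    have : n ≤ 2 * h1 + 4 := by omega
    have := (Nat.cast_le (α := ℝ)).2 this
    push_cast at this
    linarith
  -- m
  set m : ℕ := ⌈α * n / 2⌉₊ with hmdef
  have hm_lb : α * n / 2 ≤ (m:ℝ) := Nat.le_ceil _
  have hm_ub : (m:ℝ) < α * n / 2 + 1 := by
    rw [hmdef]
    exact Nat.ceil_lt_add_one (by positivity)
  have hm1 : 1 ≤ m := by
    rw [hmdef]
    apply Nat.one_le_iff_ne_zero.2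
    intro h0
    rw [Nat.ceil_eq_zero] at h0
    nlinarith
  have hmDD : d * d + 2 ≤ m := by
    have h1' : ((d*d + 2 : ℕ):ℝ) ≤ α * n / 2 := by push_cast; nlinarith
    have := h1'.trans hm_lb
    exact_mod_cast this
  have hmh : m < hh := by
    have h1' : (m:ℝ) < (hh:ℝ) := by nlinarith [hm_ub, hhR, hnB]
    exact_mod_cast h1'
  have hmn : (m:ℝ) ≤ n := by
    have t1 : m ≤ n := by omega
    exact_mod_cast t1
  -- the inequality for exists_good
  have hDfinal : (2*hh+1) * (hh / m + 1) ≤ m * d := by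
    have hmpos : 0 < m := hm1
    apply Nat.le_of_mul_le_mul_right _ hmpos
    -- ((2hh+1)*(hh/m+1))*m ≤ (m*d)*m
    have step1 : (2*hh+1) * (hh / m + 1) * m ≤ (2*hh+1) * (hh + m) := by
      have : (hh / m + 1) * m ≤ hh + m := by
        have := Nat.div_mul_le_self hh m
        calc (hh / m + 1) * m = (hh/m)*m + m := by ring
          _ ≤ hh + m := by omega
      calc (2*hh+1) * (hh / m + 1) * m = (2*hh+1) * ((hh / m + 1) * m) := by ring
        _ ≤ (2*hh+1) * (hh + m) := Nat.mul_le_mul_left _ this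
    have step2 : ((2*hh+1) * (hh + m) : ℝ) ≤ 6 * n^2 := by
      have c1 : (hh:ℝ) ≤ n := by exact_mod_cast hhn
      have c2 : (m:ℝ) ≤ (hh:ℝ) := by exact_mod_cast hmh.le
      have c3 : (1:ℝ) ≤ n := by exact_mod_cast (by omega : 1 ≤ n)
      push_cast
      nlinarith
    have step3 : (128:ℝ) * n^2 ≤ (m:ℝ) * d * m := by
      have c1 : (0:ℝ) < α := hα0
      have c2 : α * n / 2 ≤ (m:ℝ) := hm_lb
      have c3 : (512:ℝ)/α^4 ≤ (d:ℝ) := hdR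
      have c4 : (0:ℝ) ≤ α * n / 2 := by positivity
      have c5 : α ≤ 1 := le_of_lt hα1
      have c6 : (0:ℝ) < α^4 := by positivity
      have key : (α * n / 2) * (α * n / 2) * (512/α^4) = 128 * n^2 / α^2 := by
        field_simp
        ring
      have k2 : (128:ℝ) * n^2 ≤ 128 * n^2 / α^2 := by
        rw [le_div_iff₀ (by positivity)]
        nlinarith [sq_nonneg ((n:ℝ))]
      have k3 : (α * n / 2) * (α * n / 2) * (512/α^4) ≤ (m:ℝ) * d * m := by
        have d0 : (0:ℝ) ≤ 512/α^4 := by positivity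
        have m0 : (0:ℝ) ≤ (m:ℝ) := by positivity
        have t1 : (α * n / 2) * (α * n / 2) ≤ (m:ℝ)*(m:ℝ) := mul_le_mul c2 c2 c4 m0
        have t2 : (α * n / 2) * (α * n / 2) * (512/α^4) ≤ ((m:ℝ)*(m:ℝ))*(d:ℝ) :=
          mul_le_mul t1 c3 d0 (by positivity)
        have t3 : ((m:ℝ)*(m:ℝ))*(d:ℝ) = (m:ℝ) * d * m := by ring
        linarith
      linarith [key ▸ k3]
    have final : (((2*hh+1) * (hh / m + 1) * m : ℕ) : ℝ) ≤ ((m * d * m : ℕ) : ℝ) := by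
      calc (((2*hh+1) * (hh / m + 1) * m : ℕ) : ℝ)
          ≤ (((2*hh+1) * (hh + m) : ℕ) : ℝ) := by exact_mod_cast step1
        _ ≤ 6 * (n:ℝ)^2 := by
            push_cast
            push_cast at step2
            linarith
        _ ≤ 128 * (n:ℝ)^2 := by nlinarith [sq_nonneg ((n:ℝ))]
        _ ≤ (m:ℝ) * d * m := step3
        _ = ((m * d * m : ℕ) : ℝ) := by push_cast; ring
    have : (2*hh+1) * (hh / m + 1) * m ≤ m * d * m := by exact_mod_cast final
    exact this
  obtain ⟨σs, hGood⟩ := NoTF.exists_good (h := hh) m d hm1 hmh hDfinal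
  refine ⟨NoTF.G σs hpos h1, ?_, ?_, ?_⟩
  · -- min degree
    intro v
    have hdcast : (512:ℝ) ≤ (d:ℝ) := by exact_mod_cast hd512
    rcases lt_or_ge v.val h1 with hv | hv
    · have hdeg := NoTF.deg1 h1 σs hpos h1h h1n v hv
      have hh1big : d*d + 2 ≤ h1 := by rw [hdd]; omega
      have hcast : ((h1 - 1 - d * d : ℕ) : ℝ) = (h1:ℝ) - 1 - (d:ℝ)*(d:ℝ) := by
        have e1 : (1:ℕ) ≤ h1 := by omega
        have e2 : d*d ≤ h1 - 1 := by rw [hdd]; omega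
        push_cast [Nat.cast_sub e2, Nat.cast_sub e1]
        ring
      have : ((h1 - 1 - d * d : ℕ) : ℝ) ≤ (((NoTF.G σs hpos h1).neighborSet v).ncard : ℝ) := by
        exact_mod_cast hdeg
      rw [hcast] at this
      have hgoal : (n:ℝ)/2 - 2 * (d:ℝ)^2 ≤ (h1:ℝ) - 1 - (d:ℝ)*(d:ℝ) := by
        nlinarith [h1R, hdcast]
      linarith
    · have hdeg := NoTF.deg2 h1 σs hpos h1h hsum v hv
      have hh2big : d*d + 2 ≤ hh := by rw [hdd]; omega
      have hcast : ((hh - 1 - d * d : ℕ) : ℝ) = (hh:ℝ) - 1 - (d:ℝ)*(d:ℝ) := by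
        have e1 : (1:ℕ) ≤ hh := by omega
        have e2 : d*d ≤ hh - 1 := by rw [hdd]; omega
        push_cast [Nat.cast_sub e2, Nat.cast_sub e1]
        ring
      have : ((hh - 1 - d * d : ℕ) : ℝ) ≤ (((NoTF.G σs hpos h1).neighborSet v).ncard : ℝ) := by
        exact_mod_cast hdeg
      rw [hcast] at this
      have hgoal : (n:ℝ)/2 - 2 * (d:ℝ)^2 ≤ (hh:ℝ) - 1 - (d:ℝ)*(d:ℝ) := by
        nlinarith [hhR, hdcast]
      linarith
  · -- hole bound
    intro s U1 U2 hdisj hU1 hU2 hnadj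
    have hs := NoTF.hole_bound h1 σs hpos h1h hsum hGood hmDD U1 U2 hdisj hU1 hU2 hnadj
    have hscast : (s:ℝ) ≤ ((2*m - 2 : ℕ):ℝ) := by exact_mod_cast hs
    have h2m : ((2*m - 2 : ℕ):ℝ) = 2*(m:ℝ) - 2 := by
      have : (2:ℕ) ≤ 2*m := by omega
      push_cast [Nat.cast_sub this]
      ring
    rw [h2m] at hscast
    nlinarith [hm_ub]
  · -- no perfect tiling
    rintro ⟨T, ⟨hcopies, hdisjT⟩, hcover⟩
    have hstep : ∀ S ∈ T, S ⊆ NoTF.H1f (n := n) h1 ∨ S ⊆ NoTF.H2f (n := n) h1 := by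
      intro S hS
      obtain ⟨f, hinj, hadjf, himg⟩ := hcopies S hS
      have htop : ∀ a b : Fin 3, a ≠ b → (⊤ : SimpleGraph (Fin 3)).Adj a b := by
        intro a b hab
        rw [SimpleGraph.top_adj]
        exact hab
      have hxy : (NoTF.G σs hpos h1).Adj (f 0) (f 1) :=
        hadjf 0 1 (htop 0 1 (by decide))
      have hyz : (NoTF.G σs hpos h1).Adj (f 1) (f 2) :=
        hadjf 1 2 (htop 1 2 (by decide))
      have hxz : (NoTF.G σs hpos h1).Adj (f 0) (f 2) :=
        hadjf 0 2 (htop 0 2 (by decide))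
      have htri := NoTF.triangle_side h1 σs hpos hxy hyz hxz
      have hSimg : S = {f 0, f 1, f 2} := by
        rw [← himg]
        have : (univ : Finset (Fin 3)) = {0, 1, 2} := by decide
        rw [this]
        simp [Finset.image_insert]
      rcases htri with ⟨h0, h1', h2⟩ | ⟨h0, h1', h2⟩
      · left
        rw [hSimg]
        intro w hw
        simp only [Finset.mem_insert, Finset.mem_singleton] at hw
        rw [NoTF.H1f, Finset.mem_filter]
        rcases hw with rfl | rfl | rfl
        · exact ⟨Finset.mem_univ _, h0⟩
        · exact ⟨Finset.mem_univ _, h1'⟩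
        · exact ⟨Finset.mem_univ _, h2⟩
      · right
        rw [hSimg]
        intro w hw
        simp only [Finset.mem_insert, Finset.mem_singleton] at hw
        rw [NoTF.H2f, Finset.mem_filter]
        rcases hw with rfl | rfl | rfl
        · exact ⟨Finset.mem_univ _, h0⟩
        · exact ⟨Finset.mem_univ _, h1'⟩
        · exact ⟨Finset.mem_univ _, h2⟩
    set T1 := T.filter (fun S => S ⊆ NoTF.H1f (n := n) h1) with hT1
    have hH1cover : NoTF.H1f (n := n) h1 = T1.biUnion id := by
      ext v
      constructor
      · intro hv
        have hvuniv : v ∈ T.biUnion id := by rw [hcover]; exact Finset.mem_univ v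
        rw [Finset.mem_biUnion] at hvuniv
        obtain ⟨S, hS, hvS⟩ := hvuniv
        rcases hstep S hS with hw | hw
        · rw [Finset.mem_biUnion]
          exact ⟨S, Finset.mem_filter.2 ⟨hS, hw⟩, hvS⟩
        · exfalso
          have h2 := hw hvS
          rw [NoTF.H2f, Finset.mem_filter] at h2
          rw [NoTF.H1f, Finset.mem_filter] at hv
          omega
      · intro hv
        rw [Finset.mem_biUnion] at hv
        obtain ⟨S, hS, hvS⟩ := hv
        rw [hT1, Finset.mem_filter] at hS
        exact hS.2 hvS
    have hcard3 : ∀ S ∈ T1, S.card = 3 := by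
      intro S hS
      rw [hT1, Finset.mem_filter] at hS
      obtain ⟨f, hinj, -, himg⟩ := hcopies S hS.1
      rw [← himg, Finset.card_image_of_injective _ hinj, Finset.card_univ, Fintype.card_fin]
    have hdvd : h1 = 3 * T1.card := by
      have hdisj1 : ∀ S ∈ T1, ∀ S' ∈ T1, S ≠ S' → Disjoint (id S) (id S') := by
        intro S hS S' hS' hne
        rw [hT1, Finset.mem_filter] at hS hS'
        exact hdisjT S hS.1 S' hS'.1 hne
      calc h1 = (NoTF.H1f (n := n) h1).card := (NoTF.card_H1f h1 h1n).symm
        _ = (T1.biUnion id).card := by rw [hH1cover]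
        _ = ∑ S ∈ T1, (id S).card := Finset.card_biUnion hdisj1
        _ = ∑ S ∈ T1, 3 := Finset.sum_congr rfl (fun S hS => hcard3 S hS)
        _ = 3 * T1.card := by rw [Finset.sum_const, smul_eq_mul]; ring
    omega
end

section
/- Fix integers k, r with k ≥ 3, a k-vertex graph F and a constant η > 0 such that one of the following holds: (1) F = K_k and r = k; (2) F = K_k, r = k−1 and η ≥ 1/k; (3) F is a tree on k vertices and r = 2; (4) F = C_k, r = 2 and η ≥ 1/k. Then for any δ, μ > 0 there exists α > 0 such that the following holds for all sufficiently large n ∈ ℕ: if G is an n-vertex graph with minimum degree δ(G) ≥ (η+μ)n and α_r(G) ≤ αn, then G contains an F-tiling covering all but at most δn vertices. -/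
open scoped Classical
set_option maxHeartbeats 1600000


open Finset

namespace RTT

variable {k n : ℕ}

lemma SpansCopy.card_eq {F : SimpleGraph (Fin k)} {G : SimpleGraph (Fin n)}
    {S : Finset (Fin n)} (h : SpansCopy F G S) : S.card = k := by
  obtain ⟨f, hinj, -, himg⟩ := h
  rw [← himg, card_image_of_injective _ hinj, card_univ, Fintype.card_fin]

lemma clique_spansCopy {G : SimpleGraph (Fin n)} {S : Finset (Fin n)}
    (h : G.IsNClique k S) : SpansCopy (⊤ : SimpleGraph (Fin k)) G S := by
  refine ⟨fun i => (S.orderIsoOfFin h.2 i : Fin n), ?_, ?_, ?_⟩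
  · intro a b hab
    have := (S.orderIsoOfFin h.2).injective (Subtype.ext hab)
    exact this
  · intro a b hab
    refine h.1 ?_ ?_ ?_
    · exact (S.orderIsoOfFin h.2 a).2
    · exact (S.orderIsoOfFin h.2 b).2
    · intro hc
      exact hab.ne ((S.orderIsoOfFin h.2).injective (Subtype.ext hc))
  · ext x
    simp only [mem_image, mem_univ, true_and]
    constructor
    · rintro ⟨a, rfl⟩; exact (S.orderIsoOfFin h.2 a).2
    · intro hx
      obtain ⟨a, ha⟩ := (S.orderIsoOfFin h.2).surjective ⟨x, hx⟩
      exact ⟨a, by rw [ha]⟩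

/-- Degeneracy dichotomy: a set either contains a nonempty subset of internal min degree
`≥ d`, or it contains an independent set `I` with `S.card ≤ d * I.card`. -/
lemma mindeg_or_indep (G : SimpleGraph (Fin n)) (d : ℕ) (S : Finset (Fin n)) :
    (∃ S' ⊆ S, S'.Nonempty ∧ ∀ v ∈ S', d ≤ (S'.filter (G.Adj v)).card) ∨
    (∃ I ⊆ S, (∀ a ∈ I, ∀ b ∈ I, ¬ G.Adj a b) ∧ S.card ≤ d * I.card) := by
  classical
  induction S using Finset.strongInduction with
  | _ S ih =>
    rcases S.eq_empty_or_nonempty with rfl | hne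
    · exact Or.inr ⟨∅, Subset.rfl, by simp, by simp⟩
    by_cases hall : ∀ v ∈ S, d ≤ (S.filter (G.Adj v)).card
    · exact Or.inl ⟨S, Subset.rfl, hne, hall⟩
    push_neg at hall
    obtain ⟨v, hvS, hvd⟩ := hall
    set S₂ := S \ insert v (S.filter (G.Adj v)) with hS₂
    have hss : S₂ ⊂ S := by
      refine Finset.ssubset_iff_of_subset (sdiff_subset) |>.2 ⟨v, hvS, ?_⟩
      simp [hS₂]
    rcases ih S₂ hss with h | h
    · obtain ⟨S', hsub, h1, h2⟩ := h
      exact Or.inl ⟨S', hsub.trans (hss.subset), h1, h2⟩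
    · obtain ⟨I, hIsub, hIind, hIcard⟩ := h
      have hvI : v ∉ I := fun hvI => by
        have := hIsub hvI
        simp [hS₂] at this
      refine Or.inr ⟨insert v I, ?_, ?_, ?_⟩
      · exact insert_subset hvS (hIsub.trans sdiff_subset)
      · have key : ∀ x ∈ I, ¬ G.Adj v x := by
          intro x hx hadj
          have := hIsub hx
          simp only [hS₂, mem_sdiff, mem_insert, mem_filter] at this
          exact this.2 (Or.inr ⟨this.1, hadj⟩)
        intro a ha b hb hab
        rcases mem_insert.1 ha with ha' | ha'
        · rcases mem_insert.1 hb with hb' | hb'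
          · exact G.irrefl (ha' ▸ hb' ▸ hab)
          · exact key b hb' (ha' ▸ hab)
        · rcases mem_insert.1 hb with hb' | hb'
          · exact key a ha' (hb' ▸ hab).symm
          · exact hIind a ha' b hb' hab
      · have h1 : S.card ≤ S₂.card + d := by
          have : S ⊆ S₂ ∪ insert v (S.filter (G.Adj v)) := by
            intro x hx
            by_cases hx2 : x ∈ insert v (S.filter (G.Adj v))
            · exact mem_union.2 (Or.inr hx2)
            · exact mem_union.2 (Or.inl (mem_sdiff.2 ⟨hx, hx2⟩))
          calc S.card ≤ (S₂ ∪ insert v (S.filter (G.Adj v))).card := card_le_card this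
            _ ≤ S₂.card + (insert v (S.filter (G.Adj v))).card := card_union_le _ _
            _ ≤ S₂.card + (1 + (S.filter (G.Adj v)).card) := by
                exact Nat.add_le_add_left (card_insert_le _ _ |>.trans (by omega)) _
            _ ≤ S₂.card + d := by
                have : (S.filter (G.Adj v)).card ≤ d - 1 := by omega
                omega
        rw [card_insert_of_notMem hvI, Nat.mul_add, Nat.mul_one]
        omega

/-- In a set of internal min degree `≥ d` one finds paths on up to `d+1` vertices. -/
lemma exists_path_list (G : SimpleGraph (Fin n)) (d : ℕ) (S' : Finset (Fin n))
    (hne : S'.Nonempty) (hdeg : ∀ v ∈ S', d ≤ (S'.filter (G.Adj v)).card) :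
    ∀ m, m ≤ d + 1 → ∃ l : List (Fin n), l.length = m ∧ l.Nodup ∧
      (∀ x ∈ l, x ∈ S') ∧ l.Chain' G.Adj := by
  intro m
  induction m with
  | zero => exact fun _ => ⟨[], by simp; exact List.isChain_nil⟩
  | succ m ihm =>
    intro hm
    obtain ⟨l, hlen, hnd, hmem, hch⟩ := ihm (by omega)
    cases l with
    | nil =>
      obtain ⟨v, hv⟩ := hne
      have hm0 : m = 0 := by simpa using hlen.symm
      subst hm0
      exact ⟨[v], by simp, by simp, by simp [hv], List.isChain_singleton v⟩
    | cons x t =>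
      have hm' : 1 ≤ m := by
        have := hlen; simp at this; omega
      have hxS : x ∈ S' := hmem x (by simp)
      have hcard : (x :: t : List (Fin n)).toFinset.card ≤ m := by
        calc _ ≤ (x :: t : List (Fin n)).length := (x :: t).toFinset_card_le
        _ = m := hlen
      have hbig : ((S'.filter (G.Adj x)) \ (x :: t : List (Fin n)).toFinset).Nonempty := by
        rw [← Finset.card_pos]
        have h1 : d ≤ (S'.filter (G.Adj x)).card := hdeg x hxS
        have hxnot : x ∉ S'.filter (G.Adj x) := by simp
        have h2 : ((S'.filter (G.Adj x)) ∩ (x :: t : List (Fin n)).toFinset).card ≤ m - 1 := by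
          have hsub : (S'.filter (G.Adj x)) ∩ (x :: t : List (Fin n)).toFinset ⊆
              (x :: t : List (Fin n)).toFinset.erase x := by
            intro y hy
            rcases Finset.mem_inter.1 hy with ⟨hy1, hy2⟩
            refine Finset.mem_erase.2 ⟨?_, hy2⟩
            rintro rfl; exact hxnot hy1
          calc _ ≤ ((x :: t : List (Fin n)).toFinset.erase x).card := card_le_card hsub
            _ = (x :: t : List (Fin n)).toFinset.card - 1 :=
                Finset.card_erase_of_mem (by simp)
            _ ≤ m - 1 := by omega
        have h3 := Finset.card_sdiff_add_card_inter (S'.filter (G.Adj x))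
          (x :: t : List (Fin n)).toFinset
        omega
      obtain ⟨y, hy⟩ := hbig
      rw [Finset.mem_sdiff, Finset.mem_filter] at hy
      refine ⟨y :: x :: t, by simpa using hlen, ?_, ?_, ?_⟩
      · refine List.nodup_cons.2 ⟨?_, hnd⟩
        intro hyl
        exact hy.2 (List.mem_toFinset.2 hyl)
      · intro z hz
        rcases List.mem_cons.1 hz with rfl | hz
        · exact hy.1.1
        · exact hmem z hz
      · exact List.isChain_cons.2 ⟨fun z hz => by
          have : z = x := by cases hz; rfl  -- head? of (x::t) = some x
          exact this ▸ hy.1.2.symm, hch⟩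

lemma exists_max_tiling (F : SimpleGraph (Fin k)) (G : SimpleGraph (Fin n)) :
    ∃ T, IsTiling F G T ∧ ∀ T', IsTiling F G T' → T'.card ≤ T.card := by
  have hne : ((univ : Finset (Finset (Finset (Fin n)))).filter (fun T => IsTiling F G T)).Nonempty :=
    ⟨∅, Finset.mem_filter.2 ⟨mem_univ _, by simp [IsTiling]⟩⟩
  obtain ⟨T, hT, hmax⟩ := Finset.exists_max_image _ (fun T => T.card) hne
  rw [Finset.mem_filter] at hT
  exact ⟨T, hT.2, fun T' hT' => hmax T' (Finset.mem_filter.2 ⟨mem_univ _, hT'⟩)⟩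

lemma tiling_insert {F : SimpleGraph (Fin k)} {G : SimpleGraph (Fin n)}
    {T : Finset (Finset (Fin n))} {S : Finset (Fin n)} (hk : 0 < k)
    (hT : IsTiling F G T) (hS : SpansCopy F G S)
    (hdisj : ∀ Q ∈ T, Disjoint S Q) :
    IsTiling F G (insert S T) ∧ (insert S T).card = T.card + 1 := by
  have hSne : S.Nonempty := by
    rw [← Finset.card_pos, hS.card_eq]; exact hk
  have hSnotin : S ∉ T := by
    intro hmem
    have hSe : S = ∅ := by simpa using (hdisj S hmem)
    exact hSne.ne_empty hSe
  constructor
  · constructor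
    · intro Q hQ
      rcases mem_insert.1 hQ with rfl | hQ
      · exact hS
      · exact hT.1 Q hQ
    · intro Q hQ Q' hQ' hne
      rcases mem_insert.1 hQ with hq | hq
      · rcases mem_insert.1 hQ' with hq' | hq'
        · exact absurd (hq.trans hq'.symm) hne
        · exact hq ▸ hdisj Q' hq'
      · rcases mem_insert.1 hQ' with hq' | hq'
        · exact hq' ▸ (hdisj Q hq).symm
        · exact hT.2 Q hq Q' hq' hne
  · rw [card_insert_of_notMem hSnotin]

lemma tiling_subset {F : SimpleGraph (Fin k)} {G : SimpleGraph (Fin n)}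
    {T T' : Finset (Finset (Fin n))} (h : T' ⊆ T) (hT : IsTiling F G T) :
    IsTiling F G T' :=
  ⟨fun S hS => hT.1 S (h hS), fun S hS S' hS' => hT.2 S (h hS) S' (h hS')⟩

lemma tree_unique_nbr {F : SimpleGraph (Fin k)} (hac : F.IsAcyclic)
    {s : Finset (Fin k)} {b a c : Fin k}
    (hconn : ∀ x ∈ s, ∀ y ∈ s, ∃ w : F.Walk x y, ∀ z ∈ w.support, z ∈ s)
    (hb : b ∉ s) (ha : a ∈ s) (hc : c ∈ s)
    (hba : F.Adj b a) (hbc : F.Adj b c) : c = a := by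
  by_contra hne
  obtain ⟨w, hw⟩ := hconn a ha c hc
  set p := w.toPath with hp
  have hpsup : ∀ z ∈ (p : F.Walk a c).support, z ∈ s := fun z hz =>
    hw z (SimpleGraph.Walk.support_toPath_subset w hz)
  have hbp : b ∉ (p : F.Walk a c).support := fun hmem => hb (hpsup b hmem)
  have hq1 : (SimpleGraph.Walk.cons hba (p : F.Walk a c)).IsPath :=
    (p.2).cons hbp
  have hq2 : (SimpleGraph.Walk.cons hbc SimpleGraph.Walk.nil).IsPath := by
    simp [SimpleGraph.Walk.isPath_iff_eq_nil, hbc.ne]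
  have := SimpleGraph.isAcyclic_iff_path_unique.mp hac
    ⟨SimpleGraph.Walk.cons hba (p : F.Walk a c), hq1⟩
    ⟨SimpleGraph.Walk.cons hbc SimpleGraph.Walk.nil, hq2⟩
  have hlen := congrArg (fun q : F.Path b c => (q : F.Walk b c).length) this
  simp only [SimpleGraph.Walk.length_cons, SimpleGraph.Walk.length_nil] at hlen
  have : (p : F.Walk a c).length ≠ 0 := by
    intro h0
    exact hne (SimpleGraph.Walk.eq_of_length_eq_zero h0).symm
  omega

lemma tree_embed {F : SimpleGraph (Fin k)} {G : SimpleGraph (Fin n)}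
    (htree : F.IsTree) (hk : 0 < k) (S' : Finset (Fin n)) (hne : S'.Nonempty)
    (hdeg : ∀ v ∈ S', k - 1 ≤ (S'.filter (G.Adj v)).card) :
    ∃ f : Fin k → Fin n, Function.Injective f ∧
      (∀ a b, F.Adj a b → G.Adj (f a) (f b)) ∧ ∀ a, f a ∈ S' := by
  have key : ∀ m : ℕ, ∀ (s : Finset (Fin k)) (f : Fin k → Fin n),
      s.Nonempty → s.card + m = k →
      (∀ a ∈ s, f a ∈ S') → Set.InjOn f ↑s →
      (∀ a ∈ s, ∀ b ∈ s, F.Adj a b → G.Adj (f a) (f b)) →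
      (∀ x ∈ s, ∀ y ∈ s, ∃ w : F.Walk x y, ∀ z ∈ w.support, z ∈ s) →
      ∃ g : Fin k → Fin n, Function.Injective g ∧
        (∀ a b, F.Adj a b → G.Adj (g a) (g b)) ∧ ∀ a, g a ∈ S' := by
    intro m
    induction m with
    | zero =>
      intro s f hsne hcard hmem hinj hhom _
      have hsu : s = univ := by
        apply Finset.eq_univ_of_card
        simpa using hcard
      subst hsu
      refine ⟨f, ?_, ?_, ?_⟩
      · intro a b hab
        exact hinj (by simp) (by simp) hab
      · intro a b hab
        exact hhom a (mem_univ a) b (mem_univ b) hab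
      · intro a; exact hmem a (mem_univ a)
    | succ m ihm =>
      intro s f hsne hcard hmem hinj hhom hconn
      -- find a boundary edge (a ∈ s) -- (b ∉ s)
      have hssub : s ≠ univ := by
        intro h
        rw [h] at hcard
        simp only [card_univ, Fintype.card_fin] at hcard
        omega
      obtain ⟨b₀, hb₀⟩ : ∃ b₀, b₀ ∉ s := by
        by_contra h
        push_neg at h
        exact hssub (Finset.eq_univ_of_forall h)
      obtain ⟨a₀, ha₀⟩ := hsne
      obtain ⟨w⟩ := htree.isConnected a₀ b₀
      obtain ⟨d, -, hdfst, hdsnd⟩ := w.exists_boundary_dart ↑s ha₀ hb₀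
      set a := d.fst
      set b := d.snd
      have hdadj : F.Adj a b := d.adj
      have ha : a ∈ s := hdfst
      have hb : b ∉ s := hdsnd
      -- choose the image of b
      have hfa : f a ∈ S' := hmem a ha
      have hbig : ((S'.filter (G.Adj (f a))) \ s.image f).Nonempty := by
        rw [← Finset.card_pos]
        have h1 : k - 1 ≤ (S'.filter (G.Adj (f a))).card := hdeg _ hfa
        have hxnot : f a ∉ S'.filter (G.Adj (f a)) := by simp
        have h2 : ((S'.filter (G.Adj (f a))) ∩ s.image f).card ≤ s.card - 1 := by
          have hsub : (S'.filter (G.Adj (f a))) ∩ s.image f ⊆ (s.image f).erase (f a) := by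
            intro y hy
            rcases Finset.mem_inter.1 hy with ⟨hy1, hy2⟩
            refine Finset.mem_erase.2 ⟨?_, hy2⟩
            rintro rfl; exact hxnot hy1
          calc _ ≤ ((s.image f).erase (f a)).card := card_le_card hsub
            _ = (s.image f).card - 1 :=
                Finset.card_erase_of_mem (mem_image_of_mem f ha)
            _ ≤ s.card - 1 := by
                have := Finset.card_image_le (s := s) (f := f)
                omega
        have h3 := Finset.card_sdiff_add_card_inter (S'.filter (G.Adj (f a))) (s.image f)
        have hsc : s.card ≤ k - 1 := by omega
        have hsc1 : 1 ≤ s.card := Finset.card_pos.2 ⟨a₀, ha₀⟩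
        omega
      obtain ⟨y, hy⟩ := hbig
      rw [Finset.mem_sdiff, Finset.mem_filter] at hy
      set g := Function.update f b y with hg
      have hgs : ∀ x ∈ s, g x = f x := by
        intro x hx
        apply Function.update_of_ne
        rintro rfl; exact hb hx
      have hgb : g b = y := Function.update_self _ _ _
      -- invariants for insert b s
      refine ihm (insert b s) g ⟨b, mem_insert_self b s⟩ ?_ ?_ ?_ ?_ ?_
      · rw [card_insert_of_notMem hb]; omega
      · intro x hx
        rcases mem_insert.1 hx with rfl | hx
        · rw [hgb]; exact hy.1.1
        · rw [hgs x hx]; exact hmem x hx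
      · intro x hx y' hy' hxy
        simp only [coe_insert, Set.mem_insert_iff, mem_coe] at hx hy'
        rcases hx with rfl | hx
        · rcases hy' with rfl | hy'
          · rfl
          · exfalso
            rw [hgb, hgs _ hy'] at hxy
            exact hy.2 (hxy ▸ mem_image_of_mem f hy')
        · rcases hy' with rfl | hy'
          · exfalso
            rw [hgb, hgs _ hx] at hxy
            exact hy.2 (hxy ▸ mem_image_of_mem f hx)
          · exact hinj hx hy' (by rwa [hgs _ hx, hgs _ hy'] at hxy)
      · intro x hx z hz hadj
        rcases mem_insert.1 hx with rfl | hx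
        · rcases mem_insert.1 hz with rfl | hz
          · exact absurd hadj F.irrefl
          · have : z = a := tree_unique_nbr htree.IsAcyclic hconn hb ha hz hdadj.symm hadj
            subst this
            rw [hgb, hgs _ ha]
            exact (hy.1.2).symm
        · rcases mem_insert.1 hz with rfl | hz
          · have : x = a := tree_unique_nbr htree.IsAcyclic hconn hb ha hx hdadj.symm hadj.symm
            subst this
            rw [hgb, hgs _ ha]
            exact hy.1.2
          · rw [hgs _ hx, hgs _ hz]
            exact hhom x hx z hz hadj
      · intro x hx z hz
        rcases mem_insert.1 hx with rfl | hx
        · rcases mem_insert.1 hz with rfl | hz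
          · exact ⟨SimpleGraph.Walk.nil, by simp⟩
          · obtain ⟨w', hw'⟩ := hconn a ha z hz
            refine ⟨SimpleGraph.Walk.cons hdadj.symm w', ?_⟩
            intro u hu
            rw [SimpleGraph.Walk.support_cons] at hu
            rcases List.mem_cons.1 hu with h | h
            · exact h ▸ mem_insert_self b s
            · exact mem_insert_of_mem (hw' u h)
        · rcases mem_insert.1 hz with rfl | hz
          · obtain ⟨w', hw'⟩ := hconn x hx a ha
            refine ⟨w'.concat hdadj, ?_⟩
            intro u hu
            rw [SimpleGraph.Walk.support_concat] at hu
            rcases (by simpa [List.concat_eq_append] using hu : u ∈ w'.support ∨ u = b) with h | h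
            · exact mem_insert_of_mem (hw' u h)
            · exact h ▸ mem_insert_self b s
          · obtain ⟨w', hw'⟩ := hconn x hx z hz
            exact ⟨w', fun u hu => mem_insert_of_mem (hw' u hu)⟩
  -- start the induction
  obtain ⟨v₀, hv₀⟩ := hne
  have h1 : ({(⟨0, hk⟩ : Fin k)} : Finset (Fin k)).Nonempty := ⟨_, mem_singleton_self _⟩
  refine key (k - 1) {(⟨0, hk⟩ : Fin k)} (fun _ => v₀) h1 ?_ ?_ ?_ ?_ ?_
  · simp; omega
  · intro a _; exact hv₀
  · intro x hx y' hy' _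
    simp at hx hy'; rw [hx, hy']
  · intro a ha' b hb' hadj
    simp at ha' hb'
    rw [ha', hb'] at hadj
    exact absurd hadj F.irrefl
  · intro x hx y' hy'
    simp at hx hy'
    subst hx; subst hy'
    exact ⟨SimpleGraph.Walk.nil, by simp⟩

lemma cycle_copy (hk : 3 ≤ k) {G : SimpleGraph (Fin n)} {v : Fin n} {D : Finset (Fin n)}
    (hD : ∀ x ∈ D, G.Adj v x) (l : List (Fin n)) (hlen : l.length = k - 1) (hnd : l.Nodup)
    (hmem : ∀ x ∈ l, x ∈ D) (hch : l.Chain' G.Adj) :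
    SpansCopy (SimpleGraph.cycleGraph k) G (insert v l.toFinset) := by
  haveI : NeZero k := ⟨by omega⟩
  have hvD : v ∉ l := by
    intro hv
    exact G.irrefl (hD v (hmem v hv))
  set l' : List (Fin n) := v :: l with hl'
  have hlen' : l'.length = k := by simp [hl', hlen]; omega
  have hnd' : l'.Nodup := List.nodup_cons.2 ⟨hvD, hnd⟩
  have hch' : l'.Chain' G.Adj := by
    rw [hl']; show List.IsChain G.Adj (v :: l); rw [List.isChain_cons]
    refine ⟨?_, hch⟩
    intro y hy
    cases l with
    | nil => simp at hy
    | cons z t =>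
      have : y = z := by cases hy; rfl
      exact this ▸ hD z (hmem z (by simp))
  set g : Fin k → Fin n := fun i => l'.get ⟨i.val, by rw [hlen']; exact i.isLt⟩ with hg
  have hginj : Function.Injective g := by
    intro a b hab
    have h2 := congrArg Fin.val ((List.nodup_iff_injective_get.1 hnd') hab)
    exact Fin.ext h2
  have hget := List.isChain_iff_getElem.1 hch'
  have hstep : ∀ a : Fin k, G.Adj (g a) (g (a + 1)) := by
    intro a
    have hval : (a + 1).val = (a.val + 1) % k := by
      rw [Fin.add_def, Fin.val_one', Nat.mod_eq_of_lt (by omega : (1:ℕ) < k)]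
    by_cases hlt : a.val + 1 < k
    · have h1 : (a + 1).val = a.val + 1 := by rw [hval, Nat.mod_eq_of_lt hlt]
      have := hget a.val (by omega)
      simp only [hg]
      convert this using 2
      all_goals simp [h1]
    · -- a.val = k - 1, wrap around to 0
      have hak : a.val = k - 1 := by have := a.isLt; omega
      have h0 : (a + 1).val = 0 := by
        rw [hval, hak, (by omega : k - 1 + 1 = k)]
        exact Nat.mod_self k
      have hlast : G.Adj v (l'.get ⟨a.val, by rw [hlen']; exact a.isLt⟩) := by
        have : l'.get ⟨a.val, by rw [hlen']; exact a.isLt⟩ ∈ l := by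
          have hmm : l'.get ⟨a.val, by rw [hlen']; exact a.isLt⟩ ∈ l' := List.get_mem _ _
          rcases List.mem_cons.1 hmm with h | h
          · exfalso
            have hne := List.nodup_cons.1 hnd' |>.1
            -- a.val ≥ 1 since k ≥ 3, so get at a.val ≠ head v... use nodup
            have : l'.get ⟨a.val, by rw [hlen']; exact a.isLt⟩ =
                l'.get ⟨0, by rw [hlen']; omega⟩ := by
              rw [h]; rfl
            have := (List.nodup_iff_injective_get.1 hnd') this
            simp only [Fin.mk.injEq] at this
            omega
          · exact h
        exact hD _ (hmem _ this)
      have : g (a + 1) = v := by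
        simp only [hg]
        have : (⟨(a+1).val, by rw [hlen']; exact (a+1).isLt⟩ : Fin l'.length) =
            ⟨0, by rw [hlen']; omega⟩ := by
          simp [h0]
        rw [this]; rfl
      rw [this]
      exact hlast.symm
  refine ⟨g, hginj, ?_, ?_⟩
  · intro a b hab
    rw [SimpleGraph.cycleGraph_adj'] at hab
    rcases hab with h | h
    · have hab' : a = b + 1 := by
        have h1 : a - b = 1 := by
          apply Fin.ext
          rw [Fin.val_one', Nat.mod_eq_of_lt (by omega : (1:ℕ) < k)]
          exact h
        have := sub_eq_iff_eq_add.1 h1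
        rw [this, add_comm]
      rw [hab']
      exact (hstep b).symm
    · have hab' : b = a + 1 := by
        have h1 : b - a = 1 := by
          apply Fin.ext
          rw [Fin.val_one', Nat.mod_eq_of_lt (by omega : (1:ℕ) < k)]
          exact h
        have := sub_eq_iff_eq_add.1 h1
        rw [this, add_comm]
      rw [hab']
      exact hstep a
  · ext x
    simp only [mem_image, mem_univ, true_and, mem_insert, List.mem_toFinset]
    constructor
    · rintro ⟨a, rfl⟩
      have : g a ∈ l' := List.get_mem _ _
      rcases List.mem_cons.1 this with h | h
      · exact Or.inl h
      · exact Or.inr h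
    · intro hx
      have hx' : x ∈ l' := by
        rcases hx with rfl | hx
        · exact List.mem_cons_self
        · exact List.mem_cons_of_mem _ hx
      obtain ⟨i, hi⟩ := List.mem_iff_get.1 hx'
      refine ⟨⟨i.val, by rw [← hlen']; exact i.isLt⟩, ?_⟩
      simp only [hg]
      convert hi

lemma skeletonA (F : SimpleGraph (Fin k)) (G : SimpleGraph (Fin n)) (hk : 0 < k) (β : ℝ)
    (hyp : ∀ U' : Finset (Fin n), β < (U'.card : ℝ) →
      ∃ S, S ⊆ U' ∧ SpansCopy F G S) :
    ∃ T : Finset (Finset (Fin n)), IsTiling F G T ∧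
      ((Finset.univ \ T.biUnion id).card : ℝ) ≤ β := by
  obtain ⟨T, hT, hmax⟩ := exists_max_tiling F G
  refine ⟨T, hT, ?_⟩
  by_contra hlarge
  push_neg at hlarge
  obtain ⟨S, hSU, hS⟩ := hyp _ hlarge
  have hdisj : ∀ Q ∈ T, Disjoint S Q := by
    intro Q hQ
    have h1 : Q ⊆ T.biUnion id := fun x hx => Finset.mem_biUnion.2 ⟨Q, hQ, hx⟩
    have h2 : Disjoint (Finset.univ \ T.biUnion id) Q :=
      (Finset.sdiff_disjoint).mono_right h1
    exact Finset.disjoint_of_subset_left hSU h2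
  obtain ⟨h1, h2⟩ := tiling_insert hk hT hS hdisj
  have := hmax _ h1
  omega

lemma skeletonB (F : SimpleGraph (Fin k)) (G : SimpleGraph (Fin n)) (hk : 3 ≤ k)
    (μ c β : ℝ) (hμ : 0 < μ) (hc : 0 ≤ c)
    (hmindeg : ∀ v : Fin n, (1/(k:ℝ) + μ) * n ≤ ((G.neighborFinset v).card : ℝ))
    (hcμ : c ≤ μ * n / 2)
    (hβ : c + k ≤ μ * β / 2)
    (gadget : ∀ v : Fin n, ∀ D : Finset (Fin n), (∀ x ∈ D, G.Adj v x) → c < (D.card : ℝ) →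
      ∃ S : Finset (Fin n), S ⊆ D ∧ S.card = k - 1 ∧ SpansCopy F G (insert v S)) :
    ∃ T : Finset (Finset (Fin n)), IsTiling F G T ∧
      ((Finset.univ \ T.biUnion id).card : ℝ) ≤ β := by
  have hkR : (3:ℝ) ≤ (k:ℝ) := by exact_mod_cast hk
  obtain ⟨T, hT, hmax⟩ := exists_max_tiling F G
  refine ⟨T, hT, ?_⟩
  by_contra hlarge
  push_neg at hlarge
  set cov := T.biUnion id with hcov
  set U := Finset.univ \ cov with hU
  -- tiles are disjoint from U
  have hUQ : ∀ Q ∈ T, Disjoint Q U := by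
    intro Q hQ
    have h1 : Q ⊆ cov := fun x hx => Finset.mem_biUnion.2 ⟨Q, hQ, hx⟩
    exact (Finset.sdiff_disjoint.mono_right h1).symm
  have noextend : ∀ S, SpansCopy F G S → (∀ Q ∈ T, Disjoint S Q) → False := by
    intro S hS hdisj
    obtain ⟨h1, h2⟩ := tiling_insert (by omega) hT hS hdisj
    have := hmax _ h1
    omega
  have noswap : ∀ Q ∈ T, ∀ A B : Finset (Fin n), SpansCopy F G A → SpansCopy F G B →
      Disjoint A B → (∀ Q' ∈ T.erase Q, Disjoint A Q') →
      (∀ Q' ∈ T.erase Q, Disjoint B Q') → False := by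
    intro Q hQ A B hA hB hAB hAd hBd
    obtain ⟨hT1, hc1⟩ := tiling_insert (by omega : 0 < k)
      (tiling_subset (erase_subset Q T) hT) hB hBd
    have hAd' : ∀ Q' ∈ insert B (T.erase Q), Disjoint A Q' := by
      intro Q' hQ'
      rcases mem_insert.1 hQ' with h | h
      · exact h ▸ hAB
      · exact hAd Q' h
    obtain ⟨hT2, hc2⟩ := tiling_insert (by omega : 0 < k) hT1 hA hAd'
    have hcQ : (T.erase Q).card = T.card - 1 := card_erase_of_mem hQ
    have hTpos : 1 ≤ T.card := card_pos.2 ⟨Q, hQ⟩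
    have := hmax _ hT2
    omega
  -- Step 0
  have step0 : ∀ u ∈ U, ((U.filter (G.Adj u)).card : ℝ) ≤ c := by
    intro u hu
    by_contra h
    push_neg at h
    obtain ⟨S, hSD, hScard, hScopy⟩ := gadget u (U.filter (G.Adj u))
      (fun x hx => (mem_filter.1 hx).2) h
    apply noextend _ hScopy
    intro Q hQ
    have hsub : insert u S ⊆ U :=
      insert_subset hu (hSD.trans (filter_subset _ _))
    exact (Finset.disjoint_of_subset_right hsub (hUQ Q hQ)).symm
  -- positivity
  have hβpos : 0 < β := by nlinarith
  have hUne : U.Nonempty := by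
    rw [← Finset.card_pos]
    have h0 : (0:ℝ) < (U.card : ℝ) := lt_trans hβpos hlarge
    exact_mod_cast h0
  have hn : 0 < n := Fin.pos hUne.choose
  have hnR : (0:ℝ) < n := by exact_mod_cast hn
  -- T is nonempty
  have hTne : T.Nonempty := by
    rcases T.eq_empty_or_nonempty with rfl | h
    · obtain ⟨u, hu⟩ := hUne
      have hUuniv : U = Finset.univ := by simp [hU, hcov]
      have h1 := step0 u hu
      have h2 : G.neighborFinset u = U.filter (G.Adj u) := by
        rw [hUuniv, SimpleGraph.neighborFinset_eq_filter]
      have h3 := hmindeg u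
      rw [h2] at h3
      have : (1/(k:ℝ)) * n ≥ 0 := by positivity
      nlinarith
    · exact h
  -- every tile has k vertices and k * T.card ≤ n
  have htilecard : ∀ Q ∈ T, Q.card = k := fun Q hQ => (hT.1 Q hQ).card_eq
  have hkm : k * T.card ≤ n := by
    have h1 : cov.card = ∑ Q ∈ T, Q.card := Finset.card_biUnion (fun x hx y hy hxy => hT.2 x hx y hy hxy)
    have h2 : ∑ Q ∈ T, Q.card = k * T.card := by
      rw [Finset.sum_congr rfl htilecard]
      simp [mul_comm]
    have h3 : cov.card ≤ n := by
      have := Finset.card_le_card (Finset.subset_univ cov)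
      simpa using this
    omega
  -- degree decomposition
  have hdegsplit : ∀ u : Fin n, (G.neighborFinset u).card
      = (cov.filter (G.Adj u)).card + (U.filter (G.Adj u)).card := by
    intro u
    rw [SimpleGraph.neighborFinset_eq_filter]
    have huniv : (Finset.univ : Finset (Fin n)) = cov ∪ U := by
      rw [hU, Finset.union_sdiff_of_subset (Finset.subset_univ cov)]
    rw [huniv, Finset.filter_union]
    exact Finset.card_union_of_disjoint
      ((Finset.disjoint_filter_filter (Finset.disjoint_sdiff)))
  -- the weight function
  set A : Finset (Fin n) → ℝ := fun Q => ∑ u ∈ U, ((Q.filter (G.Adj u)).card : ℝ) with hA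
  have hsumA : ∑ Q ∈ T, A Q = ∑ u ∈ U, ((cov.filter (G.Adj u)).card : ℝ) := by
    rw [Finset.sum_comm]
    apply Finset.sum_congr rfl
    intro u _
    have h1 : cov.filter (G.Adj u) = T.biUnion (fun Q => Q.filter (G.Adj u)) := by
      rw [hcov, Finset.filter_biUnion]
      rfl
    rw [h1, Finset.card_biUnion]
    · push_cast; rfl
    · intro x hx y hy hxy
      exact Finset.disjoint_filter_filter (hT.2 x hx y hy hxy)
  -- lower bound on the total weight
  have hW : (U.card : ℝ) * ((1/(k:ℝ) + μ) * n - c) ≤ ∑ Q ∈ T, A Q := by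
    rw [hsumA]
    have h1 : ∀ u ∈ U, (1/(k:ℝ) + μ) * n - c ≤ ((cov.filter (G.Adj u)).card : ℝ) := by
      intro u hu
      have h2 := hmindeg u
      have h3 := step0 u hu
      have h4 := hdegsplit u
      have h5 : ((G.neighborFinset u).card : ℝ)
          = ((cov.filter (G.Adj u)).card : ℝ) + ((U.filter (G.Adj u)).card : ℝ) := by
        exact_mod_cast h4
      linarith
    calc (U.card : ℝ) * ((1/(k:ℝ) + μ) * n - c)
        = ∑ _u ∈ U, ((1/(k:ℝ) + μ) * n - c) := by rw [Finset.sum_const, nsmul_eq_mul]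
      _ ≤ _ := Finset.sum_le_sum h1
  -- pigeonhole: a tile with large weight
  obtain ⟨Q, hQ, hQmax⟩ := Finset.exists_max_image T A hTne
  have hQw : ∑ Q' ∈ T, A Q' ≤ (T.card : ℝ) * A Q := by
    have := Finset.sum_le_card_nsmul T A (A Q) (fun x hx => hQmax x hx)
    rwa [nsmul_eq_mul] at this
  have hApos : 0 ≤ A Q := by
    apply Finset.sum_nonneg; intro i _; positivity
  have hkmR : (k:ℝ) * (T.card:ℝ) ≤ (n:ℝ) := by exact_mod_cast hkm
  have hI1 : (k:ℝ) * ((U.card : ℝ) * ((1/(k:ℝ) + μ) * n - c)) ≤ (n:ℝ) * A Q := by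
    calc (k:ℝ) * ((U.card : ℝ) * ((1/(k:ℝ) + μ) * n - c))
        ≤ (k:ℝ) * ((T.card : ℝ) * A Q) := by
          apply mul_le_mul_of_nonneg_left (le_trans hW hQw) (by positivity)
      _ = ((k:ℝ) * (T.card:ℝ)) * A Q := by ring
      _ ≤ (n:ℝ) * A Q := mul_le_mul_of_nonneg_right hkmR hApos
  -- switch to summing over vertices of Q
  set t : Fin n → ℝ := fun v => ((U.filter (G.Adj v)).card : ℝ) with ht
  have hAQ : A Q = ∑ v ∈ Q, t v := by
    calc A Q = ∑ u ∈ U, ∑ v ∈ Q, (if G.Adj u v then (1:ℝ) else 0) := by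
          apply Finset.sum_congr rfl
          intro u _
          rw [Finset.card_filter]
          push_cast [apply_ite ((↑) : ℕ → ℝ)]
          rfl
      _ = ∑ v ∈ Q, ∑ u ∈ U, (if G.Adj u v then (1:ℝ) else 0) := Finset.sum_comm
      _ = ∑ v ∈ Q, t v := by
          apply Finset.sum_congr rfl
          intro v _
          rw [ht]
          simp only
          rw [Finset.card_filter]
          push_cast [apply_ite ((↑) : ℕ → ℝ)]
          apply Finset.sum_congr rfl
          intro u _
          exact if_congr (G.adj_comm u v) rfl rfl
  -- the largest vertex weight in Q
  have hQne : Q.Nonempty := by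
    rw [← Finset.card_pos, htilecard Q hQ]; omega
  obtain ⟨v, hvQ, hvmax⟩ := Finset.exists_max_image Q t hQne
  have hAQv : A Q ≤ (k:ℝ) * t v := by
    rw [hAQ]
    have := Finset.sum_le_card_nsmul Q t (t v) (fun x hx => hvmax x hx)
    rwa [htilecard Q hQ, nsmul_eq_mul] at this
  have htnonneg : ∀ x, 0 ≤ t x := by intro x; rw [ht]; positivity
  have htvU : t v ≤ (U.card : ℝ) := by
    rw [ht]; simp only
    exact_mod_cast Finset.card_le_card (Finset.filter_subset _ _)
  have hkpos : (0:ℝ) < (k:ℝ) := by linarith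
  have hUnn : (0:ℝ) ≤ (U.card : ℝ) := by positivity
  have htv : μ * (U.card : ℝ) / 2 ≤ t v := by
    have hX : μ * (n:ℝ) / 2 ≤ (1/(k:ℝ) + μ) * n - c := by
      have h1 : (0:ℝ) ≤ (1/(k:ℝ)) * n := by positivity
      nlinarith
    have h2 : (n:ℝ) * A Q ≤ (n:ℝ) * ((k:ℝ) * t v) :=
      mul_le_mul_of_nonneg_left hAQv (by positivity)
    have h3 : (k:ℝ) * ((U.card:ℝ) * (μ * n / 2)) ≤ (n:ℝ) * ((k:ℝ) * t v) := by
      calc (k:ℝ) * ((U.card:ℝ) * (μ * n / 2))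
          ≤ (k:ℝ) * ((U.card : ℝ) * ((1/(k:ℝ) + μ) * n - c)) := by
            apply mul_le_mul_of_nonneg_left _ (by positivity)
            exact mul_le_mul_of_nonneg_left hX hUnn
        _ ≤ (n:ℝ) * A Q := hI1
        _ ≤ _ := h2
    nlinarith [htnonneg v, mul_pos hnR hkpos]
  -- the second largest vertex weight in Q
  have hQene : (Q.erase v).Nonempty := by
    rw [← Finset.card_pos, Finset.card_erase_of_mem hvQ, htilecard Q hQ]; omega
  obtain ⟨w, hwQe, hwmax⟩ := Finset.exists_max_image (Q.erase v) t hQene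
  have hwQ : w ∈ Q := Finset.mem_of_mem_erase hwQe
  have hwv : w ≠ v := Finset.ne_of_mem_erase hwQe
  have htw : μ * (U.card : ℝ) / 2 ≤ t w := by
    have hsplit : A Q = t v + ∑ x ∈ Q.erase v, t x := by
      rw [hAQ, ← Finset.add_sum_erase Q t hvQ]
    have h4 : ∑ x ∈ Q.erase v, t x ≤ ((k:ℝ) - 1) * t w := by
      have h4a := Finset.sum_le_card_nsmul (Q.erase v) t (t w) (fun x hx => hwmax x hx)
      rw [Finset.card_erase_of_mem hvQ, htilecard Q hQ, nsmul_eq_mul] at h4a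
      have hcast : (((k - 1 : ℕ)):ℝ) = (k:ℝ) - 1 := by
        have h1k : (1:ℕ) ≤ k := by omega
        push_cast [h1k]
        ring
      rwa [hcast] at h4a
    have hkinv : (k:ℝ) * (1/(k:ℝ)) = 1 := by
      rw [mul_one_div]
      exact div_self (by linarith)
    have hX2 : (k:ℝ) * (μ * n / 2) ≤ (k:ℝ) * ((1/(k:ℝ) + μ) * n - c) - n := by
      have hexp : (k:ℝ) * ((1/(k:ℝ) + μ) * n - c)
          = ((k:ℝ) * (1/(k:ℝ))) * n + (k:ℝ) * μ * n - (k:ℝ) * c := by ring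
      rw [hexp, hkinv, one_mul]
      have hkc : (k:ℝ) * c ≤ (k:ℝ) * (μ * n / 2) := mul_le_mul_of_nonneg_left hcμ (by linarith)
      linarith
    have h5 : (U.card : ℝ) * ((k:ℝ) * (μ * n / 2)) ≤ (n:ℝ) * A Q - (n:ℝ) * t v := by
      have h5a : (U.card : ℝ) * ((k:ℝ) * (μ * n / 2))
          ≤ (U.card : ℝ) * ((k:ℝ) * ((1/(k:ℝ) + μ) * n - c) - n) :=
        mul_le_mul_of_nonneg_left hX2 hUnn
      have h5b : (U.card : ℝ) * ((k:ℝ) * ((1/(k:ℝ) + μ) * n - c) - n)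
          = (k:ℝ) * ((U.card : ℝ) * ((1/(k:ℝ) + μ) * n - c)) - (U.card:ℝ) * n := by ring
      have h7 : (n:ℝ) * t v ≤ (n:ℝ) * (U.card : ℝ) := mul_le_mul_of_nonneg_left htvU (by positivity)
      have h6 := hI1
      rw [h5b] at h5a
      have h7' : (U.card:ℝ) * n = (n:ℝ) * (U.card:ℝ) := by ring
      linarith
    have h8 : (n:ℝ) * A Q - (n:ℝ) * t v = (n:ℝ) * (∑ x ∈ Q.erase v, t x) := by
      rw [hsplit]; ring
    have h9 : (U.card : ℝ) * ((k:ℝ) * (μ * n / 2)) ≤ (n:ℝ) * (((k:ℝ) - 1) * t w) := by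
      calc (U.card : ℝ) * ((k:ℝ) * (μ * n / 2)) ≤ (n:ℝ) * (∑ x ∈ Q.erase v, t x) := by
            rw [← h8]; exact h5
        _ ≤ (n:ℝ) * (((k:ℝ) - 1) * t w) := mul_le_mul_of_nonneg_left h4 (by positivity)
    have hk1 : (0:ℝ) < (k:ℝ) - 1 := by linarith
    nlinarith [htnonneg w, mul_pos hnR hk1, h9]
  -- now build the two copies and swap
  have hUbig : μ * β / 2 < μ * (U.card:ℝ) / 2 := by nlinarith
  have hgv : c < t v := by linarith
  obtain ⟨S₁, hS₁D, hS₁card, hS₁copy⟩ := gadget v (U.filter (G.Adj v))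
    (fun x hx => (mem_filter.1 hx).2) hgv
  have hS₁cardR : ((S₁.card : ℕ) : ℝ) = (k:ℝ) - 1 := by
    rw [hS₁card]
    have : (1:ℕ) ≤ k := by omega
    push_cast [this]; ring
  have hgw : c < (((U.filter (G.Adj w)) \ S₁).card : ℝ) := by
    have h10 : (U.filter (G.Adj w)).card ≤ ((U.filter (G.Adj w)) \ S₁).card + S₁.card :=
      Finset.card_le_card_sdiff_add_card
    have h11 : (t w) - ((k:ℝ) - 1) ≤ (((U.filter (G.Adj w)) \ S₁).card : ℝ) := by
      have h10' : ((U.filter (G.Adj w)).card : ℝ)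
          ≤ (((U.filter (G.Adj w)) \ S₁).card : ℝ) + ((S₁.card : ℕ) : ℝ) := by
        exact_mod_cast h10
      rw [hS₁cardR] at h10'
      have hteq : t w = ((U.filter (G.Adj w)).card : ℝ) := rfl
      rw [hteq]
      linarith
    have : c + (k:ℝ) ≤ μ * β / 2 := hβ
    linarith
  obtain ⟨S₂, hS₂D, hS₂card, hS₂copy⟩ := gadget w ((U.filter (G.Adj w)) \ S₁)
    (fun x hx => (mem_filter.1 (Finset.mem_sdiff.1 hx).1).2) hgw
  -- memberships
  have hvU : v ∉ U := Finset.disjoint_left.1 (hUQ Q hQ) hvQ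
  have hwU : w ∉ U := Finset.disjoint_left.1 (hUQ Q hQ) hwQ
  have hS₁U : S₁ ⊆ U := hS₁D.trans (Finset.filter_subset _ _)
  have hS₂U : S₂ ⊆ U := hS₂D.trans ((Finset.sdiff_subset).trans (Finset.filter_subset _ _))
  have hS₁S₂ : Disjoint S₁ S₂ := by
    rw [Finset.disjoint_right]
    intro x hx
    exact (Finset.mem_sdiff.1 (hS₂D hx)).2
  -- apply the swap
  apply noswap Q hQ (insert v S₁) (insert w S₂) hS₁copy hS₂copy
  · rw [Finset.disjoint_left]
    intro x hx
    rcases Finset.mem_insert.1 hx with rfl | hx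
    · intro hmem
      rcases Finset.mem_insert.1 hmem with h | h
      · exact hwv h.symm
      · exact hvU (hS₂U h)
    · intro hmem
      rcases Finset.mem_insert.1 hmem with h | h
      · exact hwU (h ▸ hS₁U hx)
      · exact (Finset.disjoint_left.1 hS₁S₂ hx) h
  · intro Q' hQ'
    have hQ'T : Q' ∈ T := Finset.mem_of_mem_erase hQ'
    have hQ'Q : Q' ≠ Q := Finset.ne_of_mem_erase hQ'
    rw [Finset.disjoint_left]
    intro x hx
    rcases Finset.mem_insert.1 hx with rfl | hx
    · intro hmem
      exact Finset.disjoint_left.1 (hT.2 Q hQ Q' hQ'T (Ne.symm hQ'Q)) hvQ hmem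
    · intro hmem
      exact Finset.disjoint_left.1 (hUQ Q' hQ'T).symm (hS₁U hx) hmem
  · intro Q' hQ'
    have hQ'T : Q' ∈ T := Finset.mem_of_mem_erase hQ'
    have hQ'Q : Q' ≠ Q := Finset.ne_of_mem_erase hQ'
    rw [Finset.disjoint_left]
    intro x hx
    rcases Finset.mem_insert.1 hx with rfl | hx
    · intro hmem
      exact Finset.disjoint_left.1 (hT.2 Q hQ Q' hQ'T (Ne.symm hQ'Q)) hwQ hmem
    · intro hmem
      exact Finset.disjoint_left.1 (hUQ Q' hQ'T).symm (hS₂U hx) hmem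

/-- From the independence bound, big sets contain `r`-cliques. -/
lemma indep_extract {G : SimpleGraph (Fin n)} {r : ℕ} {x : ℝ}
    (hind : IndepBound G r x) {D : Finset (Fin n)} (hD : x < (D.card : ℝ)) :
    ∃ C ⊆ D, G.IsNClique r C := by
  by_contra h
  push_neg at h
  exact absurd (hind D fun T hT => h T hT) (not_le.2 hD)

/-- From the pair-independence bound, the degenerate branch is impossible for big sets. -/
lemma mindeg_subset_of_indepBound {G : SimpleGraph (Fin n)} {x : ℝ}
    (hind : IndepBound G 2 x) (hx : 0 ≤ x) {D : Finset (Fin n)} {d : ℕ}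
    (hD : (d : ℝ) * x < (D.card : ℝ)) :
    ∃ S' ⊆ D, S'.Nonempty ∧ ∀ v ∈ S', d ≤ (S'.filter (G.Adj v)).card := by
  rcases mindeg_or_indep G d D with h | h
  · exact h
  exfalso
  obtain ⟨I, hIsub, hIind, hIcard⟩ := h
  have hI : (I.card : ℝ) ≤ x := by
    apply hind
    intro T hT hcl
    obtain ⟨a, b, hab, rfl⟩ := Finset.card_eq_two.1 hcl.2
    exact hIind a (hT (by simp)) b (hT (by simp)) (hcl.1 (by simp) (by simp) hab)
  have : (D.card : ℝ) ≤ (d : ℝ) * x := by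
    calc (D.card : ℝ) ≤ ((d * I.card : ℕ) : ℝ) := by exact_mod_cast hIcard
      _ = (d : ℝ) * (I.card : ℝ) := by push_cast; ring
      _ ≤ (d : ℝ) * x := mul_le_mul_of_nonneg_left hI (by positivity)
  linarith

/-- Gadget for the clique case with `r = k - 1`. -/
lemma gadget_clique (hk : 3 ≤ k) {G : SimpleGraph (Fin n)} {x : ℝ}
    (hind : IndepBound G (k-1) x) :
    ∀ v : Fin n, ∀ D : Finset (Fin n), (∀ y ∈ D, G.Adj v y) → x < (D.card : ℝ) →
      ∃ S : Finset (Fin n), S ⊆ D ∧ S.card = k - 1 ∧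
        SpansCopy (⊤ : SimpleGraph (Fin k)) G (insert v S) := by
  intro v D hD hcard
  obtain ⟨C, hCD, hC⟩ := indep_extract hind hcard
  refine ⟨C, hCD, hC.2, ?_⟩
  have hins : G.IsNClique ((k-1)+1) (insert v C) :=
    hC.insert (fun b hb => (hD b (hCD hb)))
  have hkk : (k-1)+1 = k := by omega
  exact clique_spansCopy (hkk ▸ hins)

/-- Gadget for the cycle case. -/
lemma gadget_cycle (hk : 3 ≤ k) {G : SimpleGraph (Fin n)} {x : ℝ}
    (hind : IndepBound G 2 x) (hx : 0 ≤ x) :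
    ∀ v : Fin n, ∀ D : Finset (Fin n), (∀ y ∈ D, G.Adj v y) →
      ((k:ℝ) - 1) * x < (D.card : ℝ) →
      ∃ S : Finset (Fin n), S ⊆ D ∧ S.card = k - 1 ∧
        SpansCopy (SimpleGraph.cycleGraph k) G (insert v S) := by
  intro v D hD hcard
  have hcast : (((k-1:ℕ)):ℝ) = (k:ℝ) - 1 := by
    have h1k : (1:ℕ) ≤ k := by omega
    push_cast [h1k]; ring
  obtain ⟨S', hS'D, hS'ne, hS'deg⟩ := mindeg_subset_of_indepBound hind hx
    (d := k-1) (by rw [hcast]; exact hcard)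
  obtain ⟨l, hlen, hnd, hmem, hch⟩ := exists_path_list G (k-1) S' hS'ne hS'deg (k-1) (by omega)
  have hmemD : ∀ y ∈ l, y ∈ D := fun y hy => hS'D (hmem y hy)
  refine ⟨l.toFinset, ?_, ?_, ?_⟩
  · intro y hy; exact hmemD y (List.mem_toFinset.1 hy)
  · rw [List.toFinset_card_of_nodup hnd, hlen]
  · exact cycle_copy hk hD l hlen hnd hmemD hch

end RTT

open RTT in
/-- Existence of almost perfect tilings. -/
theorem almost_perfect_tilings :
    ∀ k r : ℕ, 3 ≤ k → ∀ F : SimpleGraph (Fin k), ∀ η : ℝ, 0 < η →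
    ((F = ⊤ ∧ r = k) ∨
     (F = ⊤ ∧ r = k - 1 ∧ 1 / (k : ℝ) ≤ η) ∨
     (F.IsTree ∧ r = 2) ∨
     (F = SimpleGraph.cycleGraph k ∧ r = 2 ∧ 1 / (k : ℝ) ≤ η)) →
    ∀ δ μ : ℝ, 0 < δ → 0 < μ →
    ∃ α : ℝ, 0 < α ∧ ∃ N : ℕ, ∀ n : ℕ, N ≤ n →
      ∀ G : SimpleGraph (Fin n),
        MinDegGE G ((η + μ) * n) → IndepBound G r (α * n) →
        ∃ T : Finset (Finset (Fin n)), IsTiling F G T ∧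
          ((Finset.univ \ T.biUnion id).card : ℝ) ≤ δ * n := by
  intro k r hk3 F η hη hcase δ μ hδ hμ
  have hk0 : 0 < k := by omega
  have hkR : (3:ℝ) ≤ (k:ℝ) := by exact_mod_cast hk3
  -- degree translation
  have degconv : ∀ n (G : SimpleGraph (Fin n)) (v : Fin n),
      ((G.neighborSet v).ncard : ℝ) = ((G.neighborFinset v).card : ℝ) := by
    intro n G v
    congr 1
    rw [SimpleGraph.neighborFinset_def, Set.ncard_eq_toFinset_card']
  rcases hcase with ⟨hF, hr⟩ | ⟨hF, hr, hηk⟩ | ⟨hF, hr⟩ | ⟨hF, hr, hηk⟩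
  · -- Case 1 : F = K_k, r = k
    subst hF; subst hr
    refine ⟨δ, hδ, 0, ?_⟩
    intro n _ G _ hind
    apply skeletonA _ G hk0 (δ * n)
    intro U' hU'
    obtain ⟨C, hCU, hC⟩ := indep_extract hind hU'
    exact ⟨C, hCU, clique_spansCopy hC⟩
  · -- Case 2 : F = K_k, r = k-1, 1/k ≤ η
    subst hF; subst hr
    refine ⟨min (μ/2) (μ*δ/4), by positivity, ⌈(4*(k:ℝ))/(μ*δ)⌉₊, ?_⟩
    intro n hn G hmind hind
    have hnR : ((4*(k:ℝ))/(μ*δ)) ≤ (n:ℝ) := by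
      calc _ ≤ (⌈(4*(k:ℝ))/(μ*δ)⌉₊ : ℝ) := Nat.le_ceil _
        _ ≤ (n:ℝ) := by exact_mod_cast hn
    have hnn : (0:ℝ) ≤ (n:ℝ) := by positivity
    set α := min (μ/2) (μ*δ/4) with hα
    apply skeletonB _ G hk3 μ (α * n) (δ * n) hμ (by positivity) ?_ ?_ ?_ ?_
    · intro v
      rw [← degconv]
      have hmono : (1/(k:ℝ) + μ) * n ≤ (η + μ) * n :=
        mul_le_mul_of_nonneg_right (by linarith) hnn
      exact le_trans hmono (hmind v)
    · calc α * n ≤ (μ/2) * n := mul_le_mul_of_nonneg_right (min_le_left _ _) hnn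
        _ = μ * n / 2 := by ring
    · have h1 : α * n ≤ (μ*δ/4) * n := mul_le_mul_of_nonneg_right (min_le_right _ _) hnn
      have h2 : (k:ℝ) ≤ (μ*δ/4) * n := by
        rw [div_le_iff₀ (by positivity)] at hnR
        nlinarith
      calc α * n + k ≤ (μ*δ/4) * n + (μ*δ/4) * n := by linarith
        _ = μ * (δ * n) / 2 := by ring
    · exact gadget_clique hk3 hind
  · -- Case 3 : F a tree, r = 2
    subst hr
    refine ⟨δ/(k:ℝ), by positivity, 0, ?_⟩
    intro n _ G _ hind
    have hβ : ((k:ℝ) - 1) * ((δ/(k:ℝ)) * n) ≤ δ * n := by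
      have hnn : (0:ℝ) ≤ (n:ℝ) := by positivity
      have h1 : ((k:ℝ) - 1) / (k:ℝ) ≤ 1 := by
        rw [div_le_one (by linarith)]; linarith
      have h2 : ((k:ℝ) - 1) * ((δ/(k:ℝ)) * n) = (((k:ℝ)-1)/(k:ℝ)) * (δ * n) := by
        field_simp
      rw [h2]
      nlinarith [mul_nonneg hδ.le hnn]
    have hyp : ∀ U' : Finset (Fin n), (((k:ℝ) - 1) * ((δ/(k:ℝ)) * n)) < (U'.card : ℝ) →
        ∃ S, S ⊆ U' ∧ SpansCopy F G S := by
      intro U' hU'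
      have hcast : (((k-1:ℕ)):ℝ) = (k:ℝ) - 1 := by
        have h1k : (1:ℕ) ≤ k := by omega
        push_cast [h1k]; ring
      have hU'2 : ((k-1 : ℕ) : ℝ) * ((δ/(k:ℝ)) * n) < (U'.card : ℝ) := by
        rw [hcast]; exact hU'
      obtain ⟨S', hS'U, hS'ne, hS'deg⟩ := mindeg_subset_of_indepBound hind
        (by positivity) (d := k-1) hU'2
      obtain ⟨f, hinj, hhom, hmem⟩ := tree_embed hF hk0 S' hS'ne hS'deg
      refine ⟨Finset.image f Finset.univ, ?_, f, hinj, hhom, rfl⟩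
      intro y hy
      obtain ⟨a, -, rfl⟩ := Finset.mem_image.1 hy
      exact hS'U (hmem a)
    obtain ⟨T, hT, hcard⟩ := skeletonA F G hk0 (((k:ℝ) - 1) * ((δ/(k:ℝ)) * n)) hyp
    exact ⟨T, hT, le_trans hcard hβ⟩
  · -- Case 4 : F = C_k, r = 2, 1/k ≤ η
    subst hF; subst hr
    refine ⟨(min (μ/2) (μ*δ/4))/(k:ℝ), by positivity, ⌈(4*(k:ℝ))/(μ*δ)⌉₊, ?_⟩
    intro n hn G hmind hind
    have hnR : ((4*(k:ℝ))/(μ*δ)) ≤ (n:ℝ) := by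
      calc _ ≤ (⌈(4*(k:ℝ))/(μ*δ)⌉₊ : ℝ) := Nat.le_ceil _
        _ ≤ (n:ℝ) := by exact_mod_cast hn
    have hnn : (0:ℝ) ≤ (n:ℝ) := by positivity
    set α := (min (μ/2) (μ*δ/4))/(k:ℝ) with hα
    have hαpos : 0 < α := by positivity
    have hkα : ((k:ℝ) - 1) * α ≤ min (μ/2) (μ*δ/4) := by
      have h1 : ((k:ℝ) - 1) * α ≤ (k:ℝ) * α := by nlinarith
      have h2 : (k:ℝ) * α = min (μ/2) (μ*δ/4) := by
        rw [hα]; field_simp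
      linarith
    apply skeletonB _ G hk3 μ (((k:ℝ)-1) * (α * n)) (δ * n) hμ
      (mul_nonneg (by linarith) (by positivity)) ?_ ?_ ?_ ?_
    · intro v
      rw [← degconv]
      have hmono : (1/(k:ℝ) + μ) * n ≤ (η + μ) * n :=
        mul_le_mul_of_nonneg_right (by linarith) hnn
      exact le_trans hmono (hmind v)
    · calc ((k:ℝ)-1) * (α * n) = (((k:ℝ)-1) * α) * n := by ring
        _ ≤ (μ/2) * n := mul_le_mul_of_nonneg_right (le_trans hkα (min_le_left _ _)) hnn
        _ = μ * n / 2 := by ring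
    · have h1 : ((k:ℝ)-1) * (α * n) ≤ (μ*δ/4) * n := by
        calc ((k:ℝ)-1) * (α * n) = (((k:ℝ)-1) * α) * n := by ring
          _ ≤ (μ*δ/4) * n := mul_le_mul_of_nonneg_right (le_trans hkα (min_le_right _ _)) hnn
      have h2 : (k:ℝ) ≤ (μ*δ/4) * n := by
        rw [div_le_iff₀ (by positivity)] at hnR
        nlinarith
      calc ((k:ℝ)-1) * (α * n) + k ≤ (μ*δ/4) * n + (μ*δ/4) * n := by linarith
        _ = μ * (δ * n) / 2 := by ring
    · intro v D hD hcard
      exact gadget_cycle hk3 hind (by positivity) v D hD hcard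
end

section
/- Let k ≥ 3 be an integer, F a k-vertex graph and r ∈ ℕ such that either (1) F = K_k and r ∈ {k−1, k}, or (2) F is a tree on k vertices or F = C_k, and r = 2. Then for any ρ > 0 there exists α > 0 such that the following holds for all n ∈ ℕ: if G is an n-vertex graph with α_r(G) ≤ αn, v ∈ V(G) and U ⊆ V(G) are such that v has at least ρn neighbours in U, then there is an F-fan at v in U of size at least (ρ/k)n. -/
open Finset

section AuxLemmas
open SimpleGraph

variable {V : Type*} {F : SimpleGraph V}

lemma isPath_concat [DecidableEq V] {root u x : V} {q : F.Walk root u}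
    (hq : q.IsPath) (hx : x ∉ q.support) (hadj : F.Adj u x) :
    (q.concat hadj).IsPath := by
  rw [← SimpleGraph.Walk.isPath_reverse_iff, SimpleGraph.Walk.reverse_concat]
  apply SimpleGraph.Walk.IsPath.cons
  · rwa [SimpleGraph.Walk.isPath_reverse_iff]
  · rwa [SimpleGraph.Walk.support_reverse, List.mem_reverse]

lemma mem_support_dist_le [DecidableEq V] {root x y : V} (p : F.Walk root x)
    (hy : y ∈ p.support) : F.dist root y ≤ p.length := by
  have h1 : F.dist root y ≤ (p.takeUntil y hy).length := SimpleGraph.dist_le _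
  exact h1.trans (SimpleGraph.Walk.length_takeUntil_le p hy)

lemma mem_support_dist_lt [DecidableEq V] {root x y : V} (p : F.Walk root x)
    (hlen : p.length = F.dist root x) (hy : y ∈ p.support) (hyx : y ≠ x) :
    F.dist root y < F.dist root x := by
  have h1 : F.dist root y ≤ (p.takeUntil y hy).length := SimpleGraph.dist_le _
  have h2 := congrArg SimpleGraph.Walk.length (p.take_spec hy)
  rw [SimpleGraph.Walk.length_append] at h2
  have h3 : (p.dropUntil y hy).length ≠ 0 := by
    intro h0
    exact hyx (SimpleGraph.Walk.eq_of_length_eq_zero h0)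
  omega

lemma adj_dist_ne [DecidableEq V] (hT : F.IsTree) (root : V) {u x : V}
    (hadj : F.Adj u x) : F.dist root u ≠ F.dist root x := by
  intro heq
  have hux : u ≠ x := hadj.ne
  obtain ⟨p, hp, hpl⟩ := (hT.isConnected.preconnected root x).exists_path_of_dist
  obtain ⟨q, hq, hql⟩ := (hT.isConnected.preconnected root u).exists_path_of_dist
  have hx : x ∉ q.support := by
    intro hx
    have := mem_support_dist_lt q hql hx (Ne.symm hux)
    omega
  have hq' : (q.concat hadj).IsPath := isPath_concat hq hx hadj
  have huniq := hT.IsAcyclic.path_unique ⟨p, hp⟩ ⟨q.concat hadj, hq'⟩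
  have hlen := congrArg (fun P : F.Path root x => (P : F.Walk root x).length) huniq
  simp only [SimpleGraph.Walk.length_concat] at hlen
  omega

lemma unique_parent [DecidableEq V] (hT : F.IsTree) (root : V) {u u' x : V}
    (hadj : F.Adj u x) (hadj' : F.Adj u' x)
    (hu : F.dist root u < F.dist root x) (hu' : F.dist root u' < F.dist root x) :
    u = u' := by
  obtain ⟨p, hp, hpl⟩ := (hT.isConnected.preconnected root u).exists_path_of_dist
  obtain ⟨q, hq, hql⟩ := (hT.isConnected.preconnected root u').exists_path_of_dist
  have hxp : x ∉ p.support := by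
    intro hx; have := mem_support_dist_le p hx; omega
  have hxq : x ∉ q.support := by
    intro hx; have := mem_support_dist_le q hx; omega
  have hp' : (p.concat hadj).IsPath := isPath_concat hp hxp hadj
  have hq' : (q.concat hadj').IsPath := isPath_concat hq hxq hadj'
  have huniq := hT.IsAcyclic.path_unique ⟨p.concat hadj, hp'⟩ ⟨q.concat hadj', hq'⟩
  have hwalk : p.concat hadj = q.concat hadj' := congrArg Subtype.val huniq
  obtain ⟨hv, -⟩ := SimpleGraph.Walk.concat_inj hwalk
  exact hv

lemma tree_order {k : ℕ} (hk : 0 < k) (F : SimpleGraph (Fin k)) (hT : F.IsTree) :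
    ∃ e : Fin k ≃ Fin k, ∀ i i' j : Fin k, i < j → i' < j →
      F.Adj (e i) (e j) → F.Adj (e i') (e j) → i = i' := by
  classical
  set root : Fin k := ⟨0, hk⟩
  set key : Fin k → ℕ ×ₗ ℕ := fun x => toLex (F.dist root x, x.val) with hkey
  have keyinj : Function.Injective key := by
    intro a b hab
    have := congrArg (fun p : ℕ ×ₗ ℕ => (ofLex p).2) hab
    simpa [hkey, Fin.ext_iff] using this
  set e : Equiv.Perm (Fin k) := Tuple.sort key with he
  have mono : Monotone (key ∘ e) := Tuple.monotone_sort key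
  have strict : ∀ i j : Fin k, i < j → key (e i) < key (e j) := by
    intro i j hij
    refine lt_of_le_of_ne (mono hij.le) ?_
    intro hkeq
    exact hij.ne (e.injective (keyinj hkeq))
  refine ⟨e, ?_⟩
  intro i i' j hi hi' hadj hadj'
  have hd : F.dist root (e i) < F.dist root (e j) := by
    have h1 := strict i j hi
    rw [Prod.Lex.lt_iff] at h1
    rcases h1 with h1 | ⟨h1, -⟩
    · exact h1
    · exact absurd h1 (adj_dist_ne hT root hadj)
  have hd' : F.dist root (e i') < F.dist root (e j) := by
    have h1 := strict i' j hi'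
    rw [Prod.Lex.lt_iff] at h1
    rcases h1 with h1 | ⟨h1, -⟩
    · exact h1
    · exact absurd h1 (adj_dist_ne hT root hadj')
  exact e.injective (unique_parent hT root hadj hadj' hd hd')


end AuxLemmas

namespace RTT

section Aux2
open Finset

lemma spans_top {k : ℕ} (G : SimpleGraph (Fin n)) (s : Finset (Fin n))
    (hcard : s.card = k) (hclique : G.IsClique ↑s) : SpansCopy (⊤ : SimpleGraph (Fin k)) G s := by
  classical
  refine ⟨fun i => (s.orderIsoOfFin hcard i : Fin n), ?_, ?_, ?_⟩
  · intro a b hab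
    exact (s.orderIsoOfFin hcard).injective (Subtype.ext hab)
  · intro a b hab
    have ha := (s.orderIsoOfFin hcard a).2
    have hb := (s.orderIsoOfFin hcard b).2
    refine hclique ha hb ?_
    intro h
    exact hab.ne ((s.orderIsoOfFin hcard).injective (Subtype.ext h))
  · ext x
    simp only [Finset.mem_image, Finset.mem_univ, true_and]
    constructor
    · rintro ⟨i, rfl⟩; exact (s.orderIsoOfFin hcard i).2
    · intro hx
      obtain ⟨i, hi⟩ := (s.orderIsoOfFin hcard).surjective ⟨x, hx⟩
      exact ⟨i, congrArg Subtype.val hi⟩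


lemma extract_min_deg {n : ℕ} (G : SimpleGraph (Fin n)) [DecidableRel G.Adj] (d : ℕ) :
    ∀ (m : ℕ) (W : Finset (Fin n)),
    (∀ T ⊆ W, (∀ a ∈ T, ∀ b ∈ T, ¬ G.Adj a b) → T.card ≤ m) →
    ∃ W' ⊆ W, W.card ≤ W'.card + m * d ∧
      ∀ w ∈ W', d ≤ (W'.filter (fun y => G.Adj w y)).card := by
  classical
  intro m
  induction m with
  | zero =>
    intro W hW
    have hWe : W = ∅ := by
      by_contra h
      obtain ⟨w, hw⟩ := Finset.nonempty_of_ne_empty h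
      have := hW {w} (Finset.singleton_subset_iff.2 hw)
        (by intro a ha b hb
            rw [Finset.mem_singleton] at ha hb
            subst ha; subst hb; exact G.irrefl)
      simp at this
    subst hWe
    exact ⟨∅, Finset.Subset.refl _, by simp, by simp⟩
  | succ m ih =>
    intro W hW
    by_cases hall : ∀ w ∈ W, d ≤ (W.filter (fun y => G.Adj w y)).card
    · exact ⟨W, Finset.Subset.refl _, by omega, hall⟩
    · push_neg at hall
      obtain ⟨w, hwW, hwd⟩ := hall
      have hd1 : 1 ≤ d := by omega
      set N := W.filter (fun y => G.Adj w y) with hN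
      set W₂ := W \ insert w N with hW₂
      have hW₂sub : W₂ ⊆ W := Finset.sdiff_subset
      have hind : ∀ T ⊆ W₂, (∀ a ∈ T, ∀ b ∈ T, ¬ G.Adj a b) → T.card ≤ m := by
        intro T hT hTi
        have key : ∀ x ∈ T, ¬ G.Adj w x := by
          intro x hx hadj
          have hxW := hT hx
          rw [hW₂, Finset.mem_sdiff] at hxW
          exact hxW.2 (Finset.mem_insert.2 (Or.inr
            (Finset.mem_filter.2 ⟨hW₂sub (hT hx), hadj⟩)))
        have hwT : w ∉ T := by
          intro hw
          have := hT hw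
          rw [hW₂, Finset.mem_sdiff] at this
          exact this.2 (Finset.mem_insert_self _ _)
        have hins : insert w T ⊆ W := by
          intro x hx
          rcases Finset.mem_insert.1 hx with rfl | hx
          · exact hwW
          · exact hW₂sub (hT hx)
        have hinsind : ∀ a ∈ insert w T, ∀ b ∈ insert w T, ¬ G.Adj a b := by
          intro a ha b hb hab
          rcases Finset.mem_insert.1 ha with h1 | h1
          · rcases Finset.mem_insert.1 hb with h2 | h2
            · rw [h1, h2] at hab; exact G.irrefl hab
            · rw [h1] at hab; exact key b h2 hab
          · rcases Finset.mem_insert.1 hb with h2 | h2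
            · rw [h2] at hab; exact key a h1 hab.symm
            · exact hTi a h1 b h2 hab
        have := hW (insert w T) hins hinsind
        rw [Finset.card_insert_of_notMem hwT] at this
        omega
      obtain ⟨W', hW'sub, hW'card, hW'deg⟩ := ih W₂ hind
      refine ⟨W', hW'sub.trans hW₂sub, ?_, hW'deg⟩
      have hNcard : N.card ≤ d - 1 := by omega
      have hcard2 : W.card ≤ W₂.card + (insert w N).card := by
        have hsub : W \ (insert w N ∩ W) = W \ insert w N := by
          rw [Finset.inter_comm]; exact Finset.sdiff_inter_self_left W (insert w N)
        calc W.card = (W \ (insert w N ∩ W)).card + (insert w N ∩ W).card := by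
              rw [Finset.card_sdiff_add_card_eq_card Finset.inter_subset_right]
          _ ≤ (W \ insert w N).card + (insert w N).card := by
              rw [hsub]
              exact Nat.add_le_add_left (Finset.card_le_card Finset.inter_subset_left) _
      have : (insert w N).card ≤ d := by
        calc (insert w N).card ≤ N.card + 1 := Finset.card_insert_le _ _
          _ ≤ d := by omega
      calc W.card ≤ W₂.card + (insert w N).card := hcard2
        _ ≤ W'.card + m * d + d := by omega
        _ = W'.card + (m + 1) * d := by ring


lemma emb {k n : ℕ} (hk : 3 ≤ k) (F : SimpleGraph (Fin k)) (G : SimpleGraph (Fin n)) [DecidableRel G.Adj]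
    (e : Fin k ≃ Fin k) (P : Fin k → Fin k)
    (hP : ∀ j : Fin k, 0 < j.val → (P j).val < j.val)
    (hedge : ∀ i j : Fin k, i.val < j.val → F.Adj (e i) (e j) → i = P j ∨ i.val = 0)
    (v : Fin n) (W : Finset (Fin n)) (hv : v ∉ W)
    (hadj : ∀ w ∈ W, G.Adj v w)
    (hWk : k ≤ W.card)
    (hdeg : ∀ w ∈ W, k - 1 ≤ (W.filter (fun y => G.Adj w y)).card) :
    ∃ S ⊆ W, S.card = k - 1 ∧ SpansCopy F G (insert v S) := by
  classical
  set z : Fin k := ⟨0, by omega⟩ with hz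
  have key : ∀ j : ℕ, j ≤ k → ∃ f : Fin k → Fin n,
      f z = v ∧ (∀ i : Fin k, i.val < j → 0 < i.val → f i ∈ W) ∧
      (∀ i i' : Fin k, i.val < j → i'.val < j → i ≠ i' → f i ≠ f i') ∧
      (∀ i i' : Fin k, i.val < i'.val → i'.val < j →
        F.Adj (e i) (e i') → G.Adj (f i) (f i')) := by
    intro j
    induction j with
    | zero =>
      intro _
      exact ⟨fun _ => v, rfl, fun i h => by omega, fun i i' h h' => by omega,
        fun i i' h h' => by omega⟩
    | succ j ih =>
      intro hjk
      obtain ⟨f, hf0, hfW, hfinj, hfadj⟩ := ih (by omega)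
      by_cases hj0 : j = 0
      · subst hj0
        refine ⟨f, hf0, fun i h1 h2 => by omega, fun i i' h1 h2 hne => ?_,
          fun i i' h1 h2 => by omega⟩
        exact absurd (Fin.ext (by omega : i.val = i'.val)) hne
      · -- j ≥ 1
        set J : Fin k := ⟨j, by omega⟩ with hJ
        set used : Finset (Fin n) :=
          (Finset.univ.filter (fun i : Fin k => i.val < j)).image f with hused
        have husedcard : used.card ≤ j := by
          calc used.card ≤ (Finset.univ.filter (fun i : Fin k => i.val < j)).card :=
                Finset.card_image_le
            _ ≤ (Finset.range j).card := by
                apply Finset.card_le_card_of_injOn (fun i => i.val)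
                · intro a ha
                  simp only [Finset.mem_coe, Finset.mem_filter] at ha
                  exact Finset.mem_range.2 ha.2
                · intro a ha b hb hab
                  exact Fin.ext hab
            _ = j := Finset.card_range j
        have hvused : v ∈ used := by
          rw [hused]
          refine Finset.mem_image.2 ⟨z, ?_, hf0⟩
          simp only [Finset.mem_filter, Finset.mem_univ, true_and, hz]
          omega
        have husederase : (used.erase v).card ≤ j - 1 := by
          have := Finset.card_erase_of_mem hvused
          omega
        have hPJ : (P J).val < j := hP J (by simp [hJ]; omega)
        -- define the candidate neighbourhood NB
        obtain ⟨NB, hNB1, hNB2, hNB3⟩ :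
            ∃ NB : Finset (Fin n), NB ⊆ W ∧ k - 1 ≤ NB.card ∧
              ∀ x ∈ NB, G.Adj (f (P J)) x := by
          by_cases hPz : (P J).val = 0
          · have hPJz : P J = z := Fin.ext (by simp [hz, hPz])
            refine ⟨W, Finset.Subset.refl _, by omega, ?_⟩
            intro x hx
            rw [hPJz, hf0]
            exact hadj x hx
          · have htW : f (P J) ∈ W := hfW (P J) hPJ (by omega)
            refine ⟨W.filter (fun y => G.Adj (f (P J)) y), Finset.filter_subset _ _,
              hdeg _ htW, ?_⟩
            intro x hx
            exact (Finset.mem_filter.1 hx).2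
        have hvNB : v ∉ NB := fun h => hv (hNB1 h)
        have hNBsd : NB \ used = NB \ used.erase v := by
          ext x
          simp only [Finset.mem_sdiff, Finset.mem_erase]
          constructor
          · rintro ⟨h1, h2⟩; exact ⟨h1, fun h => h2 h.2⟩
          · rintro ⟨h1, h2⟩
            refine ⟨h1, fun h => h2 ⟨?_, h⟩⟩
            rintro rfl; exact hvNB h1
        have hne : (NB \ used).Nonempty := by
          rw [hNBsd]
          rw [← Finset.card_pos]
          have h1 : NB.card - (used.erase v).card ≤ (NB \ used.erase v).card :=
            Finset.le_card_sdiff _ _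
          omega
        obtain ⟨x, hxmem⟩ := hne
        rw [Finset.mem_sdiff] at hxmem
        obtain ⟨hxNB, hxused⟩ := hxmem
        refine ⟨Function.update f J x, ?_, ?_, ?_, ?_⟩
        · rw [Function.update_of_ne (by simp [hz, hJ, Fin.ext_iff]; omega) _ _]
          exact hf0
        · intro i h1 h2
          by_cases hiJ : i = J
          · subst hiJ; rw [Function.update_self]; exact hNB1 hxNB
          · have : i.val < j := by
              have : i.val ≠ j := fun h => hiJ (Fin.ext (by simp [hJ, h]))
              omega
            rw [Function.update_of_ne hiJ]
            exact hfW i this h2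
        · intro i i' h1 h2 hne'
          have hmemused : ∀ a : Fin k, a.val < j → f a ∈ used := by
            intro a ha
            rw [hused]
            exact Finset.mem_image.2 ⟨a, Finset.mem_filter.2 ⟨Finset.mem_univ _, ha⟩, rfl⟩
          by_cases hiJ : i = J <;> by_cases hi'J : i' = J
          · exact absurd (hiJ.trans hi'J.symm) hne'
          · subst hiJ
            have hi'j : i'.val < j := by
              have : i'.val ≠ j := fun h => hi'J (Fin.ext (by simp [hJ, h]))
              omega
            rw [Function.update_self, Function.update_of_ne hi'J]
            intro hcon
            exact hxused (hcon ▸ hmemused i' hi'j)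
          · subst hi'J
            have hij : i.val < j := by
              have : i.val ≠ j := fun h => hiJ (Fin.ext (by simp [hJ, h]))
              omega
            rw [Function.update_self, Function.update_of_ne hiJ]
            intro hcon
            exact hxused (hcon ▸ hmemused i hij)
          · have hij : i.val < j := by
              have : i.val ≠ j := fun h => hiJ (Fin.ext (by simp [hJ, h]))
              omega
            have hi'j : i'.val < j := by
              have : i'.val ≠ j := fun h => hi'J (Fin.ext (by simp [hJ, h]))
              omega
            rw [Function.update_of_ne hiJ, Function.update_of_ne hi'J]
            exact hfinj i i' hij hi'j hne'
        · intro i i' h1 h2 hadj'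
          have hiJ : i ≠ J := by
            intro h
            rw [h] at h1
            simp only [hJ] at h1
            omega
          by_cases hi'J : i' = J
          · subst hi'J
            rw [Function.update_self, Function.update_of_ne hiJ]
            rcases hedge i J h1 hadj' with hPeq | hz0
            · rw [hPeq]
              exact hNB3 x hxNB
            · have : i = z := Fin.ext (by simp [hz, hz0])
              rw [this, hf0]
              exact hadj x (hNB1 hxNB)
          · have hi'j : i'.val < j := by
              have : i'.val ≠ j := fun h => hi'J (Fin.ext (by simp [hJ, h]))
              omega
            rw [Function.update_of_ne hiJ, Function.update_of_ne hi'J]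
            exact hfadj i i' h1 hi'j hadj'
  obtain ⟨f, hf0, hfW, hfinj, hfadj⟩ := key k le_rfl
  set g : Fin k → Fin n := fun a => f (e.symm a) with hg
  have ginj : Function.Injective g := by
    intro a b hab
    by_contra hne
    exact hfinj (e.symm a) (e.symm b) (e.symm a).isLt (e.symm b).isLt
      (fun h => hne (by simpa using congrArg e h)) hab
  have ghom : ∀ a b, F.Adj a b → G.Adj (g a) (g b) := by
    intro a b hab
    have hab' : F.Adj (e (e.symm a)) (e (e.symm b)) := by simpa using hab
    have hne : e.symm a ≠ e.symm b := by
      intro h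
      have : a = b := by simpa using congrArg e h
      exact hab.ne this
    rcases lt_or_gt_of_ne (fun h : (e.symm a).val = (e.symm b).val =>
      hne (Fin.ext h)) with h | h
    · exact hfadj _ _ h (e.symm b).isLt hab'
    · exact (hfadj _ _ h (e.symm a).isLt hab'.symm).symm
  have himg : Finset.image g Finset.univ = Finset.image f Finset.univ := by
    rw [hg]
    have : Finset.image (fun a => f (e.symm a)) Finset.univ
        = Finset.image f (Finset.image e.symm Finset.univ) := by
      rw [Finset.image_image]; rfl
    rw [this, Finset.image_univ_equiv]
  have hvimg : v ∈ Finset.image g Finset.univ := by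
    rw [himg]
    exact Finset.mem_image.2 ⟨z, Finset.mem_univ _, hf0⟩
  refine ⟨(Finset.image g Finset.univ).erase v, ?_, ?_, ?_⟩
  · intro x hx
    rw [Finset.mem_erase, himg] at hx
    obtain ⟨hxv, hx⟩ := hx
    obtain ⟨i, -, rfl⟩ := Finset.mem_image.1 hx
    have hiz : i ≠ z := by rintro rfl; exact hxv hf0
    exact hfW i i.isLt (by
      rcases Nat.eq_zero_or_pos i.val with h | h
      · exact absurd (Fin.ext (by simp [hz, h])) hiz
      · exact h)
  · rw [Finset.card_erase_of_mem hvimg]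
    have : (Finset.image g Finset.univ).card = k := by
      rw [Finset.card_image_of_injective _ ginj, Finset.card_univ, Fintype.card_fin]
    omega
  · exact ⟨g, ginj, ghom, (Finset.insert_erase hvimg).symm⟩



lemma cycle_struct {k : ℕ} (hk : 3 ≤ k) :
    ∃ (e : Fin k ≃ Fin k) (P : Fin k → Fin k),
      (∀ j : Fin k, 0 < j.val → (P j).val < j.val) ∧
      (∀ i j : Fin k, i.val < j.val → (SimpleGraph.cycleGraph k).Adj (e i) (e j) →
        i = P j ∨ i.val = 0) := by
  haveI : NeZero k := ⟨by omega⟩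
  refine ⟨Equiv.refl _, fun j => ⟨j.val - 1, by omega⟩, fun j hj => by show j.val - 1 < j.val; omega, ?_⟩
  intro i j hij hadj
  simp only [Equiv.refl_apply] at hadj
  rw [SimpleGraph.cycleGraph_adj'] at hadj
  have hle : i ≤ j := le_of_lt (Fin.lt_def.mpr hij)
  rcases hadj with h | h
  · -- (i - j).val = 1 : wrap-around case
    have hv1 : (1 : Fin k).val = 1 := by rw [Fin.val_one']; exact Nat.mod_eq_of_lt (by omega)
    have h1 : i = 1 + j := by
      exact sub_eq_iff_eq_add.mp (Fin.ext (h.trans hv1.symm) : i - j = 1)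
    have h2 : i.val = (1 + j.val) % k := by
      rw [h1, Fin.add_def, hv1]
    have hjk : j.val < k := j.isLt
    rcases Nat.lt_or_ge (1 + j.val) k with hc | hc
    · rw [Nat.mod_eq_of_lt hc] at h2; omega
    · have hjv : 1 + j.val = k := by omega
      have : i.val = 0 := by rw [h2, hjv, Nat.mod_self]
      exact Or.inr this
  · -- (j - i).val = 1
    have h1 : (j - i).val = j.val - i.val := Fin.sub_val_of_le hle
    left
    apply Fin.ext
    simp only []
    omega
lemma tree_struct {k : ℕ} (hk : 3 ≤ k) (F : SimpleGraph (Fin k)) (hT : F.IsTree) :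
    ∃ (e : Fin k ≃ Fin k) (P : Fin k → Fin k),
      (∀ j : Fin k, 0 < j.val → (P j).val < j.val) ∧
      (∀ i j : Fin k, i.val < j.val → F.Adj (e i) (e j) → i = P j ∨ i.val = 0) := by
  classical
  obtain ⟨e, he⟩ := tree_order (by omega) F hT
  refine ⟨e, fun j => if h : ∃ i : Fin k, i < j ∧ F.Adj (e i) (e j)
    then h.choose else ⟨0, by omega⟩, ?_, ?_⟩
  · intro j hj
    by_cases h : ∃ i : Fin k, i < j ∧ F.Adj (e i) (e j)
    · simp only [dif_pos h]
      exact h.choose_spec.1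
    · simp only [dif_neg h]
      exact hj
  · intro i j hij hadj
    have h : ∃ i' : Fin k, i' < j ∧ F.Adj (e i') (e j) := ⟨i, Fin.lt_def.mpr hij, hadj⟩
    left
    simp only [dif_pos h]
    exact he i h.choose j (Fin.lt_def.mpr hij) h.choose_spec.1 hadj h.choose_spec.2


lemma spanH {k r n : ℕ} (hk : 3 ≤ k)
    (F : SimpleGraph (Fin k))
    (hF : (F = ⊤ ∧ (r = k - 1 ∨ r = k)) ∨
      ((F.IsTree ∨ F = SimpleGraph.cycleGraph k) ∧ r = 2))
    (G : SimpleGraph (Fin n)) (α : ℝ)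
    (hind : IndepBound G r (α * n))
    (v : Fin n) (W : Finset (Fin n)) (hadjW : ∀ w ∈ W, G.Adj v w)
    (hB : Nat.floor (α * n) * (k - 1) + 1 ≤ W.card) :
    ∃ S ⊆ W, S.card = k - 1 ∧ SpansCopy F G (insert v S) := by
  classical
  have hvW : v ∉ W := fun h => G.irrefl (hadjW v h)
  have hWα : (α * n) < (W.card : ℝ) := by
    have h2 := Nat.lt_floor_add_one (α * n)
    have h3 : Nat.floor (α * n) + 1 ≤ W.card := by
      have : Nat.floor (α * n) * 1 ≤ Nat.floor (α * n) * (k - 1) :=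
        Nat.mul_le_mul_left _ (by omega)
      omega
    calc α * n < (Nat.floor (α * n) : ℝ) + 1 := h2
      _ = ((Nat.floor (α * n) + 1 : ℕ) : ℝ) := by push_cast; ring
      _ ≤ (W.card : ℝ) := by exact_mod_cast h3
  rcases hF with ⟨hFtop, hr⟩ | ⟨htc, hr2⟩
  · -- complete graph case
    have hclq : ∃ T ⊆ W, G.IsNClique r T := by
      by_contra h
      push_neg at h
      have := hind W (fun T hT => h T hT)
      linarith
    obtain ⟨T, hTW, hT⟩ := hclq
    have hins : ∀ S ⊆ W, G.IsClique (↑S : Set (Fin n)) → S.card = k - 1 →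
        ∃ S' ⊆ W, S'.card = k - 1 ∧ SpansCopy F G (insert v S') := by
      intro S hSW hSclq hScard
      have hvS : v ∉ S := fun h => hvW (hSW h)
      have hclq2 : G.IsClique (↑(insert v S) : Set (Fin n)) := by
        rw [Finset.coe_insert]
        exact hSclq.insert (fun b hb _ => hadjW b (hSW hb))
      have hcard2 : (insert v S).card = k := by
        rw [Finset.card_insert_of_notMem hvS, hScard]
        omega
      refine ⟨S, hSW, hScard, ?_⟩
      rw [hFtop]
      exact spans_top G _ hcard2 hclq2
    rcases hr with hr | hr
    · exact hins T hTW hT.isClique (by rw [hT.card_eq, hr])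
    · have hTne : T.Nonempty := by
        rw [← Finset.card_pos, hT.card_eq]
        omega
      obtain ⟨x, hx⟩ := hTne
      refine hins (T.erase x) (fun y hy => hTW (Finset.erase_subset _ _ hy))
        (hT.isClique.subset (by exact_mod_cast Finset.erase_subset _ _)) ?_
      rw [Finset.card_erase_of_mem hx, hT.card_eq]
      omega
  · -- tree / cycle case
    subst hr2
    set m := Nat.floor (α * n) with hm
    have hindep : ∀ T ⊆ W, (∀ a ∈ T, ∀ b ∈ T, ¬ G.Adj a b) → T.card ≤ m := by
      intro T hTW hTind
      have hprem : ∀ T' ⊆ T, ¬ G.IsNClique 2 T' := by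
        intro T' hT' hclq
        obtain ⟨a, b, hab, hT'eq⟩ := Finset.card_eq_two.1 hclq.card_eq
        have hadj2 : G.Adj a b := hclq.isClique (by rw [hT'eq]; simp) (by rw [hT'eq]; simp) hab
        exact hTind a (hT' (by rw [hT'eq]; simp)) b (hT' (by rw [hT'eq]; simp)) hadj2
      exact Nat.le_floor (hind T hprem)
    obtain ⟨W', hW'W, hW'card, hW'deg⟩ := extract_min_deg G (k - 1) m W hindep
    have hW'ne : W'.Nonempty := by
      rw [← Finset.card_pos]
      omega
    obtain ⟨w₀, hw₀⟩ := hW'ne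
    have hWk : k ≤ W'.card := by
      have h1 := hW'deg w₀ hw₀
      have h2 : (W'.filter (fun y => G.Adj w₀ y)) ⊆ W'.erase w₀ := by
        intro y hy
        rw [Finset.mem_filter] at hy
        exact Finset.mem_erase.2 ⟨hy.2.ne', hy.1⟩
      have h3 := Finset.card_le_card h2
      rw [Finset.card_erase_of_mem hw₀] at h3
      omega
    have hstruct : ∃ (e : Fin k ≃ Fin k) (P : Fin k → Fin k),
        (∀ j : Fin k, 0 < j.val → (P j).val < j.val) ∧
        (∀ i j : Fin k, i.val < j.val → F.Adj (e i) (e j) → i = P j ∨ i.val = 0) := by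
      rcases htc with hT | hC
      · exact tree_struct hk F hT
      · rw [hC]; exact cycle_struct hk
    obtain ⟨e, P, hP, hedge⟩ := hstruct
    obtain ⟨S, hSW', hScard, hSspan⟩ := emb hk F G e P hP hedge v W'
      (fun h => hvW (hW'W h)) (fun w hw => hadjW w (hW'W hw)) hWk hW'deg
    exact ⟨S, hSW'.trans hW'W, hScard, hSspan⟩


lemma fan_greedy {k n : ℕ} (hk : 3 ≤ k) (F : SimpleGraph (Fin k))
    (G : SimpleGraph (Fin n)) (v : Fin n) (U : Finset (Fin n)) (B : ℕ)
    (W₀ : Finset (Fin n)) (hW₀ : W₀ ⊆ U.erase v)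
    (H : ∀ W ⊆ W₀, B ≤ W.card → ∃ S ⊆ W, S.card = k - 1 ∧ SpansCopy F G (insert v S)) :
    ∃ 𝒮 : Finset (Finset (Fin n)), IsFan F G v U 𝒮 ∧
      W₀.card < 𝒮.card * (k - 1) + B := by
  classical
  have main : ∀ N : ℕ, ∀ W ⊆ W₀, W.card ≤ N →
      ∃ 𝒮 : Finset (Finset (Fin n)),
        (∀ S ∈ 𝒮, S ⊆ W ∧ S.card = k - 1 ∧ SpansCopy F G (insert v S)) ∧
        (∀ S ∈ 𝒮, ∀ S' ∈ 𝒮, S ≠ S' → Disjoint S S') ∧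
        W.card < 𝒮.card * (k - 1) + B := by
    intro N
    induction N with
    | zero =>
      intro W hWsub hWcard
      by_cases hWB : W.card < B
      · exact ⟨∅, by simp, by simp, by simpa using hWB⟩
      · push_neg at hWB
        obtain ⟨S, hSW, hScard, -⟩ := H W hWsub hWB
        have := Finset.card_le_card hSW
        omega
    | succ N ih =>
      intro W hWsub hWcard
      by_cases hWB : W.card < B
      · exact ⟨∅, by simp, by simp, by simpa using hWB⟩
      · push_neg at hWB
        obtain ⟨S, hSW, hScard, hSspan⟩ := H W hWsub hWB
        have hSWcard := Finset.card_le_card hSW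
        have hsdcard : (W \ S).card = W.card - (k - 1) := by
          rw [Finset.card_sdiff_of_subset hSW, hScard]
        obtain ⟨𝒮', h𝒮'1, h𝒮'2, h𝒮'3⟩ := ih (W \ S)
          ((Finset.sdiff_subset).trans hWsub) (by omega)
        have hSnot : S ∉ 𝒮' := by
          intro hmem
          have hsub := (h𝒮'1 S hmem).1
          have : S = ∅ := by
            rw [← Finset.subset_empty]
            intro x hx
            have := hsub hx
            rw [Finset.mem_sdiff] at this
            exact absurd hx this.2
          rw [this] at hScard
          simp at hScard
          omega
        refine ⟨insert S 𝒮', ?_, ?_, ?_⟩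
        · intro S' hS'
          rcases Finset.mem_insert.1 hS' with rfl | hS'
          · exact ⟨hSW, hScard, hSspan⟩
          · have := h𝒮'1 S' hS'
            exact ⟨(this.1).trans Finset.sdiff_subset, this.2⟩
        · have hdisj : ∀ S' ∈ 𝒮', Disjoint S S' := by
            intro S' hS'
            rw [Finset.disjoint_left]
            intro a ha hacon
            have := (h𝒮'1 S' hS').1 hacon
            rw [Finset.mem_sdiff] at this
            exact this.2 ha
          intro S1 h1 S2 h2 hne
          rcases Finset.mem_insert.1 h1 with h1' | h1' <;>
            rcases Finset.mem_insert.1 h2 with h2' | h2'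
          · exact absurd (h1'.trans h2'.symm) hne
          · exact h1' ▸ hdisj S2 h2'
          · exact h2' ▸ (hdisj S1 h1').symm
          · exact h𝒮'2 S1 h1' S2 h2' hne
        · rw [Finset.card_insert_of_notMem hSnot]
          have : (𝒮'.card + 1) * (k - 1) = 𝒮'.card * (k - 1) + (k - 1) := by ring
          omega
  obtain ⟨𝒮, h1, h2, h3⟩ := main W₀.card W₀ (Finset.Subset.refl _) le_rfl
  refine ⟨𝒮, ⟨?_, h2⟩, h3⟩
  intro S hS
  obtain ⟨hsub, hcard, hspan⟩ := h1 S hS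
  exact ⟨hsub.trans hW₀, hcard, hspan⟩


end Aux2

end RTT

open RTT in
/-- Existence of large `F`-fans. -/
theorem large_fans :
    ∀ k r : ℕ, 3 ≤ k → ∀ F : SimpleGraph (Fin k),
    ((F = ⊤ ∧ (r = k - 1 ∨ r = k)) ∨
     ((F.IsTree ∨ F = SimpleGraph.cycleGraph k) ∧ r = 2)) →
    ∀ ρ : ℝ, 0 < ρ →
    ∃ α : ℝ, 0 < α ∧ ∀ n : ℕ, ∀ G : SimpleGraph (Fin n),
      IndepBound G r (α * n) →
      ∀ (v : Fin n) (U : Finset (Fin n)),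
        ρ * n ≤ ((((U : Set (Fin n)) ∩ G.neighborSet v).ncard : ℕ) : ℝ) →
        ∃ 𝒮 : Finset (Finset (Fin n)),
          IsFan F G v U 𝒮 ∧ (ρ / (k : ℝ)) * n ≤ (𝒮.card : ℝ) := by
  classical
  intro k r hk F hF ρ hρ
  have hkR : (3 : ℝ) ≤ (k : ℝ) := by exact_mod_cast hk
  have hkpos : (0 : ℝ) < (k : ℝ) := by linarith
  refine ⟨ρ / (k : ℝ) ^ 3, div_pos hρ (by positivity), ?_⟩
  set α : ℝ := ρ / (k : ℝ) ^ 3 with hα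
  intro n G hind v U hU
  rcases Nat.eq_zero_or_pos n with hn | hn
  · subst hn
    exact v.elim0
  -- r ≥ 2
  have hr2 : 2 ≤ r := by
    rcases hF with ⟨-, hr | hr⟩ | ⟨-, hr⟩ <;> omega
  -- singleton gives 1 ≤ α n
  have h1 : (1 : ℝ) ≤ α * n := by
    have := hind {⟨0, hn⟩} ?_
    · simpa using this
    · intro T hT hclq
      have h2 := hclq.card_eq
      have h3 : T.card ≤ 1 := le_trans (Finset.card_le_card hT) (by simp)
      omega
  set W₀ : Finset (Fin n) := (U.erase v).filter (fun w => G.Adj v w) with hW₀def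
  have hW₀sub : W₀ ⊆ U.erase v := Finset.filter_subset _ _
  have hW₀adj : ∀ w ∈ W₀, G.Adj v w := fun w hw => (Finset.mem_filter.1 hw).2
  have hseteq : ((U : Set (Fin n)) ∩ G.neighborSet v) = (↑W₀ : Set (Fin n)) := by
    ext w
    simp only [Set.mem_inter_iff, SimpleGraph.mem_neighborSet, Finset.mem_coe, hW₀def,
      Finset.mem_filter, Finset.mem_erase]
    constructor
    · rintro ⟨h1', h2'⟩
      exact ⟨⟨h2'.ne', h1'⟩, h2'⟩
    · rintro ⟨⟨-, h1'⟩, h2'⟩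
      exact ⟨h1', h2'⟩
  have hcard : ρ * n ≤ (W₀.card : ℝ) := by
    rw [hseteq, Set.ncard_coe_finset] at hU
    exact_mod_cast hU
  set B : ℕ := Nat.floor (α * n) * (k - 1) + 1 with hBdef
  have HH : ∀ W ⊆ W₀, B ≤ W.card →
      ∃ S ⊆ W, S.card = k - 1 ∧ SpansCopy F G (insert v S) := by
    intro W hWsub hWB
    exact spanH hk F hF G α hind v W (fun w hw => hW₀adj w (hWsub hw)) hWB
  obtain ⟨𝒮, hfan, hcount⟩ := fan_greedy hk F G v U B W₀ hW₀sub HH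
  refine ⟨𝒮, hfan, ?_⟩
  -- arithmetic
  have hfloor : ((Nat.floor (α * n) : ℕ) : ℝ) ≤ α * n := Nat.floor_le (by linarith)
  have hk1cast : ((k - 1 : ℕ) : ℝ) = (k : ℝ) - 1 := by
    have : (1 : ℕ) ≤ k := by omega
    push_cast [this]
    ring
  have hBreal : (B : ℝ) ≤ α * n * (k : ℝ) := by
    have h2 : (B : ℝ) = ((Nat.floor (α * n) : ℕ) : ℝ) * ((k : ℝ) - 1) + 1 := by
      rw [hBdef]
      push_cast [hk1cast]
      ring
    rw [h2]
    have h3 : ((Nat.floor (α * n) : ℕ) : ℝ) * ((k : ℝ) - 1) ≤ (α * n) * ((k : ℝ) - 1) := by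
      apply mul_le_mul_of_nonneg_right hfloor
      linarith
    nlinarith
  have hBρ : (B : ℝ) ≤ ρ * n / (k : ℝ) := by
    have : α * n * (k : ℝ) = ρ * n / (k : ℝ) ^ 2 := by
      rw [hα]
      field_simp
    rw [this] at hBreal
    have hnn : 0 ≤ ρ * n := by positivity
    have : ρ * n / (k : ℝ) ^ 2 ≤ ρ * n / (k : ℝ) := by
      apply div_le_div_of_nonneg_left hnn hkpos
      nlinarith
    linarith
  have hcount' : (W₀.card : ℝ) < (𝒮.card : ℝ) * ((k : ℝ) - 1) + B := by
    have := hcount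
    have h4 : (W₀.card : ℝ) < ((𝒮.card * (k - 1) + B : ℕ) : ℝ) := by exact_mod_cast this
    rw [Nat.cast_add, Nat.cast_mul, hk1cast] at h4
    exact h4
  have hSpos : (0 : ℝ) ≤ (𝒮.card : ℝ) := Nat.cast_nonneg _
  have hfinal : ρ * n / (k : ℝ) ≤ (𝒮.card : ℝ) := by
    have hchain : ρ * n < (𝒮.card : ℝ) * ((k : ℝ) - 1) + ρ * n / (k : ℝ) := by
      calc ρ * n ≤ (W₀.card : ℝ) := hcard
        _ < (𝒮.card : ℝ) * ((k : ℝ) - 1) + B := hcount'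
        _ ≤ (𝒮.card : ℝ) * ((k : ℝ) - 1) + ρ * n / (k : ℝ) := by linarith
    have hk1pos : (0 : ℝ) < (k : ℝ) - 1 := by linarith
    have heq : ρ * n - ρ * n / (k : ℝ) = ρ * n / (k : ℝ) * ((k : ℝ) - 1) := by
      field_simp
    have h6 : ρ * n / (k : ℝ) * ((k : ℝ) - 1) < (𝒮.card : ℝ) * ((k : ℝ) - 1) := by
      linarith
    exact le_of_lt (lt_of_mul_lt_mul_right h6 hk1pos.le)
  calc ρ / (k : ℝ) * n = ρ * n / (k : ℝ) := by ring
    _ ≤ (𝒮.card : ℝ) := hfinal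
end

section
/- Given integers k, t ∈ ℕ with k ≥ 3 and a constant β > 0, the following holds for any k-vertex graph F and all sufficiently large n ∈ ℕ. Let G be an n-vertex graph with a partition 𝒫 = {V_1, …, V_C} of V(G) for some integer C such that each V_i is (F, βn, t)-closed and |V_i| ≥ βn. If S is a k-element subset of V(G) such that the index vector i_𝒫(S) is (F,β)-robust, then S has at least (β/(k³t))n pairwise vertex-disjoint (F,t)-absorbers. -/
open Finset

section Helpers

open RTT Finset

variable {k n : ℕ} {F : SimpleGraph (Fin k)} {G : SimpleGraph (Fin n)}

lemma spansCopy_card {S : Finset (Fin n)} (h : SpansCopy F G S) : S.card = k := by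
  obtain ⟨f, hf, -, him⟩ := h
  rw [← him, Finset.card_image_of_injective _ hf, Finset.card_univ, Fintype.card_fin]

lemma perfTilingOn_empty : PerfTilingOn F G ∅ :=
  ⟨∅, ⟨by simp, by simp⟩, by simp⟩

lemma perfTilingOn_single {S : Finset (Fin n)} (h : SpansCopy F G S) : PerfTilingOn F G S :=
  ⟨{S}, ⟨by simpa using h, by simp⟩, by simp⟩

lemma perfTilingOn_union {A B : Finset (Fin n)} (hAB : Disjoint A B)
    (hA : PerfTilingOn F G A) (hB : PerfTilingOn F G B) : PerfTilingOn F G (A ∪ B) := by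
  obtain ⟨T₁, ⟨hc₁, hd₁⟩, hb₁⟩ := hA
  obtain ⟨T₂, ⟨hc₂, hd₂⟩, hb₂⟩ := hB
  refine ⟨T₁ ∪ T₂, ⟨?_, ?_⟩, ?_⟩
  · intro S hS
    rcases Finset.mem_union.1 hS with h | h
    exacts [hc₁ S h, hc₂ S h]
  · intro S hS S' hS' hne
    have key : ∀ X ∈ T₁, ∀ Y ∈ T₂, Disjoint X Y := by
      intro X hX Y hY
      exact hAB.mono (hb₁ ▸ Finset.subset_biUnion_of_mem id hX)
        (hb₂ ▸ Finset.subset_biUnion_of_mem id hY)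
    rcases Finset.mem_union.1 hS with h | h <;> rcases Finset.mem_union.1 hS' with h' | h'
    · exact hd₁ S h S' h' hne
    · exact key S h S' h'
    · exact (key S' h' S h).symm
    · exact hd₂ S h S' h' hne
  · subst hb₁ hb₂
    ext x
    simp only [Finset.mem_biUnion, Finset.mem_union, id]
    constructor
    · rintro ⟨a, (h | h), hx⟩
      exacts [Or.inl ⟨a, h, hx⟩, Or.inr ⟨a, h, hx⟩]
    · rintro (⟨a, h, hx⟩ | ⟨a, h, hx⟩)
      exacts [⟨a, Or.inl h, hx⟩, ⟨a, Or.inr h, hx⟩]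

/-- Connector lemma: given two disjoint sets with the same index vector, both inside a
blocked set `W`, find a connector set `B` avoiding `W` such that both `S ∪ B` and
`S' ∪ B` have perfect tilings. -/
lemma connect_many {C : ℕ} {P : Fin C → Finset (Fin n)} {β : ℝ} {t : ℕ}
    (hP : IsPartition P) (hcl : ∀ i, FClosed F G (β * n) t (P i)) :
    ∀ m : ℕ, ∀ S S' W : Finset (Fin n), S.card = m → S'.card = m → S ⊆ W → S' ⊆ W →
      Disjoint S S' → (∀ i, (S ∩ P i).card = (S' ∩ P i).card) →
      ((W.card : ℝ) + ((m * (k * t) : ℕ) : ℝ) ≤ β * n) →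
      ∃ B : Finset (Fin n), Disjoint B W ∧ B.card ≤ m * (k * t - 1) ∧
        PerfTilingOn F G (S ∪ B) ∧ PerfTilingOn F G (S' ∪ B) := by
  intro m
  induction m with
  | zero =>
    intro S S' W hS hS' _ _ _ _ _
    rw [Finset.card_eq_zero] at hS hS'
    subst hS hS'
    exact ⟨∅, by simp, by simp, by simpa using (perfTilingOn_empty (F := F) (G := G)),
      by simpa using (perfTilingOn_empty (F := F) (G := G))⟩
  | succ m ih =>
    intro S S' W hS hS' hSW hS'W hdisj hvec hcard
    -- pick s ∈ S, find its part
    have hSne : S.Nonempty := Finset.card_pos.1 (by omega)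
    obtain ⟨s, hs⟩ := hSne
    have hsu : s ∈ Finset.univ.biUnion P := by rw [hP.2]; exact Finset.mem_univ s
    obtain ⟨i, -, hsi⟩ := Finset.mem_biUnion.1 hsu
    -- find s' ∈ S' ∩ P i
    have hcnt : (S ∩ P i).card = (S' ∩ P i).card := hvec i
    have h1 : 0 < (S' ∩ P i).card := by
      rw [← hcnt]
      exact Finset.card_pos.2 ⟨s, Finset.mem_inter.2 ⟨hs, hsi⟩⟩
    obtain ⟨s', hs'⟩ := Finset.card_pos.1 h1
    have hs'S' : s' ∈ S' := (Finset.mem_inter.1 hs').1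
    have hs'i : s' ∈ P i := (Finset.mem_inter.1 hs').2
    have hne : s ≠ s' := fun h => (Finset.disjoint_left.1 hdisj hs) (h ▸ hs'S')
    -- reachability
    have hWle : (W.card : ℝ) ≤ β * n := by
      have : (0 : ℝ) ≤ (((m + 1) * (k * t) : ℕ) : ℝ) := Nat.cast_nonneg _
      linarith
    obtain ⟨S₀, hS₀W, hsS₀, hs'S₀, hS₀card, htu, htv⟩ := hcl i s hsi s' hs'i hne W hWle
    -- apply IH to S.erase s, S'.erase s', W ∪ S₀
    have hvec' : ∀ j, ((S.erase s) ∩ P j).card = ((S'.erase s') ∩ P j).card := by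
      intro j
      rw [Finset.erase_inter, Finset.erase_inter]
      by_cases hji : j = i
      · subst hji
        rw [Finset.card_erase_of_mem (Finset.mem_inter.2 ⟨hs, hsi⟩),
          Finset.card_erase_of_mem hs', hcnt]
      · have h2 : s ∉ P j := fun h => Finset.disjoint_left.1 (hP.1 j i (Ne.symm (fun e => hji e.symm))) h hsi
        have h3 : s' ∉ P j := fun h => Finset.disjoint_left.1 (hP.1 j i (Ne.symm (fun e => hji e.symm))) h hs'i
        rw [Finset.erase_eq_of_notMem (fun h => h2 (Finset.mem_inter.1 h).2),
          Finset.erase_eq_of_notMem (fun h => h3 (Finset.mem_inter.1 h).2)]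
        exact hvec j
    have hcard' : (((W ∪ S₀).card : ℕ) : ℝ) + ((m * (k * t) : ℕ) : ℝ) ≤ β * n := by
      have h4 : (W ∪ S₀).card ≤ W.card + S₀.card := Finset.card_union_le _ _
      have h5 : (W ∪ S₀).card + m * (k * t) ≤ W.card + (m + 1) * (k * t) := by
        have : S₀.card ≤ k * t - 1 := hS₀card
        have h6 : k * t - 1 ≤ k * t := Nat.sub_le _ _
        calc (W ∪ S₀).card + m * (k * t) ≤ W.card + S₀.card + m * (k * t) := by omega
          _ ≤ W.card + (k * t) + m * (k * t) := by omega
          _ = W.card + (m + 1) * (k * t) := by ring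
      calc (((W ∪ S₀).card : ℕ) : ℝ) + ((m * (k * t) : ℕ) : ℝ)
          = (((W ∪ S₀).card + m * (k * t) : ℕ) : ℝ) := by push_cast; ring
        _ ≤ ((W.card + (m + 1) * (k * t) : ℕ) : ℝ) := by exact_mod_cast h5
        _ = (W.card : ℝ) + (((m + 1) * (k * t) : ℕ) : ℝ) := by push_cast; ring
        _ ≤ β * n := hcard
    obtain ⟨B', hB'W, hB'card, htS, htS'⟩ := ih (S.erase s) (S'.erase s') (W ∪ S₀)
      (by rw [Finset.card_erase_of_mem hs, hS]; omega)
      (by rw [Finset.card_erase_of_mem hs'S', hS']; omega)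
      ((Finset.erase_subset _ _).trans (hSW.trans Finset.subset_union_left))
      ((Finset.erase_subset _ _).trans (hS'W.trans Finset.subset_union_left))
      (hdisj.mono (Finset.erase_subset _ _) (Finset.erase_subset _ _))
      hvec' hcard'
    have hB'W0 : Disjoint B' W := hB'W.mono_right Finset.subset_union_left
    have hB'S₀ : Disjoint B' S₀ := hB'W.mono_right Finset.subset_union_right
    refine ⟨S₀ ∪ B', Finset.disjoint_union_left.2 ⟨hS₀W, hB'W0⟩, ?_, ?_, ?_⟩
    · have := Finset.card_union_le S₀ B'
      calc (S₀ ∪ B').card ≤ S₀.card + B'.card := Finset.card_union_le _ _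
        _ ≤ (k * t - 1) + m * (k * t - 1) := by omega
        _ = (m + 1) * (k * t - 1) := by ring
    · -- tiling of S ∪ (S₀ ∪ B')
      have hsetS : S ∪ (S₀ ∪ B') = (insert s S₀) ∪ (S.erase s ∪ B') := by
        ext x
        simp only [Finset.mem_union, Finset.mem_insert, Finset.mem_erase]
        constructor
        · rintro (h | h | h)
          · by_cases hx : x = s
            · exact Or.inl (Or.inl hx)
            · exact Or.inr (Or.inl ⟨hx, h⟩)
          · exact Or.inl (Or.inr h)
          · exact Or.inr (Or.inr h)
        · rintro ((h | h) | (h | h))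
          · exact Or.inl (h ▸ hs)
          · exact Or.inr (Or.inl h)
          · exact Or.inl h.2
          · exact Or.inr (Or.inr h)
      rw [hsetS]
      refine perfTilingOn_union ?_ htu htS
      rw [Finset.disjoint_insert_left, Finset.disjoint_union_right]
      refine ⟨?_, ?_, ?_⟩
      · simp only [Finset.mem_union, Finset.mem_erase, not_or]
        exact ⟨fun h => h.1 rfl, fun h => Finset.disjoint_left.1 hB'W0 h (hSW hs)⟩
      · exact (Finset.disjoint_left.2 fun a ha hae =>
          Finset.disjoint_left.1 hS₀W ha (hSW (Finset.mem_of_mem_erase hae)))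
      · exact hB'S₀.symm
    · -- tiling of S' ∪ (S₀ ∪ B')
      have hsetS' : S' ∪ (S₀ ∪ B') = (insert s' S₀) ∪ (S'.erase s' ∪ B') := by
        ext x
        simp only [Finset.mem_union, Finset.mem_insert, Finset.mem_erase]
        constructor
        · rintro (h | h | h)
          · by_cases hx : x = s'
            · exact Or.inl (Or.inl hx)
            · exact Or.inr (Or.inl ⟨hx, h⟩)
          · exact Or.inl (Or.inr h)
          · exact Or.inr (Or.inr h)
        · rintro ((h | h) | (h | h))
          · exact Or.inl (h ▸ hs'S')
          · exact Or.inr (Or.inl h)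
          · exact Or.inl h.2
          · exact Or.inr (Or.inr h)
      rw [hsetS']
      refine perfTilingOn_union ?_ htv htS'
      rw [Finset.disjoint_insert_left, Finset.disjoint_union_right]
      refine ⟨?_, ?_, ?_⟩
      · simp only [Finset.mem_union, Finset.mem_erase, not_or]
        exact ⟨fun h => h.1 rfl, fun h => Finset.disjoint_left.1 hB'W0 h (hS'W hs'S')⟩
      · exact (Finset.disjoint_left.2 fun a ha hae =>
          Finset.disjoint_left.1 hS₀W ha (hS'W (Finset.mem_of_mem_erase hae)))
      · exact hB'S₀.symm

/-- Single absorber avoiding a blocked set `W`. -/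
lemma absorber_avoiding {C : ℕ} {P : Fin C → Finset (Fin n)} {β : ℝ} {t : ℕ}
    (hk : 3 ≤ k) (ht : 1 ≤ t)
    (hP : IsPartition P) (hcl : ∀ i, FClosed F G (β * n) t (P i))
    {S : Finset (Fin n)} (hS : S.card = k)
    (hrob : RobustVec F G P β (fun i => (S ∩ P i).card))
    (W : Finset (Fin n))
    (hW : (W.card : ℝ) + ((2 * k + k * (k * t) : ℕ) : ℝ) ≤ β * n) :
    ∃ A : Finset (Fin n), IsAbsorber F G t S A ∧ Disjoint A W ∧ A.Nonempty := by
  have hkt : 1 ≤ k * t := Nat.one_le_iff_ne_zero.2 (by positivity)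
  -- robust copy avoiding W ∪ S
  have hWS : ((W ∪ S).card : ℝ) ≤ β * n := by
    have h1 : (W ∪ S).card ≤ W.card + k := by
      have := Finset.card_union_le W S; omega
    have h2 : (k : ℕ) ≤ 2 * k + k * (k * t) := by omega
    have h2' : (k : ℝ) ≤ ((2 * k + k * (k * t) : ℕ) : ℝ) := by exact_mod_cast h2
    calc ((W ∪ S).card : ℝ) ≤ ((W.card + k : ℕ) : ℝ) := by exact_mod_cast h1
      _ = (W.card : ℝ) + (k : ℝ) := by push_cast; ring
      _ ≤ β * n := by linarith
  obtain ⟨S'', hS''disj, hS''copy, hS''vec⟩ := hrob.2 (W ∪ S) hWS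
  have hS''card : S''.card = k := spansCopy_card hS''copy
  have hS''S : Disjoint S'' S := hS''disj.mono_right Finset.subset_union_right
  have hS''W : Disjoint S'' W := hS''disj.mono_right Finset.subset_union_left
  -- connect the two copies
  have hcard2 : (((W ∪ S ∪ S'').card : ℕ) : ℝ) + ((k * (k * t) : ℕ) : ℝ) ≤ β * n := by
    have h1 : (W ∪ S ∪ S'').card ≤ W.card + k + k := by
      have h2 := Finset.card_union_le (W ∪ S) S''
      have h3 := Finset.card_union_le W S
      omega
    have h4 : (W ∪ S ∪ S'').card + k * (k * t) ≤ W.card + (2 * k + k * (k * t)) := by omega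
    calc (((W ∪ S ∪ S'').card : ℕ) : ℝ) + ((k * (k * t) : ℕ) : ℝ)
        = (((W ∪ S ∪ S'').card + k * (k * t) : ℕ) : ℝ) := by push_cast; ring
      _ ≤ ((W.card + (2 * k + k * (k * t)) : ℕ) : ℝ) := by exact_mod_cast h4
      _ = (W.card : ℝ) + ((2 * k + k * (k * t) : ℕ) : ℝ) := by push_cast; ring
      _ ≤ β * n := hW
  obtain ⟨B, hBW, hBcard, htSB, htS''B⟩ := connect_many hP hcl k S S'' (W ∪ S ∪ S'')
    hS hS''card
    (Finset.subset_union_right.trans Finset.subset_union_left)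
    Finset.subset_union_right
    hS''S.symm (fun i => (hS''vec i).symm)
    hcard2
  have hBS : Disjoint B S :=
    hBW.mono_right (Finset.subset_union_right.trans Finset.subset_union_left)
  have hBS'' : Disjoint B S'' := hBW.mono_right Finset.subset_union_right
  have hBW0 : Disjoint B W :=
    hBW.mono_right (Finset.subset_union_left.trans Finset.subset_union_left)
  refine ⟨S'' ∪ B, ⟨?_, ?_, ?_, ?_⟩, ?_, ?_⟩
  · exact Finset.disjoint_union_left.2 ⟨hS''S, hBS⟩
  · -- cardinality bound
    have h5 : k + k * (k * t - 1) = k ^ 2 * t := by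
      calc k + k * (k * t - 1) = k * ((k * t - 1) + 1) := by ring
        _ = k * (k * t) := by rw [Nat.sub_add_cancel hkt]
        _ = k ^ 2 * t := by ring
    calc (S'' ∪ B).card ≤ S''.card + B.card := Finset.card_union_le _ _
      _ ≤ k + k * (k * t - 1) := by omega
      _ = k ^ 2 * t := h5
  · exact htS''B
  · -- tiling of (S'' ∪ B) ∪ S
    have hset : (S'' ∪ B) ∪ S = S'' ∪ (S ∪ B) := by
      ext x
      simp only [Finset.mem_union]
      tauto
    rw [hset]
    refine perfTilingOn_union ?_ (perfTilingOn_single hS''copy) htSB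
    exact Finset.disjoint_union_right.2 ⟨hS''S, hBS''.symm⟩
  · exact Finset.disjoint_union_left.2 ⟨hS''W, hBW0⟩
  · have : S''.Nonempty := Finset.card_pos.1 (by omega)
    exact this.mono Finset.subset_union_left

/-- Greedy construction of many pairwise disjoint absorbers. -/
lemma greedy_absorbers {C : ℕ} {P : Fin C → Finset (Fin n)} {β : ℝ} {t : ℕ}
    (hk : 3 ≤ k) (ht : 1 ≤ t)
    (hP : IsPartition P) (hcl : ∀ i, FClosed F G (β * n) t (P i))
    {S : Finset (Fin n)} (hS : S.card = k)
    (hrob : RobustVec F G P β (fun i => (S ∩ P i).card)) :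
    ∀ c : ℕ, (((c * (k ^ 2 * t) + (2 * k + k * (k * t)) : ℕ) : ℝ) ≤ β * n) →
      ∃ 𝒜 : Finset (Finset (Fin n)), 𝒜.card = c ∧
        (∀ A ∈ 𝒜, IsAbsorber F G t S A) ∧
        ∀ A ∈ 𝒜, ∀ A' ∈ 𝒜, A ≠ A' → Disjoint A A' := by
  intro c
  induction c with
  | zero => exact fun _ => ⟨∅, by simp, by simp, by simp⟩
  | succ c ih =>
    intro hc
    have hmono : (c * (k ^ 2 * t) + (2 * k + k * (k * t)) : ℕ)
        ≤ ((c + 1) * (k ^ 2 * t) + (2 * k + k * (k * t)) : ℕ) := by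
      have : c * (k ^ 2 * t) ≤ (c + 1) * (k ^ 2 * t) :=
        Nat.mul_le_mul_right _ (by omega)
      omega
    have hc' : ((c * (k ^ 2 * t) + (2 * k + k * (k * t)) : ℕ) : ℝ) ≤ β * n :=
      le_trans (by exact_mod_cast hmono) hc
    obtain ⟨𝒜, hcard, habs, hdisj⟩ := ih hc'
    have hWcard : (𝒜.biUnion id).card ≤ c * (k ^ 2 * t) := by
      calc (𝒜.biUnion id).card ≤ ∑ A ∈ 𝒜, (id A).card := Finset.card_biUnion_le
        _ ≤ 𝒜.card • (k ^ 2 * t) :=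
            Finset.sum_le_card_nsmul 𝒜 _ _ (fun A hA => (habs A hA).2.1)
        _ = c * (k ^ 2 * t) := by rw [smul_eq_mul, hcard]
    have hWle : (((𝒜.biUnion id).card : ℕ) : ℝ) + ((2 * k + k * (k * t) : ℕ) : ℝ) ≤ β * n := by
      have h6 : ((𝒜.biUnion id).card + (2 * k + k * (k * t)) : ℕ)
          ≤ (c * (k ^ 2 * t) + (2 * k + k * (k * t)) : ℕ) := by omega
      calc (((𝒜.biUnion id).card : ℕ) : ℝ) + ((2 * k + k * (k * t) : ℕ) : ℝ)
          = (((𝒜.biUnion id).card + (2 * k + k * (k * t)) : ℕ) : ℝ) := by push_cast; ring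
        _ ≤ ((c * (k ^ 2 * t) + (2 * k + k * (k * t)) : ℕ) : ℝ) := by exact_mod_cast h6
        _ ≤ β * n := hc'
    obtain ⟨A, hAabs, hAW, hAne⟩ := absorber_avoiding hk ht hP hcl hS hrob _ hWle
    have hAnotmem : A ∉ 𝒜 := by
      intro h
      have hsub : A ⊆ 𝒜.biUnion id := Finset.subset_biUnion_of_mem id h
      have : Disjoint A A := hAW.mono_right hsub
      exact hAne.ne_empty (by simpa using disjoint_self.mp this)
    refine ⟨insert A 𝒜, by rw [Finset.card_insert_of_notMem hAnotmem, hcard], ?_, ?_⟩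
    · intro X hX
      rcases Finset.mem_insert.1 hX with h | h
      · exact h ▸ hAabs
      · exact habs X h
    · intro X hX Y hY hXY
      rcases Finset.mem_insert.1 hX with h | h <;> rcases Finset.mem_insert.1 hY with h' | h'
      · exact absurd (h.trans h'.symm) hXY
      · exact h ▸ hAW.mono_right (Finset.subset_biUnion_of_mem id h')
      · exact (h' ▸ hAW.mono_right (Finset.subset_biUnion_of_mem id h)).symm
      · exact hdisj X h Y h' hXY

end Helpers

open RTT in
/-- In a graph with a closed partition into large parts, every `k`-set
whose index vector is `(F,β)`-robust has at least `(β/(k³t))n` pairwise vertex-disjoint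
`(F,t)`-absorbers. -/
theorem many_absorbers_from_closed_partition :
    ∀ k t : ℕ, 3 ≤ k → ∀ β : ℝ, 0 < β →
    ∃ N : ℕ, ∀ n : ℕ, N ≤ n →
      ∀ F : SimpleGraph (Fin k), ∀ G : SimpleGraph (Fin n),
      ∀ C : ℕ, ∀ P : Fin C → Finset (Fin n), IsPartition P →
        (∀ i, FClosed F G (β * n) t (P i)) →
        (∀ i, β * n ≤ (((P i).card : ℕ) : ℝ)) →
        ∀ S : Finset (Fin n), S.card = k →
          RobustVec F G P β (fun i => (S ∩ P i).card) →
          HasManyAbsorbers F G t S ((β / ((k : ℝ) ^ 3 * (t : ℝ))) * n) := by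
  intro k t hk β hβ
  refine ⟨⌈((3 * (k ^ 2 * t + 2 * k + 2) : ℕ) : ℝ) / β⌉₊, ?_⟩
  intro n hn F G C P hPart hcl hbig S hS hrob
  have hβn : ((3 * (k ^ 2 * t + 2 * k + 2) : ℕ) : ℝ) ≤ β * n := by
    have h1 : ((3 * (k ^ 2 * t + 2 * k + 2) : ℕ) : ℝ) / β
        ≤ (⌈((3 * (k ^ 2 * t + 2 * k + 2) : ℕ) : ℝ) / β⌉₊ : ℝ) := Nat.le_ceil _
    have h2 : ((⌈((3 * (k ^ 2 * t + 2 * k + 2) : ℕ) : ℝ) / β⌉₊ : ℕ) : ℝ) ≤ (n : ℝ) := by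
      exact_mod_cast hn
    have h3 : ((3 * (k ^ 2 * t + 2 * k + 2) : ℕ) : ℝ) / β ≤ (n : ℝ) := le_trans h1 h2
    calc ((3 * (k ^ 2 * t + 2 * k + 2) : ℕ) : ℝ) = ((3 * (k ^ 2 * t + 2 * k + 2) : ℕ) : ℝ) / β * β := by
          field_simp
      _ ≤ (n : ℝ) * β := by
          apply mul_le_mul_of_nonneg_right h3 (le_of_lt hβ)
      _ = β * n := by ring
  -- degenerate case t = 0 is contradictory
  rcases Nat.eq_zero_or_pos t with ht0 | ht
  · exfalso
    subst ht0
    have h24 : (24 : ℕ) ≤ 3 * (k ^ 2 * 0 + 2 * k + 2) := by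
      have := Nat.zero_le (k ^ 2 * 0)
      omega
    have h24' : (24 : ℝ) ≤ β * n := le_trans (by exact_mod_cast h24) hβn
    have hn0 : 0 < n := by
      rcases Nat.eq_zero_or_pos n with h | h
      · rw [h] at h24'
        norm_num at h24'
      · exact h
    obtain ⟨x⟩ : Nonempty (Fin n) := ⟨⟨0, hn0⟩⟩
    have hx : x ∈ Finset.univ.biUnion P := by rw [hPart.2]; exact Finset.mem_univ x
    obtain ⟨i, -, -⟩ := Finset.mem_biUnion.1 hx
    have hPi2 : 2 ≤ (P i).card := by
      by_contra h
      push_neg at h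
      have hle : ((P i).card : ℝ) ≤ 1 := by
        exact_mod_cast Nat.lt_succ_iff.mp h
      have := hbig i
      linarith
    obtain ⟨u, hu, v, hv, huv⟩ := Finset.one_lt_card.1 (show 1 < (P i).card by omega)
    obtain ⟨S₀, -, -, -, hS₀card, htu, -⟩ := hcl i u hu v hv huv ∅
      (by simp only [Finset.card_empty, Nat.cast_zero]; positivity)
    have hS₀empty : S₀ = ∅ := by
      rw [← Finset.card_eq_zero]
      omega
    subst hS₀empty
    obtain ⟨T, ⟨hcopy, -⟩, hbi⟩ := htu
    have humem : u ∈ T.biUnion id := by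
      rw [hbi]; simp
    obtain ⟨X, hX, huX⟩ := Finset.mem_biUnion.1 humem
    have hXsub : X ⊆ insert u (∅ : Finset (Fin n)) := by
      rw [← hbi]; exact Finset.subset_biUnion_of_mem id hX
    have hXcard : X.card ≤ 1 := by
      calc X.card ≤ (insert u (∅ : Finset (Fin n))).card := Finset.card_le_card hXsub
        _ = 1 := by simp
    have := spansCopy_card (hcopy X hX)
    omega
  -- main case t ≥ 1
  set c := ⌈β / ((k : ℝ) ^ 3 * (t : ℝ)) * n⌉₊ with hc
  have hK0 : (0 : ℝ) < (k : ℝ) := by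
    have : (3 : ℝ) ≤ (k : ℝ) := by exact_mod_cast hk
    linarith
  have hK3 : (3 : ℝ) ≤ (k : ℝ) := by exact_mod_cast hk
  have hT0 : (0 : ℝ) < (t : ℝ) := by exact_mod_cast ht
  have hT1 : (1 : ℝ) ≤ (t : ℝ) := by exact_mod_cast ht
  have hx0 : (0 : ℝ) ≤ β / ((k : ℝ) ^ 3 * (t : ℝ)) * n := by positivity
  have hclt : (c : ℝ) < β / ((k : ℝ) ^ 3 * (t : ℝ)) * n + 1 := Nat.ceil_lt_add_one hx0
  have hbn0 : (0 : ℝ) ≤ β * n := by positivity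
  -- the key counting inequality
  have hkey : ((c * (k ^ 2 * t) + (2 * k + k * (k * t)) : ℕ) : ℝ) ≤ β * n := by
    have e1 : β / ((k : ℝ) ^ 3 * (t : ℝ)) * n * ((k : ℝ) ^ 2 * (t : ℝ)) = β * n / (k : ℝ) := by
      field_simp
    have hKT0 : (0 : ℝ) < (k : ℝ) ^ 2 * (t : ℝ) := by positivity
    have h2 : (c : ℝ) * ((k : ℝ) ^ 2 * (t : ℝ))
        ≤ (β / ((k : ℝ) ^ 3 * (t : ℝ)) * n + 1) * ((k : ℝ) ^ 2 * (t : ℝ)) :=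
      mul_le_mul_of_nonneg_right (le_of_lt hclt) (le_of_lt hKT0)
    have h2' : (c : ℝ) * ((k : ℝ) ^ 2 * (t : ℝ)) ≤ β * n / (k : ℝ) + (k : ℝ) ^ 2 * (t : ℝ) := by
      calc (c : ℝ) * ((k : ℝ) ^ 2 * (t : ℝ))
          ≤ (β / ((k : ℝ) ^ 3 * (t : ℝ)) * n + 1) * ((k : ℝ) ^ 2 * (t : ℝ)) := h2
        _ = β / ((k : ℝ) ^ 3 * (t : ℝ)) * n * ((k : ℝ) ^ 2 * (t : ℝ)) + (k : ℝ) ^ 2 * (t : ℝ) := by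
            ring
        _ = β * n / (k : ℝ) + (k : ℝ) ^ 2 * (t : ℝ) := by rw [e1]
    have h3 : β * n / (k : ℝ) ≤ β * n / 3 := by
      rw [div_le_div_iff₀ hK0 (by norm_num)]
      nlinarith
    have hβn' : 3 * ((k : ℝ) ^ 2 * (t : ℝ) + 2 * (k : ℝ) + 2) ≤ β * n := by
      have : ((3 * (k ^ 2 * t + 2 * k + 2) : ℕ) : ℝ)
          = 3 * ((k : ℝ) ^ 2 * (t : ℝ) + 2 * (k : ℝ) + 2) := by push_cast; ring
      linarith [hβn, this.symm.le, this.le]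
    push_cast
    have e2 : (k : ℝ) * ((k : ℝ) * (t : ℝ)) = (k : ℝ) ^ 2 * (t : ℝ) := by ring
    nlinarith [h2', h3, hβn', hK3]
  obtain ⟨𝒜, hcard, habs, hdisj⟩ := greedy_absorbers hk ht hPart hcl hS hrob c hkey
  refine ⟨𝒜, ?_, habs, hdisj⟩
  rw [hcard]
  exact Nat.le_ceil _
end
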